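/- arXiv:2211.11247 — 5 statements merged into one kernel-verified Lean document; each statement's English description precedes it below -/
import Mathlib

section
/- For any positive definite initial matrices P_{1,0}, …, P_{N,0}, there exist a natural number k̄ and a positive definite n×n matrix P such that the iterates of the iterative law satisfy P_{i,k} ≤ P (in the Loewner order) for all i ∈ {1, …, N} and all k ≥ k̄. -/
open Matrix Filter

set_option linter.unusedSectionVars false

variable {ι : Type*} [Fintype ι] [DecidableEq ι]

namespace HCRE

/-- quadratic form characterization of PosSemidef on ℝ -/
lemma posSemidef_iff (M : Matrix ι ι ℝ) :
    M.PosSemidef ↔ M.IsHermitian ∧ ∀ x : ι → ℝ, 0 ≤ x ⬝ᵥ (M *ᵥ x) := by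
  rw [Matrix.posSemidef_iff_dotProduct_mulVec]
  simp [star_trivial]

lemma posDef_iff (M : Matrix ι ι ℝ) :
    M.PosDef ↔ M.IsHermitian ∧ ∀ x : ι → ℝ, x ≠ 0 → 0 < x ⬝ᵥ (M *ᵥ x) := by
  rw [Matrix.posDef_iff_dotProduct_mulVec]
  simp [star_trivial]

lemma psd_smul {M : Matrix ι ι ℝ} (hM : M.PosSemidef) {a : ℝ} (ha : 0 ≤ a) :
    (a • M).PosSemidef := by
  rw [posSemidef_iff] at hM ⊢
  have herm : (a • M).IsHermitian := by
    unfold Matrix.IsHermitian at hM ⊢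
    rw [Matrix.conjTranspose_smul, star_trivial, hM.1]
  refine ⟨herm, fun x => ?_⟩
  rw [smul_mulVec, dotProduct_smul, smul_eq_mul]
  exact mul_nonneg ha (hM.2 x)

lemma psd_sum {α : Type*} (s : Finset α) (f : α → Matrix ι ι ℝ)
    (h : ∀ j ∈ s, (f j).PosSemidef) : (∑ j ∈ s, f j).PosSemidef := by
  classical
  induction s using Finset.induction_on with
  | empty => simpa using Matrix.PosSemidef.zero
  | insert _ _ hnotmem ih =>
    rw [Finset.sum_insert hnotmem]
    exact ((h _ (Finset.mem_insert_self _ _)).add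
      (ih fun j hj => h j (Finset.mem_insert_of_mem hj)))

lemma psd_congr {M : Matrix ι ι ℝ} (hM : M.PosSemidef) (T : Matrix ι ι ℝ) :
    (Tᵀ * M * T).PosSemidef := by
  have := hM.conjTranspose_mul_mul_same T
  rwa [conjTranspose_eq_transpose_of_trivial] at this

lemma pd_congr {M : Matrix ι ι ℝ} (hM : M.PosDef) {T : Matrix ι ι ℝ} (hT : IsUnit T.det) :
    (Tᵀ * M * T).PosDef := by
  rw [posDef_iff] at hM ⊢
  refine ⟨?_, fun x hx => ?_⟩
  · have h1 := hM.1
    unfold Matrix.IsHermitian at h1 ⊢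
    simp only [conjTranspose_eq_transpose_of_trivial] at h1 ⊢
    rw [transpose_mul, transpose_mul, transpose_transpose, Matrix.mul_assoc, h1]
  · have hTx : T *ᵥ x ≠ 0 := by
      intro h
      exact hx (by
        have hinj := Matrix.mulVec_injective_iff_isUnit.mpr ((Matrix.isUnit_iff_isUnit_det T).mpr hT)
        have h0 : T *ᵥ x = T *ᵥ 0 := by simpa using h
        exact hinj h0)
    have key : x ⬝ᵥ ((Tᵀ * M * T) *ᵥ x) = (T *ᵥ x) ⬝ᵥ (M *ᵥ (T *ᵥ x)) := by
      rw [Matrix.mul_assoc, ← Matrix.mulVec_mulVec, Matrix.dotProduct_mulVec,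
        Matrix.vecMul_transpose, Matrix.mulVec_mulVec]
    rw [key]
    exact hM.2 _ hTx

/-- Loewner transitivity helper -/
lemma le_trans3 {A B C : Matrix ι ι ℝ} (h1 : (B - A).PosSemidef) (h2 : (C - B).PosSemidef) :
    (C - A).PosSemidef := by
  have := h1.add h2
  rwa [show B - A + (C - B) = C - A by abel] at this

end HCRE

namespace HCRE

lemma pd_smul {M : Matrix ι ι ℝ} (hM : M.PosDef) {a : ℝ} (ha : 0 < a) :
    (a • M).PosDef := by
  rw [posDef_iff] at hM ⊢
  have herm : (a • M).IsHermitian := by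
    unfold Matrix.IsHermitian at hM ⊢
    rw [Matrix.conjTranspose_smul, star_trivial, hM.1]
  refine ⟨herm, fun x hx => ?_⟩
  rw [smul_mulVec, dotProduct_smul, smul_eq_mul]
  exact mul_pos ha (hM.2 x hx)

lemma psd_congr' {κ : Type*} [Fintype κ] {M : Matrix ι ι ℝ} (hM : M.PosSemidef)
    (T : Matrix ι κ ℝ) : (Tᵀ * M * T).PosSemidef := by
  have := hM.conjTranspose_mul_mul_same T
  rwa [conjTranspose_eq_transpose_of_trivial] at this

lemma dot_symm {M : Matrix ι ι ℝ} (hM : M.IsHermitian) (u v : ι → ℝ) :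
    u ⬝ᵥ (M *ᵥ v) = v ⬝ᵥ (M *ᵥ u) := by
  have hMt : Mᵀ = M := by
    have := hM.eq
    rwa [conjTranspose_eq_transpose_of_trivial] at this
  rw [Matrix.dotProduct_mulVec, ← Matrix.mulVec_transpose, hMt, dotProduct_comm]

lemma inv_antimono {M B : Matrix ι ι ℝ} (hM : M.PosDef) (hB : B.PosDef)
    (hMB : (B - M).PosSemidef) : (M⁻¹ - B⁻¹).PosSemidef := by
  have hMdet : IsUnit M.det := isUnit_iff_ne_zero.mpr hM.det_pos.ne'
  have hBdet : IsUnit B.det := isUnit_iff_ne_zero.mpr hB.det_pos.ne'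
  rw [posSemidef_iff]
  constructor
  · exact (hM.inv.isHermitian).sub (hB.inv.isHermitian)
  · intro x
    set u := M⁻¹ *ᵥ x with hu
    set v := B⁻¹ *ᵥ x with hv
    have hMu : M *ᵥ u = x := by
      rw [hu, Matrix.mulVec_mulVec, Matrix.mul_nonsing_inv _ hMdet, Matrix.one_mulVec]
    have hBv : B *ᵥ v = x := by
      rw [hv, Matrix.mulVec_mulVec, Matrix.mul_nonsing_inv _ hBdet, Matrix.one_mulVec]
    have h1 : 0 ≤ (u - v) ⬝ᵥ (M *ᵥ (u - v)) := by
      rw [posSemidef_iff] at *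
      exact (hM.posSemidef.dotProduct_mulVec_nonneg (u - v)) |>.trans_eq (by simp [star_trivial]) |>.trans_eq rfl
    have hexp : (u - v) ⬝ᵥ (M *ᵥ (u - v)) =
        u ⬝ᵥ (M *ᵥ u) - u ⬝ᵥ (M *ᵥ v) - v ⬝ᵥ (M *ᵥ u) + v ⬝ᵥ (M *ᵥ v) := by
      rw [Matrix.mulVec_sub, dotProduct_sub, sub_dotProduct, sub_dotProduct]
      ring
    have hsym : u ⬝ᵥ (M *ᵥ v) = v ⬝ᵥ (M *ᵥ u) := dot_symm hM.isHermitian u v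
    have h2 : 0 ≤ v ⬝ᵥ ((B - M) *ᵥ v) := by
      have := hMB.dotProduct_mulVec_nonneg v
      simpa [star_trivial] using this
    have h2' : v ⬝ᵥ (M *ᵥ v) ≤ v ⬝ᵥ (B *ᵥ v) := by
      rw [Matrix.sub_mulVec, dotProduct_sub] at h2
      linarith
    have e1 : u ⬝ᵥ (M *ᵥ u) = x ⬝ᵥ u := by rw [hMu, dotProduct_comm]
    have e2 : v ⬝ᵥ (M *ᵥ u) = v ⬝ᵥ x := by rw [hMu]
    have e3 : v ⬝ᵥ (B *ᵥ v) = v ⬝ᵥ x := by rw [hBv]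
    have e4 : v ⬝ᵥ x = x ⬝ᵥ v := dotProduct_comm v x
    have goal_eq : x ⬝ᵥ ((M⁻¹ - B⁻¹) *ᵥ x) = x ⬝ᵥ u - x ⬝ᵥ v := by
      rw [Matrix.sub_mulVec, dotProduct_sub, ← hu, ← hv]
    rw [goal_eq]
    rw [hexp, hsym] at h1
    linarith

lemma dotProduct_self_nonneg' (x : ι → ℝ) : 0 ≤ x ⬝ᵥ x :=
  Finset.sum_nonneg fun i _ => mul_self_nonneg (x i)

lemma dominated (M : Matrix ι ι ℝ) (hM : M.IsHermitian) :
    ∃ a : ℝ, 0 ≤ a ∧ ((a • (1 : Matrix ι ι ℝ)) - M).PosSemidef := by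
  classical
  refine ⟨∑ i, ∑ j, |M i j|, Finset.sum_nonneg fun i _ =>
    Finset.sum_nonneg fun j _ => abs_nonneg _, ?_⟩
  set a : ℝ := ∑ i, ∑ j, |M i j| with ha
  rw [posSemidef_iff]
  constructor
  · unfold Matrix.IsHermitian at hM ⊢
    rw [Matrix.conjTranspose_sub, Matrix.conjTranspose_smul, star_trivial, hM,
      Matrix.conjTranspose_one]
  · intro x
    have hxx : 0 ≤ x ⬝ᵥ x := dotProduct_self_nonneg' x
    have hsq : ∀ i : ι, x i * x i ≤ x ⬝ᵥ x := fun i =>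
      Finset.single_le_sum (fun j _ => mul_self_nonneg (x j)) (Finset.mem_univ i)
    have hterm : ∀ i j, x i * (M i j * x j) ≤ |M i j| * (x ⬝ᵥ x) := by
      intro i j
      have habs : |x i * x j| ≤ x ⬝ᵥ x := by
        have h1 := hsq i
        have h2 := hsq j
        rw [abs_le]
        constructor <;> nlinarith [sq_nonneg (x i - x j), sq_nonneg (x i + x j)]
      calc x i * (M i j * x j) = M i j * (x i * x j) := by ring
        _ ≤ |M i j * (x i * x j)| := le_abs_self _
        _ = |M i j| * |x i * x j| := abs_mul _ _
        _ ≤ |M i j| * (x ⬝ᵥ x) := mul_le_mul_of_nonneg_left habs (abs_nonneg _)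
    have hMform : x ⬝ᵥ (M *ᵥ x) ≤ a * (x ⬝ᵥ x) := by
      have : x ⬝ᵥ (M *ᵥ x) = ∑ i, ∑ j, x i * (M i j * x j) := by
        unfold dotProduct Matrix.mulVec dotProduct
        simp [Finset.mul_sum]
      rw [this, ha, Finset.sum_mul]
      refine Finset.sum_le_sum fun i _ => ?_
      rw [Finset.sum_mul]
      exact Finset.sum_le_sum fun j _ => hterm i j
    have hexp : x ⬝ᵥ (((a • (1 : Matrix ι ι ℝ)) - M) *ᵥ x) = a * (x ⬝ᵥ x) - x ⬝ᵥ (M *ᵥ x) := by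
      rw [Matrix.sub_mulVec, dotProduct_sub, smul_mulVec, Matrix.one_mulVec,
        dotProduct_smul, smul_eq_mul]
    rw [hexp]
    linarith

lemma smul_one_inv {a : ℝ} (ha : a ≠ 0) :
    (a • (1 : Matrix ι ι ℝ))⁻¹ = a⁻¹ • (1 : Matrix ι ι ℝ) := by
  apply Matrix.inv_eq_right_inv
  rw [Matrix.smul_mul, Matrix.one_mul, smul_smul, mul_inv_cancel₀ ha, one_smul]

lemma smul_inv' {a : ℝ} (ha : a ≠ 0) {M : Matrix ι ι ℝ} (hM : IsUnit M.det) :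
    (a • M)⁻¹ = a⁻¹ • M⁻¹ := by
  apply Matrix.inv_eq_right_inv
  rw [Matrix.smul_mul, Matrix.mul_smul, Matrix.mul_nonsing_inv _ hM, smul_smul,
    mul_inv_cancel₀ ha, one_smul]

lemma posdef_lower [Nonempty ι] {M : Matrix ι ι ℝ} (hM : M.PosDef) :
    ∃ r : ℝ, 0 < r ∧ (M - r • (1 : Matrix ι ι ℝ)).PosSemidef := by
  have hMdet : IsUnit M.det := isUnit_iff_ne_zero.mpr hM.det_pos.ne'
  obtain ⟨a, ha0, hdom⟩ := dominated M⁻¹ hM.inv.isHermitian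
  have hapos : 0 < a := by
    rcases lt_or_eq_of_le ha0 with h | h
    · exact h
    · exfalso
      have hx : (fun _ : ι => (1:ℝ)) ≠ 0 := by
        intro hcontr
        have := congrFun hcontr (Classical.arbitrary ι)
        norm_num at this
      have hpos := hM.inv.dotProduct_mulVec_pos (x := fun _ => (1:ℝ)) (by simpa [star_trivial] using hx)
      have hnn := hdom.dotProduct_mulVec_nonneg (fun _ => (1:ℝ))
      rw [← h] at hnn
      simp only [zero_smul, zero_sub, Matrix.neg_mulVec, dotProduct_neg] at hnn
      simp only [star_trivial] at hpos hnn
      linarith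
  refine ⟨a⁻¹, inv_pos.mpr hapos, ?_⟩
  have hsmulpd : ((a • (1 : Matrix ι ι ℝ))).PosDef := pd_smul Matrix.PosDef.one hapos
  have := inv_antimono hM.inv hsmulpd hdom
  rwa [Matrix.nonsing_inv_nonsing_inv _ hMdet, smul_one_inv hapos.ne'] at this

lemma pow_mul_inv_pow {M : Matrix ι ι ℝ} (hM : IsUnit M.det) (a : ℕ) :
    M ^ a * (M⁻¹) ^ a = 1 := by
  induction a with
  | zero => simp
  | succ a ih =>
    rw [pow_succ, pow_succ']
    calc M ^ a * M * (M⁻¹ * M⁻¹ ^ a) = M ^ a * (M * M⁻¹) * M⁻¹ ^ a := by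
          simp only [Matrix.mul_assoc]
      _ = M ^ a * M⁻¹ ^ a := by rw [Matrix.mul_nonsing_inv _ hM, Matrix.mul_one]
      _ = 1 := ih

lemma pow_mul_inv_pow_add {M : Matrix ι ι ℝ} (hM : IsUnit M.det) (a d : ℕ) :
    M ^ a * (M⁻¹) ^ (a + d) = (M⁻¹) ^ d := by
  rw [pow_add, ← Matrix.mul_assoc, pow_mul_inv_pow hM, Matrix.one_mul]

end HCRE


/-- For any positive definite initial matrices, the iterates of the
HCRE iterative law are uniformly bounded above (Loewner order) from some time on. -/
theorem hcre_iterates_uniformly_bounded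
    (n N : ℕ) (hn : 0 < n) (hN : 0 < N)
    (m : Fin N → ℕ) (hm : ∀ i, 0 < m i)
    (A : Matrix (Fin n) (Fin n) ℝ) (hA : IsUnit A.det)
    (C : ∀ i : Fin N, Matrix (Fin (m i)) (Fin n) ℝ)
    (hObs : (∑ k ∈ Finset.range n, (A ^ k)ᵀ * (∑ i, (C i)ᵀ * C i) * A ^ k).PosDef)
    (Q : Matrix (Fin n) (Fin n) ℝ) (hQ : Q.PosDef)
    (R : ∀ i : Fin N, Matrix (Fin (m i)) (Fin (m i)) ℝ) (hR : ∀ i, (R i).PosDef)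
    (L : Matrix (Fin N) (Fin N) ℝ)
    (hLnonneg : ∀ i j, 0 ≤ L i j) (hLrow : ∀ i, ∑ j, L i j = 1)
    (hLprim : ∃ k : ℕ, 0 < k ∧ ∀ i j, 0 < (L ^ k) i j)
    (P0 : Fin N → Matrix (Fin n) (Fin n) ℝ) (hP0 : ∀ i, (P0 i).PosDef)
    (Pseq : ℕ → Fin N → Matrix (Fin n) (Fin n) ℝ)
    (hinit : Pseq 0 = P0)
    (hiter : ∀ k i, Pseq (k + 1) i =
      A * (∑ j, (L i j • (Pseq k j)⁻¹ + L i j • ((C j)ᵀ * (R j)⁻¹ * C j)))⁻¹ * Aᵀ + Q) :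
    ∃ (kbar : ℕ) (P : Matrix (Fin n) (Fin n) ℝ), P.PosDef ∧
      ∀ i : Fin N, ∀ k : ℕ, kbar ≤ k → (P - Pseq k i).PosSemidef := by
  classical
  obtain ⟨k₀, hk₀pos, hk₀⟩ := hLprim
  haveI : Nonempty (Fin n) := ⟨⟨0, hn⟩⟩
  haveI : Nonempty (Fin N) := ⟨⟨0, hN⟩⟩
  have hQdet : IsUnit Q.det := isUnit_iff_ne_zero.mpr hQ.det_pos.ne'
  set G : Fin N → Matrix (Fin n) (Fin n) ℝ := fun j => (C j)ᵀ * (R j)⁻¹ * C j with hGdef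
  have hGpsd : ∀ j, (G j).PosSemidef := by
    intro j
    have h1 : ((R j)⁻¹).PosSemidef := (hR j).inv.posSemidef
    have h2 := h1.mul_mul_conjTranspose_same (C j)ᵀ
    rw [conjTranspose_eq_transpose_of_trivial, transpose_transpose] at h2
    exact h2
  set W : ℕ → Fin N → Matrix (Fin n) (Fin n) ℝ :=
    fun k i => ∑ j, (L i j • (Pseq k j)⁻¹ + L i j • G j) with hWdef
  have hiterW : ∀ k i, Pseq (k + 1) i = A * (W k i)⁻¹ * Aᵀ + Q := fun k i => hiter k i
  have hLpos_row : ∀ i : Fin N, ∃ j, 0 < L i j := by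
    intro i
    by_contra hcon
    push_neg at hcon
    have h0 : ∑ j, L i j = 0 :=
      le_antisymm (Finset.sum_nonpos fun j _ => hcon j)
        (Finset.sum_nonneg fun j _ => hLnonneg i j)
    rw [hLrow i] at h0
    norm_num at h0
  have hWpd : ∀ k, (∀ j, (Pseq k j).PosDef) → ∀ i, (W k i).PosDef := by
    intro k hP i
    obtain ⟨j₀, hj₀⟩ := hLpos_row i
    simp only [hWdef]
    rw [← Finset.sum_erase_add _ _ (Finset.mem_univ j₀)]
    refine Matrix.PosDef.posSemidef_add ?_ ?_
    · exact HCRE.psd_sum _ _ fun j _ =>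
        (HCRE.psd_smul (hP j).inv.posSemidef (hLnonneg i j)).add
          (HCRE.psd_smul (hGpsd j) (hLnonneg i j))
    · exact (HCRE.pd_smul (hP j₀).inv hj₀).add_posSemidef
        (HCRE.psd_smul (hGpsd j₀) (hLnonneg i j₀))
  have hPpd : ∀ k j, (Pseq k j).PosDef := by
    intro k
    induction k with
    | zero => intro j; rw [hinit]; exact hP0 j
    | succ k ih =>
      intro j
      rw [hiterW k j]
      have hWkpd := hWpd k ih j
      have hconj : (A * (W k j)⁻¹ * Aᵀ).PosDef := by
        have h := HCRE.pd_congr hWkpd.inv (T := Aᵀ) (by rw [Matrix.det_transpose]; exact hA)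
        rwa [transpose_transpose] at h
      exact hconj.add hQ
  have hPdet : ∀ k j, IsUnit (Pseq k j).det :=
    fun k j => isUnit_iff_ne_zero.mpr (hPpd k j).det_pos.ne'
  have hWdet : ∀ k i, IsUnit (W k i).det :=
    fun k i => isUnit_iff_ne_zero.mpr (hWpd k (hPpd k) i).det_pos.ne'
  have hQleP : ∀ k i, ((Pseq (k+1) i) - Q).PosSemidef := by
    intro k i
    rw [hiterW k i, add_sub_cancel_right]
    have h := HCRE.psd_congr (hWpd k (hPpd k) i).inv.posSemidef (T := Aᵀ)
    rwa [transpose_transpose] at h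
  have hXleQinv : ∀ k i, ((Q⁻¹ - (Pseq (k+1) i)⁻¹)).PosSemidef :=
    fun k i => HCRE.inv_antimono hQ (hPpd (k+1) i) (hQleP k i)
  -- scalar bounds
  choose βf hβf0 hβf using fun j =>
    HCRE.dominated (Q⁻¹ + G j) ((hQ.inv.isHermitian).add (hGpsd j).isHermitian)
  set β : ℝ := 1 + ∑ j, βf j with hβdef
  have hβsum : 0 ≤ ∑ j, βf j := Finset.sum_nonneg fun j _ => hβf0 j
  have hβpos : 0 < β := by rw [hβdef]; linarith
  have hβdom : ∀ j, ((β • (1 : Matrix (Fin n) (Fin n) ℝ)) - (Q⁻¹ + G j)).PosSemidef := by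
    intro j
    have key : (β • (1 : Matrix (Fin n) (Fin n) ℝ)) - (Q⁻¹ + G j)
        = ((β - βf j) • (1 : Matrix (Fin n) (Fin n) ℝ))
          + ((βf j • (1 : Matrix (Fin n) (Fin n) ℝ)) - (Q⁻¹ + G j)) := by
      rw [sub_smul]; abel
    rw [key]
    refine (HCRE.psd_smul Matrix.PosSemidef.one ?_).add (hβf j)
    have hle : βf j ≤ ∑ j', βf j' :=
      Finset.single_le_sum (fun j' _ => hβf0 j') (Finset.mem_univ j)
    rw [hβdef]; linarith
  set Bm : Matrix (Fin n) (Fin n) ℝ := A⁻¹ * Q * (A⁻¹)ᵀ with hBmdef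
  have hAinvdet : IsUnit (A⁻¹).det := A.isUnit_nonsing_inv_det hA
  have hBmpd : Bm.PosDef := by
    have h := HCRE.pd_congr hQ (T := (A⁻¹)ᵀ)
      (by rw [Matrix.det_transpose]; exact hAinvdet)
    rwa [transpose_transpose] at h
  obtain ⟨b₀, hb₀0, hb₀⟩ := HCRE.dominated Bm hBmpd.isHermitian
  set b : ℝ := 1 + b₀ with hbdef
  have hbpos : 0 < b := by rw [hbdef]; linarith
  have hbdom : ((b • (1 : Matrix (Fin n) (Fin n) ℝ)) - Bm).PosSemidef := by
    have key : (b • (1 : Matrix (Fin n) (Fin n) ℝ)) - Bm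
        = (1 : Matrix (Fin n) (Fin n) ℝ) + ((b₀ • (1 : Matrix (Fin n) (Fin n) ℝ)) - Bm) := by
      rw [hbdef, add_smul, one_smul]; abel
    rw [key]
    exact Matrix.PosSemidef.one.add hb₀
  set c : ℝ := (1 + b * β)⁻¹ with hcdef
  have hbβ0 : 0 < 1 + b * β := by nlinarith
  have hcpos : 0 < c := inv_pos.mpr hbβ0
  have hcle1 : c ≤ 1 := by
    rw [hcdef]
    have h1 : (1:ℝ) ≤ 1 + b * β := by nlinarith
    exact inv_le_one_of_one_le₀ h1
  have hcinv : c⁻¹ = 1 + b * β := by rw [hcdef, inv_inv]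
  -- uniform upper bound on W (k+1)
  have hWle : ∀ k i, ((β • (1 : Matrix (Fin n) (Fin n) ℝ)) - W (k+1) i).PosSemidef := by
    intro k i
    have hsum1 : (β • (1 : Matrix (Fin n) (Fin n) ℝ))
        = ∑ j, L i j • (β • (1 : Matrix (Fin n) (Fin n) ℝ)) := by
      rw [← Finset.sum_smul, hLrow i, one_smul]
    simp only [hWdef]
    rw [hsum1, ← Finset.sum_sub_distrib]
    refine HCRE.psd_sum _ _ fun j _ => ?_
    have e : L i j • (β • (1 : Matrix (Fin n) (Fin n) ℝ))
        - (L i j • (Pseq (k+1) j)⁻¹ + L i j • G j)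
        = L i j • ((β • (1 : Matrix (Fin n) (Fin n) ℝ)) - ((Pseq (k+1) j)⁻¹ + G j)) := by
      rw [smul_sub, smul_add]
    rw [e]
    refine HCRE.psd_smul ?_ (hLnonneg i j)
    have e2 : (β • (1 : Matrix (Fin n) (Fin n) ℝ)) - ((Pseq (k+1) j)⁻¹ + G j)
        = ((β • (1 : Matrix (Fin n) (Fin n) ℝ)) - (Q⁻¹ + G j))
          + (Q⁻¹ - (Pseq (k+1) j)⁻¹) := by abel
    rw [e2]
    exact (hβdom j).add (hXleQinv k j)
  -- one-step lower bound on information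
  have hstep : ∀ k i, ((Pseq (k+2) i)⁻¹
      - c • ((A⁻¹)ᵀ * W (k+1) i * A⁻¹)).PosSemidef := by
    intro k i
    have hWkpd : (W (k+1) i).PosDef := hWpd (k+1) (hPpd (k+1)) i
    have hWkdet : IsUnit (W (k+1) i).det := hWdet (k+1) i
    have hWkinvdet : IsUnit ((W (k+1) i)⁻¹).det := (W (k+1) i).isUnit_nonsing_inv_det hWkdet
    have hWinvlb : ((W (k+1) i)⁻¹ - β⁻¹ • (1 : Matrix (Fin n) (Fin n) ℝ)).PosSemidef := by
      have h := HCRE.inv_antimono hWkpd (HCRE.pd_smul Matrix.PosDef.one hβpos) (hWle k i)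
      rwa [HCRE.smul_one_inv hβpos.ne'] at h
    have claim1 : ((c⁻¹ • (W (k+1) i)⁻¹) - ((W (k+1) i)⁻¹ + Bm)).PosSemidef := by
      have e : (c⁻¹ • (W (k+1) i)⁻¹) - ((W (k+1) i)⁻¹ + Bm)
          = (b * β) • ((W (k+1) i)⁻¹ - β⁻¹ • (1 : Matrix (Fin n) (Fin n) ℝ))
            + ((b • (1 : Matrix (Fin n) (Fin n) ℝ)) - Bm) := by
        rw [hcinv, add_smul, one_smul, smul_sub, smul_smul,
          show b * β * β⁻¹ = b by field_simp]
        abel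
      rw [e]
      exact (HCRE.psd_smul hWinvlb (by positivity)).add hbdom
    have hWBpd : ((W (k+1) i)⁻¹ + Bm).PosDef := hWkpd.inv.add hBmpd
    have hcWpd : (c⁻¹ • (W (k+1) i)⁻¹).PosDef := HCRE.pd_smul hWkpd.inv (by positivity)
    have claim2 : (((W (k+1) i)⁻¹ + Bm)⁻¹ - c • W (k+1) i).PosSemidef := by
      have h := HCRE.inv_antimono hWBpd hcWpd claim1
      rwa [HCRE.smul_inv' (inv_ne_zero hcpos.ne') hWkinvdet, inv_inv,
        Matrix.nonsing_inv_nonsing_inv _ hWkdet] at h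
    have hid : Pseq (k+2) i = A * ((W (k+1) i)⁻¹ + Bm) * Aᵀ := by
      rw [hiterW (k+1) i]
      rw [Matrix.mul_add, Matrix.add_mul]
      congr 1
      rw [hBmdef]
      symm
      calc A * (A⁻¹ * Q * (A⁻¹)ᵀ) * Aᵀ
          = (A * A⁻¹) * (Q * ((A⁻¹)ᵀ * Aᵀ)) := by simp only [Matrix.mul_assoc]
        _ = Q := by
            rw [Matrix.mul_nonsing_inv _ hA, ← Matrix.transpose_mul,
              Matrix.mul_nonsing_inv _ hA, Matrix.transpose_one, Matrix.one_mul,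
              Matrix.mul_one]
    have hinv2 : (Pseq (k+2) i)⁻¹ = (A⁻¹)ᵀ * ((W (k+1) i)⁻¹ + Bm)⁻¹ * A⁻¹ := by
      rw [hid, Matrix.mul_inv_rev, Matrix.mul_inv_rev, ← Matrix.transpose_nonsing_inv,
        Matrix.mul_assoc]
    rw [hinv2]
    have hcongr := HCRE.psd_congr claim2 A⁻¹
    have e : (A⁻¹)ᵀ * (((W (k+1) i)⁻¹ + Bm)⁻¹ - c • W (k+1) i) * A⁻¹
        = (A⁻¹)ᵀ * ((W (k+1) i)⁻¹ + Bm)⁻¹ * A⁻¹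
          - c • ((A⁻¹)ᵀ * W (k+1) i * A⁻¹) := by
      rw [Matrix.mul_sub, Matrix.sub_mul, Matrix.mul_smul, Matrix.smul_mul]
    rwa [e] at hcongr
  -- powers of L
  have hLpow_nonneg : ∀ t (i j : Fin N), 0 ≤ (L ^ t) i j := by
    intro t
    induction t with
    | zero =>
      intro i j
      rw [pow_zero]
      by_cases h : i = j <;> simp [Matrix.one_apply, h]
    | succ t ih =>
      intro i j
      rw [pow_succ', Matrix.mul_apply]
      exact Finset.sum_nonneg fun s _ => mul_nonneg (hLnonneg i s) (ih s j)
  have hLpow_pos : ∀ t, k₀ ≤ t → ∀ i j, 0 < (L ^ t) i j := by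
    intro t ht
    induction t, ht using Nat.le_induction with
    | base => exact hk₀
    | succ t ht ih =>
      intro i j
      rw [pow_succ', Matrix.mul_apply]
      obtain ⟨s, hs⟩ := hLpos_row i
      exact Finset.sum_pos'
        (fun s' _ => mul_nonneg (hLnonneg i s') (ih s' j).le)
        ⟨s, Finset.mem_univ s, mul_pos hs (ih s j)⟩
  -- the lower-bound accumulation matrices
  set V : ℕ → Fin N → Matrix (Fin n) (Fin n) ℝ :=
    fun t i => c ^ t • (((A⁻¹) ^ t)ᵀ * (∑ j, (L ^ t) i j • G j) * (A⁻¹) ^ t) with hVdef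
  have hVpsd : ∀ t i, (V t i).PosSemidef := by
    intro t i
    simp only [hVdef]
    exact HCRE.psd_smul
      (HCRE.psd_congr (HCRE.psd_sum _ _ fun j _ =>
        HCRE.psd_smul (hGpsd j) (hLpow_nonneg t i j)) _)
      (pow_nonneg hcpos.le t)
  have hVstep : ∀ t (i : Fin N),
      ∑ j, (c * L i j) • ((A⁻¹)ᵀ * V t j * A⁻¹) = V (t+1) i := by
    intro t i
    simp only [hVdef]
    have e1 : ∀ j : Fin N,
        (c * L i j) • ((A⁻¹)ᵀ *
          (c ^ t • (((A⁻¹) ^ t)ᵀ * (∑ s, (L ^ t) j s • G s) * (A⁻¹) ^ t)) * A⁻¹)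
        = ∑ s, (c ^ (t+1) * (L i j * (L ^ t) j s)) •
            (((A⁻¹) ^ (t+1))ᵀ * G s * (A⁻¹) ^ (t+1)) := by
      intro j
      rw [Matrix.mul_smul, Matrix.smul_mul, smul_smul]
      have eZ : (A⁻¹)ᵀ * (((A⁻¹) ^ t)ᵀ * (∑ s, (L ^ t) j s • G s) * (A⁻¹) ^ t) * A⁻¹
          = ∑ s, (L ^ t) j s • (((A⁻¹) ^ (t+1))ᵀ * G s * (A⁻¹) ^ (t+1)) := by
        rw [pow_succ, Matrix.transpose_mul]
        simp only [Matrix.mul_sum, Matrix.sum_mul, Matrix.smul_mul, Matrix.mul_smul,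
          Matrix.mul_assoc]
      rw [eZ, Finset.smul_sum]
      refine Finset.sum_congr rfl fun s _ => ?_
      rw [smul_smul]
      congr 1
      ring
    rw [Finset.sum_congr rfl fun j _ => e1 j, Finset.sum_comm]
    simp only [Matrix.mul_sum, Matrix.sum_mul, Matrix.smul_mul, Matrix.mul_smul,
      Finset.smul_sum, smul_smul, Matrix.mul_assoc]
    refine Finset.sum_congr rfl fun s _ => ?_
    rw [← Finset.sum_smul]
    congr 1
    rw [pow_succ' L t, Matrix.mul_apply, Finset.mul_sum]
  -- V 0 j = G j
  have hV0 : ∀ j, V 0 j = G j := by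
    intro j
    simp only [hVdef]
    rw [pow_zero, pow_zero, pow_zero, Matrix.transpose_one, Matrix.one_mul, Matrix.mul_one,
      one_smul]
    rw [show (∑ s, (1 : Matrix (Fin N) (Fin N) ℝ) j s • G s) = G j from ?_]
    refine Finset.sum_eq_single j (fun s _ hsj => ?_) (fun h => absurd (Finset.mem_univ j) h)
      |>.trans ?_
    · rw [Matrix.one_apply_ne (Ne.symm hsj), zero_smul]
    · rw [Matrix.one_apply_eq, one_smul]
  -- unrolled lower bound
  have hunroll : ∀ mm (i : Fin N),
      ((Pseq (mm+1) i)⁻¹ - ∑ t ∈ Finset.range mm, V (t+1) i).PosSemidef := by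
    intro mm
    induction mm with
    | zero =>
      intro i
      simpa using (hPpd 1 i).inv.posSemidef
    | succ mm ih =>
      intro i
      have h1 := hstep mm i
      have h2 : ((c • ((A⁻¹)ᵀ * W (mm+1) i * A⁻¹))
          - ∑ t ∈ Finset.range (mm+1), V (t+1) i).PosSemidef := by
        have hU : c • ((A⁻¹)ᵀ * W (mm+1) i * A⁻¹)
            = ∑ j, (c * L i j) • ((A⁻¹)ᵀ * ((Pseq (mm+1) j)⁻¹ + G j) * A⁻¹) := by
          simp only [hWdef]
          rw [Matrix.mul_sum, Matrix.sum_mul, Finset.smul_sum]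
          refine Finset.sum_congr rfl fun j _ => ?_
          rw [← smul_add, Matrix.mul_smul, Matrix.smul_mul, smul_smul]
        rw [hU]
        have hterm : ∀ j : Fin N,
            ((c * L i j) • ((A⁻¹)ᵀ * ((Pseq (mm+1) j)⁻¹ + G j) * A⁻¹)
            - (c * L i j) • ((A⁻¹)ᵀ *
                ((∑ t ∈ Finset.range mm, V (t+1) j) + G j) * A⁻¹)).PosSemidef := by
          intro j
          rw [← smul_sub]
          refine HCRE.psd_smul ?_ (mul_nonneg hcpos.le (hLnonneg i j))
          have e : (A⁻¹)ᵀ * ((Pseq (mm+1) j)⁻¹ + G j) * A⁻¹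
              - (A⁻¹)ᵀ * ((∑ t ∈ Finset.range mm, V (t+1) j) + G j) * A⁻¹
              = (A⁻¹)ᵀ * (((Pseq (mm+1) j)⁻¹ + G j)
                  - ((∑ t ∈ Finset.range mm, V (t+1) j) + G j)) * A⁻¹ := by
            rw [Matrix.mul_sub, Matrix.sub_mul]
          rw [e]
          have e2 : ((Pseq (mm+1) j)⁻¹ + G j)
              - ((∑ t ∈ Finset.range mm, V (t+1) j) + G j)
              = (Pseq (mm+1) j)⁻¹ - ∑ t ∈ Finset.range mm, V (t+1) j := by abel
          rw [e2]
          exact HCRE.psd_congr (ih j) _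
        have hsum := HCRE.psd_sum Finset.univ _ (fun j _ => hterm j)
        rw [Finset.sum_sub_distrib] at hsum
        have hid2 : ∑ j, (c * L i j) • ((A⁻¹)ᵀ *
              ((∑ t ∈ Finset.range mm, V (t+1) j) + G j) * A⁻¹)
            = ∑ t ∈ Finset.range (mm+1), V (t+1) i := by
          have hsplit : ∀ j : Fin N, (c * L i j) • ((A⁻¹)ᵀ *
                ((∑ t ∈ Finset.range mm, V (t+1) j) + G j) * A⁻¹)
              = (∑ t ∈ Finset.range mm, (c * L i j) • ((A⁻¹)ᵀ * V (t+1) j * A⁻¹))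
                + (c * L i j) • ((A⁻¹)ᵀ * V 0 j * A⁻¹) := by
            intro j
            rw [hV0 j, Matrix.mul_add, Matrix.add_mul, smul_add]
            congr 1
            rw [Matrix.mul_sum, Matrix.sum_mul, Finset.smul_sum]
          rw [Finset.sum_congr rfl fun j _ => hsplit j, Finset.sum_add_distrib,
            Finset.sum_comm]
          rw [Finset.sum_range_succ']
          congr 1
          · exact Finset.sum_congr rfl fun t _ => hVstep (t+1) i
          · exact hVstep 0 i
        rw [hid2] at hsum
        exact hsum
      exact HCRE.le_trans3 h2 h1
  -- epsilon: uniform positive lower bound on window entries of powers of L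
  set ε : ℝ := Finset.univ.inf' Finset.univ_nonempty
      (fun p : Fin n × Fin N × Fin N => (L ^ (k₀ + 1 + (p.1 : ℕ))) p.2.1 p.2.2) with hεdef
  have hεpos : 0 < ε := by
    rw [hεdef, Finset.lt_inf'_iff]
    intro p _
    exact hLpow_pos _ (by omega) _ _
  have hεle : ∀ (s : Fin n) (i j : Fin N), ε ≤ (L ^ (k₀ + 1 + (s : ℕ))) i j := by
    intro s i j
    exact Finset.inf'_le _ (Finset.mem_univ (s, i, j))
  -- sum of the G's and its relation to the observability Gramian
  set SG : Matrix (Fin n) (Fin n) ℝ := ∑ j, G j with hSGdef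
  have hSGpsd : SG.PosSemidef := HCRE.psd_sum _ _ fun j _ => hGpsd j
  have instm : ∀ j : Fin N, Nonempty (Fin (m j)) := fun j => ⟨⟨0, hm j⟩⟩
  choose rf hrf0 hrf using fun j => @HCRE.posdef_lower _ _ _ (instm j) _ (hR j).inv
  set r : ℝ := Finset.univ.inf' Finset.univ_nonempty rf with hrdef
  have hrpos : 0 < r := by
    rw [hrdef, Finset.lt_inf'_iff]
    intro j _
    exact hrf0 j
  have hCCpsd : ∀ j : Fin N, ((C j)ᵀ * C j).PosSemidef := by
    intro j
    have h := Matrix.posSemidef_conjTranspose_mul_self (C j)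
    rwa [conjTranspose_eq_transpose_of_trivial] at h
  have hGlb : ∀ j, (G j - r • ((C j)ᵀ * C j)).PosSemidef := by
    intro j
    have h1 : (G j - rf j • ((C j)ᵀ * C j)).PosSemidef := by
      have h2 := HCRE.psd_congr' (hrf j) (C j)
      have e : (C j)ᵀ * ((R j)⁻¹ - rf j • (1 : Matrix (Fin (m j)) (Fin (m j)) ℝ)) * (C j)
          = G j - rf j • ((C j)ᵀ * C j) := by
        rw [Matrix.mul_sub, Matrix.sub_mul, Matrix.mul_smul, Matrix.smul_mul,
          Matrix.mul_one]
      rwa [e] at h2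
    have e3 : G j - r • ((C j)ᵀ * C j)
        = (G j - rf j • ((C j)ᵀ * C j)) + (rf j - r) • ((C j)ᵀ * C j) := by
      rw [sub_smul]; abel
    rw [e3]
    refine h1.add (HCRE.psd_smul (hCCpsd j) ?_)
    have := Finset.inf'_le rf (Finset.mem_univ j)
    rw [hrdef]
    linarith [this]
  have hSGlb : (SG - r • (∑ j, (C j)ᵀ * C j)).PosSemidef := by
    rw [hSGdef, Finset.smul_sum, ← Finset.sum_sub_distrib]
    exact HCRE.psd_sum _ _ fun j _ => hGlb j
  set D₀ : Matrix (Fin n) (Fin n) ℝ := ∑ k ∈ Finset.range n, (A ^ k)ᵀ * SG * A ^ k with hD₀def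
  have hD₀pd : D₀.PosDef := by
    have h1 : (D₀ - r • (∑ k ∈ Finset.range n, (A ^ k)ᵀ * (∑ i, (C i)ᵀ * C i) * A ^ k)).PosSemidef := by
      rw [hD₀def, Finset.smul_sum, ← Finset.sum_sub_distrib]
      refine HCRE.psd_sum _ _ fun k _ => ?_
      have e : (A ^ k)ᵀ * SG * A ^ k - r • ((A ^ k)ᵀ * (∑ i, (C i)ᵀ * C i) * A ^ k)
          = (A ^ k)ᵀ * (SG - r • (∑ i, (C i)ᵀ * C i)) * A ^ k := by
        rw [Matrix.mul_sub, Matrix.sub_mul, Matrix.mul_smul, Matrix.smul_mul]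
      rw [e]
      exact HCRE.psd_congr hSGlb _
    have h2 : (r • (∑ k ∈ Finset.range n, (A ^ k)ᵀ * (∑ i, (C i)ᵀ * C i) * A ^ k)).PosDef :=
      HCRE.pd_smul hObs hrpos
    have h3 := h2.add_posSemidef h1
    rwa [show r • (∑ k ∈ Finset.range n, (A ^ k)ᵀ * (∑ i, (C i)ᵀ * C i) * A ^ k)
      + (D₀ - r • (∑ k ∈ Finset.range n, (A ^ k)ᵀ * (∑ i, (C i)ᵀ * C i) * A ^ k)) = D₀
      from by abel] at h3
  set κ : ℕ := k₀ + n with hκdef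
  set T : Matrix (Fin n) (Fin n) ℝ := (A⁻¹) ^ κ with hTdef
  have hTdet : IsUnit T.det := by
    rw [hTdef, Matrix.det_pow]
    exact hAinvdet.pow κ
  set D : Matrix (Fin n) (Fin n) ℝ := (ε * c ^ κ) • (Tᵀ * D₀ * T) with hDdef
  have hDpd : D.PosDef :=
    HCRE.pd_smul (HCRE.pd_congr hD₀pd hTdet) (mul_pos hεpos (pow_pos hcpos κ))
  -- window term bound
  have hwin : ∀ (s : ℕ), s < n → ∀ i : Fin N, (V (k₀ + 1 + s) i
      - (ε * c ^ κ) • ((((A⁻¹) ^ (k₀+1+s))ᵀ) * SG * ((A⁻¹) ^ (k₀+1+s)))).PosSemidef := by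
    intro s hs i
    have hSt : ((∑ j, (L ^ (k₀+1+s)) i j • G j) - ε • SG).PosSemidef := by
      rw [hSGdef, Finset.smul_sum, ← Finset.sum_sub_distrib]
      refine HCRE.psd_sum _ _ fun j _ => ?_
      rw [← sub_smul]
      refine HCRE.psd_smul (hGpsd j) ?_
      have h := hεle ⟨s, hs⟩ i j
      simp only at h
      linarith [h]
    have hct : c ^ κ ≤ c ^ (k₀+1+s) :=
      pow_le_pow_of_le_one hcpos.le hcle1 (by omega)
    have hPsgP : ((((A⁻¹) ^ (k₀+1+s))ᵀ) * SG * ((A⁻¹) ^ (k₀+1+s))).PosSemidef :=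
      HCRE.psd_congr hSGpsd _
    have e : V (k₀+1+s) i
        - (ε * c ^ κ) • ((((A⁻¹) ^ (k₀+1+s))ᵀ) * SG * ((A⁻¹) ^ (k₀+1+s)))
        = c ^ (k₀+1+s) • (((((A⁻¹) ^ (k₀+1+s))ᵀ) * (∑ j, (L ^ (k₀+1+s)) i j • G j) * ((A⁻¹) ^ (k₀+1+s)))
            - ε • ((((A⁻¹) ^ (k₀+1+s))ᵀ) * SG * ((A⁻¹) ^ (k₀+1+s))))
          + ((c ^ (k₀+1+s) - c ^ κ) * ε) • ((((A⁻¹) ^ (k₀+1+s))ᵀ) * SG * ((A⁻¹) ^ (k₀+1+s))) := by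
      simp only [hVdef]
      module
    rw [e]
    refine (HCRE.psd_smul ?_ (pow_nonneg hcpos.le _)).add
      (HCRE.psd_smul hPsgP (mul_nonneg (by linarith) hεpos.le))
    have e2 : (((A⁻¹) ^ (k₀+1+s))ᵀ) * (∑ j, (L ^ (k₀+1+s)) i j • G j) * ((A⁻¹) ^ (k₀+1+s))
        - ε • ((((A⁻¹) ^ (k₀+1+s))ᵀ) * SG * ((A⁻¹) ^ (k₀+1+s)))
        = (((A⁻¹) ^ (k₀+1+s))ᵀ) * ((∑ j, (L ^ (k₀+1+s)) i j • G j) - ε • SG) * ((A⁻¹) ^ (k₀+1+s)) := by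
      rw [Matrix.mul_sub, Matrix.sub_mul, Matrix.mul_smul, Matrix.smul_mul]
    rw [e2]
    exact HCRE.psd_congr hSt _
  -- sum of window congruences equals T-congruence of D₀
  have hwinsum : ∑ s ∈ Finset.range n, ((((A⁻¹) ^ (k₀+1+s))ᵀ) * SG * ((A⁻¹) ^ (k₀+1+s)))
      = Tᵀ * D₀ * T := by
    have hrhs : Tᵀ * D₀ * T = ∑ k ∈ Finset.range n, Tᵀ * ((A ^ k)ᵀ * SG * A ^ k) * T := by
      rw [hD₀def, Matrix.mul_sum, Matrix.sum_mul]
    rw [hrhs, ← Finset.sum_range_reflect (fun k => Tᵀ * ((A ^ k)ᵀ * SG * A ^ k) * T) n]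
    refine Finset.sum_congr rfl fun s hs => ?_
    have hsn : s < n := Finset.mem_range.mp hs
    have hpow : A ^ (n-1-s) * (A⁻¹) ^ κ = (A⁻¹) ^ (k₀+1+s) := by
      have h := HCRE.pow_mul_inv_pow_add hA (n-1-s) (k₀+1+s)
      rwa [show n-1-s+(k₀+1+s) = κ from by omega] at h
    rw [hTdef, ← hpow, Matrix.transpose_mul]
    simp only [Matrix.mul_assoc]
  have hwindowtotal : ∀ i : Fin N,
      ((∑ s ∈ Finset.range n, V (k₀+1+s) i) - D).PosSemidef := by
    intro i
    have h := HCRE.psd_sum (Finset.range n) _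
      (fun s hs => hwin s (Finset.mem_range.mp hs) i)
    rw [Finset.sum_sub_distrib, ← Finset.smul_sum, hwinsum, ← hDdef] at h
    exact h
  -- dropping extra terms
  have hdrop : ∀ mm, κ ≤ mm → ∀ i : Fin N,
      ((∑ t ∈ Finset.range mm, V (t+1) i)
        - ∑ s ∈ Finset.range n, V (k₀+1+s) i).PosSemidef := by
    intro mm hmm' i
    have e0 : ∑ s ∈ Finset.range n, V (k₀+1+s) i
        = ∑ t ∈ Finset.Ico k₀ κ, V (t+1) i := by
      rw [Finset.sum_Ico_eq_sum_range, show κ - k₀ = n from by omega]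
      exact (Finset.sum_congr rfl fun s _ => by rw [show k₀+s+1 = k₀+1+s from by omega]).symm
    have e1 : ∑ t ∈ Finset.range mm, V (t+1) i
        = (∑ t ∈ Finset.Ico 0 k₀, V (t+1) i) + (∑ t ∈ Finset.Ico k₀ κ, V (t+1) i)
          + ∑ t ∈ Finset.Ico κ mm, V (t+1) i := by
      rw [Finset.range_eq_Ico]
      rw [← Finset.sum_Ico_consecutive (fun t => V (t+1) i) (Nat.zero_le κ) hmm']
      rw [← Finset.sum_Ico_consecutive (fun t => V (t+1) i) (Nat.zero_le k₀) (by omega : k₀ ≤ κ)]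
    have e2 : (∑ t ∈ Finset.range mm, V (t+1) i) - ∑ s ∈ Finset.range n, V (k₀+1+s) i
        = (∑ t ∈ Finset.Ico 0 k₀, V (t+1) i) + ∑ t ∈ Finset.Ico κ mm, V (t+1) i := by
      rw [e0, e1]; abel
    rw [e2]
    exact (HCRE.psd_sum _ _ fun t _ => hVpsd (t+1) i).add
      (HCRE.psd_sum _ _ fun t _ => hVpsd (t+1) i)
  -- conclusion
  refine ⟨κ + 1, D⁻¹, hDpd.inv, ?_⟩
  intro i k hk
  obtain ⟨mm, rfl⟩ : ∃ mm, k = mm + 1 := ⟨k - 1, by omega⟩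
  have hmmκ : κ ≤ mm := by omega
  have h4 : ((Pseq (mm+1) i)⁻¹ - D).PosSemidef :=
    HCRE.le_trans3 (HCRE.le_trans3 (hwindowtotal i) (hdrop mm hmmκ i)) (hunroll mm i)
  have h5 := HCRE.inv_antimono hDpd (hPpd (mm+1) i).inv h4
  rwa [Matrix.nonsing_inv_nonsing_inv _ (hPdet (mm+1) i)] at h5
end

section
/- There exists ε > 0 such that whenever the initial matrices satisfy 0 < P_{i,0} ≤ ε·I for all i ∈ {1, …, N}, the iterates of the iterative law are monotonically nondecreasing in the Loewner order, i.e. P_{i,k+1} ≥ P_{i,k} for all i and all k ≥ 0, and for each i the sequence (P_{i,k})_{k≥0} converges entrywise to a positive definite matrix as k → ∞. -/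
open Matrix Filter
set_option linter.unusedSectionVars false
set_option maxHeartbeats 1600000

variable {n : Type*} [Fintype n] [DecidableEq n]

namespace HCRE

def lle (X Y : Matrix n n ℝ) : Prop := (Y - X).PosSemidef

lemma ct_eq {a b : Type*} (M : Matrix a b ℝ) : Mᴴ = Mᵀ :=
  conjTranspose_eq_transpose_of_trivial M

lemma herm_iff_symm {M : Matrix n n ℝ} : M.IsHermitian ↔ Mᵀ = M := by
  rw [Matrix.IsHermitian, ct_eq]

lemma qf_sub (X Y : Matrix n n ℝ) (x : n → ℝ) :
    x ⬝ᵥ ((X - Y) *ᵥ x) = x ⬝ᵥ (X *ᵥ x) - x ⬝ᵥ (Y *ᵥ x) := by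
  rw [Matrix.sub_mulVec, dotProduct_sub]

lemma lle_iff {X Y : Matrix n n ℝ} : lle X Y ↔ (Y - X).PosSemidef := Iff.rfl

lemma lle_refl (X : Matrix n n ℝ) : lle X X := by
  simpa [lle] using Matrix.PosSemidef.zero

lemma lle_trans {X Y Z : Matrix n n ℝ} (h1 : lle X Y) (h2 : lle Y Z) : lle X Z := by
  have := h1.add h2
  simpa [lle, sub_add_sub_cancel'] using this

lemma lle_add {X Y X' Y' : Matrix n n ℝ} (h1 : lle X Y) (h2 : lle X' Y') :
    lle (X + X') (Y + Y') := by
  have := h1.add h2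
  have e : Y - X + (Y' - X') = (Y + Y') - (X + X') := by abel
  rwa [e] at this

lemma psd_smul_s1 {X : Matrix n n ℝ} (hX : X.PosSemidef) {c : ℝ} (hc : 0 ≤ c) :
    (c • X).PosSemidef := by
  refine Matrix.PosSemidef.of_dotProduct_mulVec_nonneg ?_ ?_
  · rw [herm_iff_symm] at *
    rw [Matrix.transpose_smul, herm_iff_symm.mp hX.1]
  · intro x
    rw [Matrix.smul_mulVec, dotProduct_smul, smul_eq_mul]
    exact mul_nonneg hc (by simpa using hX.dotProduct_mulVec_nonneg x)

lemma lle_smul {X Y : Matrix n n ℝ} {c : ℝ} (hc : 0 ≤ c) (h : lle X Y) :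
    lle (c • X) (c • Y) := by
  have := psd_smul_s1 h hc
  rwa [lle, ← smul_sub]

lemma posSemidef_sum {ι : Type*} (s : Finset ι) (f : ι → Matrix n n ℝ)
    (h : ∀ i ∈ s, (f i).PosSemidef) : (∑ i ∈ s, f i).PosSemidef := by
  classical
  induction s using Finset.induction_on with
  | empty => simpa using Matrix.PosSemidef.zero
  | insert _ _ hni ih =>
    rename_i a s
    rw [Finset.sum_insert hni]
    exact (h a (Finset.mem_insert_self a s)).add
      (ih fun i hi => h i (Finset.mem_insert_of_mem hi))

lemma lle_sum {ι : Type*} (s : Finset ι) (f g : ι → Matrix n n ℝ)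
    (h : ∀ i ∈ s, lle (f i) (g i)) : lle (∑ i ∈ s, f i) (∑ i ∈ s, g i) := by
  have : (∑ i ∈ s, (g i - f i)).PosSemidef := posSemidef_sum s _ h
  rwa [Finset.sum_sub_distrib] at this

lemma lle_congr (M : Matrix n n ℝ) {X Y : Matrix n n ℝ} (h : lle X Y) :
    lle (M * X * Mᵀ) (M * Y * Mᵀ) := by
  have := h.mul_mul_conjTranspose_same M
  rw [ct_eq, Matrix.mul_sub, Matrix.sub_mul] at this
  exact this

lemma posDef_of_lle {X Y : Matrix n n ℝ} (hX : X.PosDef) (h : lle X Y) : Y.PosDef := by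
  have := hX.add_posSemidef h
  simpa using this



lemma posDef_congr {Y B : Matrix n n ℝ} (hY : Y.PosDef) (hB : IsUnit B.det) :
    (B * Y * Bᵀ).PosDef := by
  refine Matrix.PosDef.of_dotProduct_mulVec_pos ?_ ?_
  · rw [herm_iff_symm, Matrix.transpose_mul, Matrix.transpose_mul, Matrix.transpose_transpose,
      herm_iff_symm.mp hY.1, Matrix.mul_assoc]
  · intro x hx
    have hy : Bᵀ *ᵥ x ≠ 0 := by
      intro h0
      apply hx
      have : (Bᵀ)⁻¹ *ᵥ (Bᵀ *ᵥ x) = x := by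
        rw [Matrix.mulVec_mulVec, Matrix.nonsing_inv_mul _ (by rwa [Matrix.det_transpose]),
          Matrix.one_mulVec]
      rw [h0, Matrix.mulVec_zero] at this
      exact this.symm
    have e : x ⬝ᵥ ((B * Y * Bᵀ) *ᵥ x) = (Bᵀ *ᵥ x) ⬝ᵥ (Y *ᵥ (Bᵀ *ᵥ x)) := by
      rw [← Matrix.mulVec_mulVec, ← Matrix.mulVec_mulVec, Matrix.dotProduct_mulVec x B,
        ← Matrix.mulVec_transpose]
    have := hY.dotProduct_mulVec_pos hy
    simpa [e] using this

lemma posDef_smul {X : Matrix n n ℝ} (hX : X.PosDef) {c : ℝ} (hc : 0 < c) :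
    (c • X).PosDef := by
  refine Matrix.PosDef.of_dotProduct_mulVec_pos ?_ ?_
  · rw [herm_iff_symm, Matrix.transpose_smul, herm_iff_symm.mp hX.1]
  · intro x hx
    rw [Matrix.smul_mulVec, dotProduct_smul, smul_eq_mul]
    exact mul_pos hc (by simpa using hX.dotProduct_mulVec_pos hx)

open scoped MatrixOrder

lemma sqrt_isUnit_det {X : Matrix n n ℝ} (hX : X.PosDef) :
    IsUnit (CFC.sqrt X).det := by
  have h2 : CFC.sqrt X * CFC.sqrt X = X := CFC.sqrt_mul_sqrt_self X (Matrix.nonneg_iff_posSemidef.mpr hX.posSemidef)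
  have : (CFC.sqrt X).det * (CFC.sqrt X).det = X.det := by
    rw [← Matrix.det_mul, h2]
  have hd : X.det ≠ 0 := ne_of_gt hX.det_pos
  refine isUnit_iff_ne_zero.mpr fun h0 => hd ?_
  rw [← this, h0, mul_zero]



lemma lle_one_inv {M : Matrix n n ℝ} (hM : M.PosDef) (h : lle 1 M) : lle M⁻¹ 1 := by
  set T := CFC.sqrt M with hT
  have hT2 : T * T = M := CFC.sqrt_mul_sqrt_self M (Matrix.nonneg_iff_posSemidef.mpr hM.posSemidef)
  have hTu : IsUnit T.det := by
    have : T.det * T.det = M.det := by rw [← Matrix.det_mul, hT2]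
    exact isUnit_iff_ne_zero.mpr fun h0 => (ne_of_gt hM.det_pos) (by rw [← this, h0, mul_zero])
  have hTsymm : Tᵀ = T := herm_iff_symm.mp (Matrix.nonneg_iff_posSemidef.mp (CFC.sqrt_nonneg M)).1
  have hTinv_symm : (T⁻¹)ᵀ = T⁻¹ := by rw [Matrix.transpose_nonsing_inv, hTsymm]
  have key := lle_congr T⁻¹ h
  rw [hTinv_symm] at key
  have e1 : T⁻¹ * M * T⁻¹ = 1 := by
    rw [← hT2, ← Matrix.mul_assoc, Matrix.mul_assoc (T⁻¹ * T),
      Matrix.mul_nonsing_inv _ hTu, Matrix.mul_one, Matrix.nonsing_inv_mul _ hTu]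
  have e2 : T⁻¹ * 1 * T⁻¹ = M⁻¹ := by
    rw [Matrix.mul_one, ← Matrix.mul_inv_rev, hT2]
  rwa [e1, e2] at key

lemma lle_inv {X Y : Matrix n n ℝ} (hX : X.PosDef) (h : lle X Y) : lle Y⁻¹ X⁻¹ := by
  have hY : Y.PosDef := posDef_of_lle hX h
  set S := CFC.sqrt X with hS
  have hS2 : S * S = X := CFC.sqrt_mul_sqrt_self X (Matrix.nonneg_iff_posSemidef.mpr hX.posSemidef)
  have hSu : IsUnit S.det := by
    have : S.det * S.det = X.det := by rw [← Matrix.det_mul, hS2]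
    exact isUnit_iff_ne_zero.mpr fun h0 => (ne_of_gt hX.det_pos) (by rw [← this, h0, mul_zero])
  have hSsymm : Sᵀ = S := herm_iff_symm.mp (Matrix.nonneg_iff_posSemidef.mp (CFC.sqrt_nonneg X)).1
  have hSinv_symm : (S⁻¹)ᵀ = S⁻¹ := by rw [Matrix.transpose_nonsing_inv, hSsymm]
  have hSiu : IsUnit (S⁻¹).det := S.isUnit_nonsing_inv_det hSu
  -- congruence by S⁻¹
  have h1 := lle_congr S⁻¹ h
  rw [hSinv_symm] at h1
  have e1 : S⁻¹ * X * S⁻¹ = 1 := by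
    rw [← hS2, ← Matrix.mul_assoc, Matrix.mul_assoc (S⁻¹ * S),
      Matrix.mul_nonsing_inv _ hSu, Matrix.mul_one, Matrix.nonsing_inv_mul _ hSu]
  rw [e1] at h1
  -- M := S⁻¹ * Y * S⁻¹ is PD
  have hMpd : (S⁻¹ * Y * S⁻¹).PosDef := by
    have := posDef_congr hY hSiu
    rwa [hSinv_symm] at this
  have h2 := lle_one_inv hMpd h1
  -- congruence back by S⁻¹
  have h3 := lle_congr S⁻¹ h2
  rw [hSinv_symm] at h3
  have e2 : S⁻¹ * (S⁻¹ * Y * S⁻¹)⁻¹ * S⁻¹ = Y⁻¹ := by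
    rw [Matrix.mul_inv_rev, Matrix.mul_inv_rev, Matrix.nonsing_inv_nonsing_inv _ hSu,
      ← Matrix.mul_assoc, ← Matrix.mul_assoc, Matrix.nonsing_inv_mul _ hSu, Matrix.one_mul,
      Matrix.mul_assoc, Matrix.mul_nonsing_inv _ hSu, Matrix.mul_one]
  have e3 : S⁻¹ * 1 * S⁻¹ = X⁻¹ := by
    rw [Matrix.mul_one, ← Matrix.mul_inv_rev, hS2]
  rwa [e2, e3] at h3



lemma psd_of_isEmpty (h : IsEmpty n) (M : Matrix n n ℝ) : M.PosSemidef := by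
  refine Matrix.PosSemidef.of_dotProduct_mulVec_nonneg ?_ ?_
  · ext i j
    exact (IsEmpty.false i).elim
  · intro x
    simp [dotProduct]

-- spectral sandwich: both bounds at once
lemma lle_smul_one_of_eigen {M : Matrix n n ℝ} (hM : M.IsHermitian) (c : ℝ)
    (hc : ∀ i, hM.eigenvalues i ≤ c) : lle M (c • 1) := by
  have hU : (hM.eigenvectorUnitary : Matrix n n ℝ) * star (hM.eigenvectorUnitary : Matrix n n ℝ) = 1 :=
    Matrix.mem_unitaryGroup_iff.mp (hM.eigenvectorUnitary).2
  have hspec : M = (hM.eigenvectorUnitary : Matrix n n ℝ) * diagonal (RCLike.ofReal ∘ hM.eigenvalues) *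
      star (hM.eigenvectorUnitary : Matrix n n ℝ) := hM.spectral_theorem
  have hone : c • (1 : Matrix n n ℝ) =
      (hM.eigenvectorUnitary : Matrix n n ℝ) * (c • 1) * star (hM.eigenvectorUnitary : Matrix n n ℝ) := by
    rw [Matrix.mul_smul, Matrix.mul_one, Matrix.smul_mul, hU]
  have hdiff : c • (1 : Matrix n n ℝ) - M =
      (hM.eigenvectorUnitary : Matrix n n ℝ) *
        (c • 1 - diagonal (RCLike.ofReal ∘ hM.eigenvalues)) *
        star (hM.eigenvectorUnitary : Matrix n n ℝ) := by
    rw [Matrix.mul_sub, Matrix.sub_mul, ← hone, ← hspec]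
  have hpsd : (c • (1 : Matrix n n ℝ) - diagonal (RCLike.ofReal ∘ hM.eigenvalues)).PosSemidef := by
    have : c • (1 : Matrix n n ℝ) - diagonal (RCLike.ofReal ∘ hM.eigenvalues)
        = diagonal (fun i => c - hM.eigenvalues i) := by
      ext i j
      rcases eq_or_ne i j with rfl | hij
      · simp [RCLike.ofReal_real_eq_id]
      · simp [Matrix.one_apply_ne hij, Matrix.diagonal_apply_ne _ hij]
    rw [this]
    exact Matrix.PosSemidef.diagonal (fun i => sub_nonneg.mpr (hc i))
  rw [lle, hdiff]
  have := hpsd.mul_mul_conjTranspose_same (hM.eigenvectorUnitary : Matrix n n ℝ)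
  rwa [← Matrix.star_eq_conjTranspose] at this

lemma smul_one_lle_of_eigen {M : Matrix n n ℝ} (hM : M.IsHermitian) (c : ℝ)
    (hc : ∀ i, c ≤ hM.eigenvalues i) : lle (c • 1) M := by
  have hU : (hM.eigenvectorUnitary : Matrix n n ℝ) * star (hM.eigenvectorUnitary : Matrix n n ℝ) = 1 :=
    Matrix.mem_unitaryGroup_iff.mp (hM.eigenvectorUnitary).2
  have hone : c • (1 : Matrix n n ℝ) =
      (hM.eigenvectorUnitary : Matrix n n ℝ) * (c • 1) * star (hM.eigenvectorUnitary : Matrix n n ℝ) := by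
    rw [Matrix.mul_smul, Matrix.mul_one, Matrix.smul_mul, hU]
  have hdiff : M - c • (1 : Matrix n n ℝ) =
      (hM.eigenvectorUnitary : Matrix n n ℝ) *
        (diagonal (RCLike.ofReal ∘ hM.eigenvalues) - c • 1) *
        star (hM.eigenvectorUnitary : Matrix n n ℝ) := by
    rw [Matrix.mul_sub, Matrix.sub_mul, ← hone, ← show M = (hM.eigenvectorUnitary : Matrix n n ℝ) *
        diagonal (RCLike.ofReal ∘ hM.eigenvalues) * star (hM.eigenvectorUnitary : Matrix n n ℝ) from
        hM.spectral_theorem]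
  have hpsd : (diagonal (RCLike.ofReal ∘ hM.eigenvalues) - c • (1 : Matrix n n ℝ)).PosSemidef := by
    have : diagonal (RCLike.ofReal ∘ hM.eigenvalues) - c • (1 : Matrix n n ℝ)
        = diagonal (fun i => hM.eigenvalues i - c) := by
      ext i j
      rcases eq_or_ne i j with rfl | hij
      · simp [RCLike.ofReal_real_eq_id]
      · simp [Matrix.one_apply_ne hij, Matrix.diagonal_apply_ne _ hij]
    rw [this]
    exact Matrix.PosSemidef.diagonal (fun i => sub_nonneg.mpr (hc i))
  rw [lle, hdiff]
  have := hpsd.mul_mul_conjTranspose_same (hM.eigenvectorUnitary : Matrix n n ℝ)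
  rwa [← Matrix.star_eq_conjTranspose] at this

/-- Every symmetric real matrix is ≼ c•1 for some c ≥ given lower bound on c -/
lemma exists_ub {M : Matrix n n ℝ} (hM : M.IsHermitian) : ∃ c : ℝ, 0 < c ∧ lle M (c • 1) := by
  rcases isEmpty_or_nonempty n with h | h
  · exact ⟨1, one_pos, psd_of_isEmpty h _⟩
  · obtain ⟨c, hc⟩ := Finite.exists_le (fun i => hM.eigenvalues i)
    refine ⟨max c 1, lt_of_lt_of_le one_pos (le_max_right _ _), ?_⟩
    exact lle_smul_one_of_eigen hM _ (fun i => le_trans (hc i) (le_max_left _ _))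

lemma exists_lb {M : Matrix n n ℝ} (hM : M.PosDef) : ∃ ε : ℝ, 0 < ε ∧ lle (ε • 1) M := by
  rcases isEmpty_or_nonempty n with h | h
  · exact ⟨1, one_pos, psd_of_isEmpty h _⟩
  · have hval := hM.eigenvalues_pos
    obtain ⟨j, hj⟩ := Finite.exists_min (fun i => hM.isHermitian.eigenvalues i)
    exact ⟨_, hval j, smul_one_lle_of_eigen hM.isHermitian _ (fun i => hj i)⟩



lemma qform_eq_sum (M : Matrix n n ℝ) (x : n → ℝ) :
    x ⬝ᵥ (M *ᵥ x) = ∑ a, ∑ b, x a * (M a b * x b) := by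
  simp only [dotProduct, Matrix.mulVec, Finset.mul_sum]

lemma qf_entry {M : Matrix n n ℝ} (hM : M.IsHermitian) (a b : n) :
    M a b = ((Pi.single a 1 + Pi.single b 1) ⬝ᵥ (M *ᵥ (Pi.single a 1 + Pi.single b 1))
      - (Pi.single a (1:ℝ)) ⬝ᵥ (M *ᵥ Pi.single a 1)
      - (Pi.single b (1:ℝ)) ⬝ᵥ (M *ᵥ Pi.single b 1)) / 2 := by
  have hsymm : M b a = M a b := by
    have := herm_iff_symm.mp hM
    calc M b a = Mᵀ a b := rfl
    _ = M a b := by rw [this]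
  have q1 : ∀ (u v : n → ℝ), (u + v) ⬝ᵥ (M *ᵥ (u + v)) =
      u ⬝ᵥ (M *ᵥ u) + u ⬝ᵥ (M *ᵥ v) + v ⬝ᵥ (M *ᵥ u) + v ⬝ᵥ (M *ᵥ v) := by
    intro u v
    simp only [Matrix.mulVec_add, dotProduct_add, add_dotProduct]
    ring
  have e1 : ∀ (c d : n), (Pi.single c (1:ℝ)) ⬝ᵥ (M *ᵥ Pi.single d 1) = M c d := by
    intro c d
    rw [Matrix.mulVec_single, single_dotProduct]
    simp
  rw [q1, e1, e1, e1, e1, hsymm]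
  ring

lemma qf_mono {X Y : Matrix n n ℝ} (h : lle X Y) (x : n → ℝ) :
    x ⬝ᵥ (X *ᵥ x) ≤ x ⬝ᵥ (Y *ᵥ x) := by
  have := h.dotProduct_mulVec_nonneg x
  rw [Matrix.sub_mulVec, dotProduct_sub] at this
  simp only [star_trivial] at this
  linarith

/-- monotone + eventually bounded sequences of symmetric matrices converge -/
lemma tendsto_of_monotone_bounded (P : ℕ → Matrix n n ℝ)
    (hherm : ∀ k, (P k).IsHermitian)
    (hmono : ∀ k, lle (P k) (P (k+1)))
    (B : Matrix n n ℝ) (K0 : ℕ) (hbd : ∀ k, K0 ≤ k → lle (P k) B) :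
    ∃ Plim : Matrix n n ℝ, Plim.IsHermitian ∧
      (∀ x : n → ℝ, Tendsto (fun k => x ⬝ᵥ (P k *ᵥ x)) atTop (nhds (x ⬝ᵥ (Plim *ᵥ x)))) ∧
      Tendsto P atTop (nhds Plim) := by
  set q : ℕ → (n → ℝ) → ℝ := fun k x => x ⬝ᵥ (P k *ᵥ x) with hq
  have hqmono : ∀ x, Monotone (fun k => q k x) := by
    intro x
    apply monotone_nat_of_le_succ
    intro k
    exact qf_mono (hmono k) x
  have hqbdd : ∀ x, BddAbove (Set.range (fun k => q k x)) := by
    intro x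
    refine ⟨x ⬝ᵥ (B *ᵥ x), ?_⟩
    rintro y ⟨k, rfl⟩
    calc q k x ≤ q (k + K0) x := hqmono x (Nat.le_add_right k K0)
    _ ≤ x ⬝ᵥ (B *ᵥ x) := qf_mono (hbd (k + K0) (Nat.le_add_left K0 k)) x
  set ql : (n → ℝ) → ℝ := fun x => ⨆ k, q k x with hql
  have hqt : ∀ x, Tendsto (fun k => q k x) atTop (nhds (ql x)) := fun x =>
    tendsto_atTop_ciSup (hqmono x) (hqbdd x)
  set Plim : Matrix n n ℝ := Matrix.of fun a b =>
    (ql (Pi.single a 1 + Pi.single b 1) - ql (Pi.single a 1) - ql (Pi.single b 1)) / 2 with hPlim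
  have hentry : ∀ a b, Tendsto (fun k => P k a b) atTop (nhds (Plim a b)) := by
    intro a b
    have he : (fun k => P k a b) = fun k =>
        (q k (Pi.single a 1 + Pi.single b 1) - q k (Pi.single a 1) - q k (Pi.single b 1)) / 2 := by
      funext k
      exact qf_entry (hherm k) a b
    rw [he]
    exact (((hqt _).sub (hqt _)).sub (hqt _)).div_const 2
  have hmatrix : Tendsto P atTop (nhds Plim) := by
    refine tendsto_pi_nhds.mpr ?_
    intro a
    rw [tendsto_pi_nhds]
    intro b
    exact hentry a b
  have hql_symm : Plim.IsHermitian := by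
    rw [herm_iff_symm]
    ext a b
    show Plim b a = Plim a b
    simp only [hPlim, Matrix.of_apply]
    rw [add_comm (Pi.single b (1:ℝ) : n → ℝ) (Pi.single a 1)]
    ring
  refine ⟨Plim, hql_symm, ?_, hmatrix⟩
  intro x
  have h1 : ∀ (M : Matrix n n ℝ), x ⬝ᵥ (M *ᵥ x) = ∑ a, ∑ b, x a * (M a b * x b) :=
    fun M => qform_eq_sum M x
  simp only [hq, h1]
  apply tendsto_finset_sum
  intro a _
  apply tendsto_finset_sum
  intro b _
  exact tendsto_const_nhds.mul ((hentry a b).mul tendsto_const_nhds)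



/-! ### quadratic form congruence helpers -/

lemma qf_congr' {p : Type*} [Fintype p] (M : Matrix p p ℝ) (E : Matrix p n ℝ) (x : n → ℝ) :
    x ⬝ᵥ ((Eᵀ * M * E) *ᵥ x) = (E *ᵥ x) ⬝ᵥ (M *ᵥ (E *ᵥ x)) := by
  rw [← Matrix.mulVec_mulVec, ← Matrix.mulVec_mulVec, Matrix.dotProduct_mulVec x Eᵀ,
    Matrix.vecMul_transpose]

lemma qf_CtC {p : Type*} [Fintype p] (E : Matrix p n ℝ) (x : n → ℝ) :
    x ⬝ᵥ ((Eᵀ * E) *ᵥ x) = (E *ᵥ x) ⬝ᵥ (E *ᵥ x) := by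
  rw [← Matrix.mulVec_mulVec, Matrix.dotProduct_mulVec x Eᵀ, Matrix.vecMul_transpose]

lemma lle_zero {X : Matrix n n ℝ} (hX : X.PosSemidef) : lle 0 X := by
  rw [lle, sub_zero]
  exact hX

lemma smul_inv_mat {k : ℝ} (hk : k ≠ 0) {X : Matrix n n ℝ} (hX : IsUnit X.det) :
    (k • X)⁻¹ = k⁻¹ • X⁻¹ := by
  apply Matrix.inv_eq_right_inv
  rw [Matrix.smul_mul, Matrix.mul_smul, Matrix.mul_nonsing_inv _ hX, smul_smul,
    mul_inv_cancel₀ hk, one_smul]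

/-! ### The coupled map -/

section Coupled

variable {N : Type*} [Fintype N] [DecidableEq N]

/-- harmonic coupling term -/
noncomputable def Zm (L : Matrix N N ℝ) (S : N → Matrix n n ℝ) (P : N → Matrix n n ℝ) (i : N) :
    Matrix n n ℝ := ∑ j, (L i j • (P j)⁻¹ + L i j • S j)

/-- the HCRE iteration map -/
noncomputable def Phi (A Q : Matrix n n ℝ) (L : Matrix N N ℝ) (S : N → Matrix n n ℝ)
    (P : N → Matrix n n ℝ) (i : N) : Matrix n n ℝ :=
  A * (Zm L S P i)⁻¹ * Aᵀ + Q

variable {A Q : Matrix n n ℝ} {L : Matrix N N ℝ} {S : N → Matrix n n ℝ}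

lemma Zm_posDef (hLnonneg : ∀ i j, 0 ≤ L i j) (hLrow : ∀ i, ∑ j, L i j = 1)
    (hS : ∀ j, (S j).PosSemidef) {P : N → Matrix n n ℝ} (hP : ∀ j, (P j).PosDef) (i : N) :
    (Zm L S P i).PosDef := by
  have hex : ∃ j0, 0 < L i j0 := by
    by_contra h
    push_neg at h
    have hz : ∑ j, L i j = 0 :=
      Finset.sum_eq_zero fun j _ => le_antisymm (h j) (hLnonneg i j)
    rw [hLrow i] at hz
    norm_num at hz
  obtain ⟨j0, hj0⟩ := hex
  have hsplit : Zm L S P i =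
      (L i j0 • (P j0)⁻¹ + L i j0 • S j0) +
        ∑ j ∈ Finset.univ.erase j0, (L i j • (P j)⁻¹ + L i j • S j) := by
    rw [Zm]
    exact (Finset.add_sum_erase _ _ (Finset.mem_univ j0)).symm
  rw [hsplit]
  have h1 : (L i j0 • (P j0)⁻¹ + L i j0 • S j0).PosDef :=
    (posDef_smul (hP j0).inv hj0).add_posSemidef (psd_smul_s1 (hS j0) (hLnonneg i j0))
  have h2 : (∑ j ∈ Finset.univ.erase j0, (L i j • (P j)⁻¹ + L i j • S j)).PosSemidef :=
    posSemidef_sum _ _ fun j _ =>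
      (psd_smul_s1 (hP j).inv.posSemidef (hLnonneg i j)).add (psd_smul_s1 (hS j) (hLnonneg i j))
  exact h1.add_posSemidef h2

lemma Phi_posDef (hLnonneg : ∀ i j, 0 ≤ L i j) (hLrow : ∀ i, ∑ j, L i j = 1)
    (hS : ∀ j, (S j).PosSemidef) (hA : IsUnit A.det) (hQ : Q.PosDef)
    {P : N → Matrix n n ℝ} (hP : ∀ j, (P j).PosDef) (i : N) :
    (Phi A Q L S P i).PosDef := by
  have hZ := Zm_posDef hLnonneg hLrow hS hP i
  exact (posDef_congr hZ.inv hA).add hQ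

lemma lle_Q_Phi (hLnonneg : ∀ i j, 0 ≤ L i j) (hLrow : ∀ i, ∑ j, L i j = 1)
    (hS : ∀ j, (S j).PosSemidef) (hA : IsUnit A.det) (hQ : Q.PosDef)
    {P : N → Matrix n n ℝ} (hP : ∀ j, (P j).PosDef) (i : N) :
    lle Q (Phi A Q L S P i) := by
  have hZ := Zm_posDef hLnonneg hLrow hS hP i
  have : Phi A Q L S P i - Q = A * (Zm L S P i)⁻¹ * Aᵀ := by
    rw [Phi, add_sub_cancel_right]
  rw [lle, this]
  exact (posDef_congr hZ.inv hA).posSemidef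

lemma Phi_mono (hLnonneg : ∀ i j, 0 ≤ L i j) (hLrow : ∀ i, ∑ j, L i j = 1)
    (hS : ∀ j, (S j).PosSemidef)
    {P P' : N → Matrix n n ℝ} (hP : ∀ j, (P j).PosDef) (hP' : ∀ j, (P' j).PosDef)
    (h : ∀ j, lle (P j) (P' j)) (i : N) :
    lle (Phi A Q L S P i) (Phi A Q L S P' i) := by
  have hZZ : lle (Zm L S P' i) (Zm L S P i) := by
    apply lle_sum
    intro j _
    exact lle_add (lle_smul (hLnonneg i j) (lle_inv (hP j) (h j))) (lle_refl _)
  have hinv : lle (Zm L S P i)⁻¹ (Zm L S P' i)⁻¹ :=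
    lle_inv (Zm_posDef hLnonneg hLrow hS hP' i) hZZ
  have := lle_congr A hinv
  exact lle_add this (lle_refl Q)

lemma Zm_lle_W (hLnonneg : ∀ i j, 0 ≤ L i j) (hLrow : ∀ i, ∑ j, L i j = 1)
    (hS : ∀ j, (S j).PosSemidef) (hQ : Q.PosDef)
    {P : N → Matrix n n ℝ} (hP : ∀ j, (P j).PosDef) (hQP : ∀ j, lle Q (P j)) (i : N) :
    lle (Zm L S P i) (Q⁻¹ + ∑ j, S j) := by
  have h1 : lle (Zm L S P i) (∑ j, (L i j • Q⁻¹ + S j)) := by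
    apply lle_sum
    intro j _
    refine lle_add (lle_smul (hLnonneg i j) (lle_inv hQ (hQP j))) ?_
    -- L i j • S j ≼ S j
    have hle1 : L i j ≤ 1 := by
      rw [← hLrow i]
      exact Finset.single_le_sum (fun j' _ => hLnonneg i j') (Finset.mem_univ j)
    have : S j - L i j • S j = (1 - L i j) • S j := by
      rw [sub_smul, one_smul]
    rw [lle, this]
    exact psd_smul_s1 (hS j) (by linarith)
  have h2 : (∑ j, (L i j • Q⁻¹ + S j)) = Q⁻¹ + ∑ j, S j := by
    rw [Finset.sum_add_distrib, ← Finset.sum_smul, hLrow i, one_smul]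
  rwa [h2] at h1

end Coupled


section Key

variable {N : Type*} [Fintype N] [DecidableEq N]
variable {A Q : Matrix n n ℝ} {L : Matrix N N ℝ} {S : N → Matrix n n ℝ}

/-- The key one-step information inequality. -/
lemma key_step (hA : IsUnit A.det) (hQ : Q.PosDef)
    {P : N → Matrix n n ℝ} {i : N} (hZ : (Zm L S P i).PosDef)
    {c : ℝ} (hc0 : 0 ≤ c) (hQc : lle Q (c • (A * (Zm L S P i)⁻¹ * Aᵀ))) :
    lle ((1+c)⁻¹ • ((Aᵀ)⁻¹ * (Zm L S P i) * ((Aᵀ)⁻¹)ᵀ)) ((Phi A Q L S P i)⁻¹) := by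
  set Zi := Zm L S P i with hZi
  set X := A * Zi⁻¹ * Aᵀ with hX
  have hXpd : X.PosDef := posDef_congr hZ.inv hA
  have hXdet : IsUnit X.det := isUnit_iff_ne_zero.mpr hXpd.det_pos.ne'
  have h1 : lle (Phi A Q L S P i) ((1+c) • X) := by
    have : lle (X + Q) (X + c • X) := lle_add (lle_refl X) hQc
    have e : X + c • X = (1+c) • X := by rw [add_smul, one_smul]
    rw [e] at this
    exact this
  have hΦpd : (Phi A Q L S P i).PosDef := hXpd.add hQ
  have h2 := lle_inv hΦpd h1
  have hc1 : (1:ℝ) + c ≠ 0 := by linarith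
  have h3 : ((1+c) • X)⁻¹ = (1+c)⁻¹ • ((Aᵀ)⁻¹ * Zi * ((Aᵀ)⁻¹)ᵀ) := by
    rw [smul_inv_mat hc1 hXdet]
    congr 1
    -- X⁻¹ = (Aᵀ)⁻¹ * Zi * A⁻¹
    have hAt : ((Aᵀ)⁻¹)ᵀ = A⁻¹ := by
      rw [← Matrix.transpose_nonsing_inv, Matrix.transpose_transpose]
    rw [hX, Matrix.mul_inv_rev, Matrix.mul_inv_rev, Matrix.nonsing_inv_nonsing_inv _ (isUnit_iff_ne_zero.mpr hZ.det_pos.ne'),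
      hAt, Matrix.mul_assoc]
  rwa [h3] at h2

end Key

section Powers

variable {N : Type*} [Fintype N] [DecidableEq N] {L : Matrix N N ℝ}

lemma Lpow_nonneg (hLnonneg : ∀ i j, 0 ≤ L i j) : ∀ s i j, 0 ≤ (L ^ s) i j := by
  intro s
  induction s with
  | zero =>
    intro i j
    rcases eq_or_ne i j with rfl | hij
    · simp
    · simp [pow_zero, Matrix.one_apply_ne hij]
  | succ s ih =>
    intro i j
    rw [pow_succ, Matrix.mul_apply]
    exact Finset.sum_nonneg fun k _ => mul_nonneg (ih i k) (hLnonneg k j)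

lemma Lpow_row (hLrow : ∀ i, ∑ j, L i j = 1) : ∀ s i, ∑ j, (L ^ s) i j = 1 := by
  intro s
  induction s with
  | zero =>
    intro i
    simp [pow_zero, Matrix.one_apply, Finset.sum_ite_eq' Finset.univ i (fun _ => (1:ℝ))]
  | succ s ih =>
    intro i
    simp only [pow_succ, Matrix.mul_apply]
    rw [Finset.sum_comm]
    have : ∀ k, ∑ j, (L ^ s) i k * L k j = (L ^ s) i k := by
      intro k
      rw [← Finset.mul_sum, hLrow k, mul_one]
    simp only [this]
    exact ih i

lemma Lpow_pos (hLnonneg : ∀ i j, 0 ≤ L i j) (hLrow : ∀ i, ∑ j, L i j = 1)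
    {k0 : ℕ} (hk0 : ∀ i j, 0 < (L ^ k0) i j) :
    ∀ s, k0 ≤ s → ∀ i j, 0 < (L ^ s) i j := by
  intro s hs i j
  obtain ⟨m, rfl⟩ := Nat.exists_eq_add_of_le hs
  rw [add_comm, pow_add, Matrix.mul_apply]
  have hex : ∃ k, 0 < (L ^ m) i k := by
    by_contra h
    push_neg at h
    have hz : ∑ k, (L ^ m) i k = 0 :=
      Finset.sum_eq_zero fun k _ => le_antisymm (h k) (Lpow_nonneg hLnonneg m i k)
    rw [Lpow_row hLrow m i] at hz
    norm_num at hz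
  obtain ⟨k, hk⟩ := hex
  exact Finset.sum_pos' (fun k' _ => mul_nonneg (Lpow_nonneg hLnonneg m i k') (hk0 k' j).le)
    ⟨k, Finset.mem_univ k, mul_pos hk (hk0 k j)⟩

end Powers

section Hseq

variable {N : Type*} [Fintype N] [DecidableEq N]

/-- congruence of `S j` by `B^s` -/
noncomputable def Tm (B : Matrix n n ℝ) (S : N → Matrix n n ℝ) (s : ℕ) (j : N) :
    Matrix n n ℝ := B ^ s * S j * (B ^ s)ᵀ

noncomputable def Dm (B : Matrix n n ℝ) (L : Matrix N N ℝ) (S : N → Matrix n n ℝ)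
    (s : ℕ) (i : N) : Matrix n n ℝ := ∑ j, (L ^ s) i j • Tm B S s j

noncomputable def Hm (α : ℝ) (B : Matrix n n ℝ) (L : Matrix N N ℝ) (S : N → Matrix n n ℝ)
    (t : ℕ) (i : N) : Matrix n n ℝ := ∑ s ∈ Finset.Icc 1 t, α ^ s • Dm B L S s i

variable {B : Matrix n n ℝ} {L : Matrix N N ℝ} {S : N → Matrix n n ℝ} {α : ℝ}

lemma core_id (s : ℕ) (i : N) :
    B * (∑ j, L i j • Dm B L S s j) * Bᵀ = Dm B L S (s+1) i := by
  have h1 : ∑ j, L i j • Dm B L S s j = ∑ j', (L ^ (s+1)) i j' • Tm B S s j' := by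
    simp only [Dm, Finset.smul_sum, smul_smul]
    rw [Finset.sum_comm]
    refine Finset.sum_congr rfl fun j' _ => ?_
    rw [← Finset.sum_smul]
    congr 1
    rw [pow_succ', Matrix.mul_apply]
  rw [h1, Matrix.mul_sum, Matrix.sum_mul, Dm]
  refine Finset.sum_congr rfl fun j' _ => ?_
  rw [Matrix.mul_smul, Matrix.smul_mul]
  congr 1
  rw [Tm, Tm]
  have e : B * (B ^ s * S j' * (B ^ s)ᵀ) * Bᵀ = (B * B ^ s) * S j' * (B * B ^ s)ᵀ := by
    rw [Matrix.transpose_mul]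
    noncomm_ring
  rw [e, ← pow_succ']

lemma H_id (t : ℕ) (i : N) :
    Hm α B L S (t+1) i =
      α • (B * ((∑ j, L i j • Hm α B L S t j) + (∑ j, L i j • S j)) * Bᵀ) := by
  have hS1 : α • (B * (∑ j, L i j • S j) * Bᵀ) = α ^ 1 • Dm B L S 1 i := by
    simp only [Dm, Tm, pow_one, Matrix.mul_sum, Matrix.sum_mul, Finset.smul_sum,
      Matrix.mul_smul, Matrix.smul_mul, smul_smul]
  have hH1 : α • (B * (∑ j, L i j • Hm α B L S t j) * Bᵀ) =
      ∑ s ∈ Finset.Icc 1 t, α ^ (s+1) • Dm B L S (s+1) i := by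
    have e1 : ∑ j, L i j • Hm α B L S t j =
        ∑ s ∈ Finset.Icc 1 t, α ^ s • (∑ j, L i j • Dm B L S s j) := by
      have e0 : ∀ j, L i j • Hm α B L S t j
          = ∑ s ∈ Finset.Icc 1 t, α ^ s • (L i j • Dm B L S s j) := by
        intro j
        rw [Hm, Finset.smul_sum]
        exact Finset.sum_congr rfl fun s _ => smul_comm _ _ _
      simp only [e0, Finset.smul_sum]
      rw [Finset.sum_comm]
    rw [e1, Matrix.mul_sum, Matrix.sum_mul, Finset.smul_sum]
    refine Finset.sum_congr rfl fun s _ => ?_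
    rw [Matrix.mul_smul, Matrix.smul_mul, smul_smul, ← pow_succ', core_id]
  rw [Matrix.mul_add, Matrix.add_mul, smul_add, hS1, hH1, Hm]
  have hsplit : Finset.Icc 1 (t+1) = insert 1 (Finset.Icc 2 (t+1)) := by
    ext a
    simp only [Finset.mem_Icc, Finset.mem_insert]
    omega
  rw [hsplit, Finset.sum_insert (by simp [Finset.mem_Icc]), add_comm]
  congr 1
  have hmap : Finset.Icc 2 (t+1) = Finset.map (addRightEmbedding 1) (Finset.Icc 1 t) := by
    have h2 : (2:ℕ) = 1 + 1 := by omega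
    rw [h2]
    exact (Finset.map_add_right_Icc 1 t 1).symm
  rw [hmap, Finset.sum_map]
  refine Finset.sum_congr rfl fun s _ => ?_
  simp [addRightEmbedding]

end Hseq


section QfSums

lemma qsum {ι : Type*} (s : Finset ι) (f : ι → Matrix n n ℝ) (x : n → ℝ) :
    x ⬝ᵥ ((∑ i ∈ s, f i) *ᵥ x) = ∑ i ∈ s, x ⬝ᵥ (f i *ᵥ x) := by
  classical
  induction s using Finset.induction_on with
  | empty => simp
  | insert _ _ hni ih =>
    rename_i a s
    rw [Finset.sum_insert hni, Finset.sum_insert hni, Matrix.add_mulVec, dotProduct_add, ih]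

lemma qsmul (c : ℝ) (M : Matrix n n ℝ) (x : n → ℝ) :
    x ⬝ᵥ ((c • M) *ᵥ x) = c * (x ⬝ᵥ (M *ᵥ x)) := by
  rw [Matrix.smul_mulVec, dotProduct_smul, smul_eq_mul]

end QfSums

section HPD

variable {N : ℕ} {n' : ℕ}

/-- positive definiteness of the accumulated information lower bound -/
lemma Hm_posDef {n N : ℕ} (hn : 0 < n)
    {A : Matrix (Fin n) (Fin n) ℝ} (hA : IsUnit A.det)
    {m : Fin N → ℕ} {C : ∀ i : Fin N, Matrix (Fin (m i)) (Fin n) ℝ}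
    {R : ∀ i : Fin N, Matrix (Fin (m i)) (Fin (m i)) ℝ} (hR : ∀ i, (R i).PosDef)
    (hObs : (∑ k ∈ Finset.range n, (A ^ k)ᵀ * (∑ i, (C i)ᵀ * C i) * A ^ k).PosDef)
    {L : Matrix (Fin N) (Fin N) ℝ} (hLnonneg : ∀ i j, 0 ≤ L i j)
    (hLrow : ∀ i, ∑ j, L i j = 1)
    {k0 : ℕ} (hk0pos : 0 < k0) (hk0 : ∀ i j, 0 < (L ^ k0) i j)
    {α : ℝ} (hα : 0 < α) (i : Fin N) :
    (Hm α (Aᵀ)⁻¹ L (fun j => (C j)ᵀ * (R j)⁻¹ * C j) (k0 + (n-1)) i).PosDef := by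
  set B : Matrix (Fin n) (Fin n) ℝ := (Aᵀ)⁻¹ with hB
  set S : Fin N → Matrix (Fin n) (Fin n) ℝ := fun j => (C j)ᵀ * (R j)⁻¹ * C j with hSdef
  set t0 := k0 + (n-1) with ht0
  have hBt : Bᵀ = A⁻¹ := by
    rw [hB, ← Matrix.transpose_nonsing_inv, Matrix.transpose_transpose]
  have hS : ∀ j, (S j).PosSemidef := by
    intro j
    have := ((hR j).inv.posSemidef).conjTranspose_mul_mul_same (C j)
    rwa [ct_eq] at this
  have hTpsd : ∀ (s : ℕ) (j : Fin N), (Tm B S s j).PosSemidef := by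
    intro s j
    have := (hS j).mul_mul_conjTranspose_same (B ^ s)
    rwa [ct_eq] at this
  have hTnn : ∀ (s : ℕ) (j : Fin N) (x : Fin n → ℝ), 0 ≤ x ⬝ᵥ (Tm B S s j *ᵥ x) := by
    intro s j x
    have e : Tm B S s j = ((B ^ s)ᵀ)ᵀ * S j * ((B ^ s)ᵀ) := by
      rw [Tm, Matrix.transpose_transpose]
    rw [e, qf_congr']
    simpa using (hS j).dotProduct_mulVec_nonneg ((B ^ s)ᵀ *ᵥ x)
  -- Hermitian part
  have hherm : (Hm α B L S t0 i).PosSemidef := by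
    rw [Hm]
    exact posSemidef_sum _ _ fun s _ => psd_smul_s1
      (posSemidef_sum _ _ fun j _ => psd_smul_s1 (hTpsd s j) (Lpow_nonneg hLnonneg s i j))
      (pow_nonneg hα.le s)
  refine Matrix.PosDef.of_dotProduct_mulVec_pos hherm.1 ?_
  intro x hx
  simp only [star_trivial]
  -- the special vector z
  have hAp_det : ∀ p : ℕ, IsUnit (A ^ p).det := by
    intro p
    rw [Matrix.det_pow]
    exact hA.pow p
  set z : Fin n → ℝ := (A⁻¹ ^ t0) *ᵥ x with hz
  have hzx : (A ^ t0) *ᵥ z = x := by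
    rw [hz, Matrix.mulVec_mulVec, Matrix.inv_pow', Matrix.mul_nonsing_inv _ (hAp_det t0),
      Matrix.one_mulVec]
  have hzne : z ≠ 0 := by
    intro h0
    rw [h0, Matrix.mulVec_zero] at hzx
    exact hx hzx.symm
  have hGram := hObs.dotProduct_mulVec_pos hzne
  simp only [star_trivial] at hGram
  -- expand the Gramian quadratic form
  set w : ℕ → ∀ j : Fin N, Fin (m j) → ℝ := fun p j => C j *ᵥ (A ^ p *ᵥ z) with hw
  have hGexp : z ⬝ᵥ ((∑ p ∈ Finset.range n, (A ^ p)ᵀ * (∑ j, (C j)ᵀ * C j) * A ^ p) *ᵥ z)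
      = ∑ p ∈ Finset.range n, ∑ j, (w p j ⬝ᵥ w p j) := by
    rw [qsum]
    refine Finset.sum_congr rfl fun p _ => ?_
    rw [qf_congr', qsum]
    refine Finset.sum_congr rfl fun j _ => ?_
    rw [qf_CtC]
  rw [hGexp] at hGram
  -- find positive term
  have hex : ∃ p ∈ Finset.range n, ∃ j : Fin N, 0 < w p j ⬝ᵥ w p j := by
    by_contra h
    push_neg at h
    have : ∑ p ∈ Finset.range n, ∑ j, (w p j ⬝ᵥ w p j) ≤ 0 := by
      apply Finset.sum_nonpos
      intro p hp
      apply Finset.sum_nonpos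
      intro j _
      exact h p hp j
    linarith
  obtain ⟨p, hpmem, j, hwpos⟩ := hex
  have hp : p < n := Finset.mem_range.mp hpmem
  have hwne : w p j ≠ 0 := by
    intro h0
    rw [h0] at hwpos
    simp at hwpos
  set s := t0 - p with hs
  have hs1 : 1 ≤ s := by omega
  have hsk0 : k0 ≤ s := by omega
  have hst0 : s ≤ t0 := by omega
  have hps : p + s = t0 := by omega
  -- A^p *ᵥ z = A⁻¹^s *ᵥ x
  have hy : A ^ p *ᵥ z = A⁻¹ ^ s *ᵥ x := by
    rw [hz, Matrix.mulVec_mulVec]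
    congr 1
    have : A⁻¹ ^ t0 = A⁻¹ ^ p * A⁻¹ ^ s := by rw [← pow_add, hps]
    rw [this, ← Matrix.mul_assoc, Matrix.inv_pow', Matrix.mul_nonsing_inv _ (hAp_det p),
      Matrix.one_mul]
  -- the (s,j) term of Hm's quadratic form is positive
  have hterm : 0 < x ⬝ᵥ (Tm B S s j *ᵥ x) := by
    have e : Tm B S s j = ((B ^ s)ᵀ)ᵀ * S j * ((B ^ s)ᵀ) := by
      rw [Tm, Matrix.transpose_transpose]
    have eB : (B ^ s)ᵀ = A⁻¹ ^ s := by
      rw [Matrix.transpose_pow, hBt]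
    rw [e, qf_congr', eB]
    have eS : S j = (C j)ᵀ * (R j)⁻¹ * (C j) := rfl
    rw [eS, qf_congr']
    have : C j *ᵥ (A⁻¹ ^ s *ᵥ x) = w p j := by rw [← hy, hw]
    rw [this]
    have := (hR j).inv.dotProduct_mulVec_pos hwne
    simpa using this
  -- assemble positivity of the whole sum
  have hqf : x ⬝ᵥ (Hm α B L S t0 i *ᵥ x)
      = ∑ s' ∈ Finset.Icc 1 t0, α ^ s' * ∑ j', (L ^ s') i j' * (x ⬝ᵥ (Tm B S s' j' *ᵥ x)) := by
    rw [Hm, qsum]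
    refine Finset.sum_congr rfl fun s' _ => ?_
    rw [qsmul, Dm, qsum]
    refine congrArg _ ?_
    refine Finset.sum_congr rfl fun j' _ => ?_
    rw [qsmul]
  rw [hqf]
  apply Finset.sum_pos'
  · intro s' _
    apply mul_nonneg (pow_nonneg hα.le s')
    exact Finset.sum_nonneg fun j' _ =>
      mul_nonneg (Lpow_nonneg hLnonneg s' i j') (hTnn s' j' x)
  · refine ⟨s, Finset.mem_Icc.mpr ⟨hs1, hst0⟩, ?_⟩
    apply mul_pos (pow_pos hα s)
    apply Finset.sum_pos'
    · intro j' _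
      exact mul_nonneg (Lpow_nonneg hLnonneg s i j') (hTnn s j' x)
    · exact ⟨j, Finset.mem_univ j,
        mul_pos (Lpow_pos hLnonneg hLrow hk0 s hsk0 i j) hterm⟩

end HPD

end HCRE

open HCRE

/-- For sufficiently small positive definite initial matrices
(below ε·I), the HCRE iterates are monotone nondecreasing in the Loewner order
and converge entrywise to a positive definite matrix. -/
theorem hcre_iterates_monotone_of_small_init
    (n N : ℕ) (hn : 0 < n) (hN : 0 < N)
    (m : Fin N → ℕ) (hm : ∀ i, 0 < m i)
    (A : Matrix (Fin n) (Fin n) ℝ) (hA : IsUnit A.det)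
    (C : ∀ i : Fin N, Matrix (Fin (m i)) (Fin n) ℝ)
    (hObs : (∑ k ∈ Finset.range n, (A ^ k)ᵀ * (∑ i, (C i)ᵀ * C i) * A ^ k).PosDef)
    (Q : Matrix (Fin n) (Fin n) ℝ) (hQ : Q.PosDef)
    (R : ∀ i : Fin N, Matrix (Fin (m i)) (Fin (m i)) ℝ) (hR : ∀ i, (R i).PosDef)
    (L : Matrix (Fin N) (Fin N) ℝ)
    (hLnonneg : ∀ i j, 0 ≤ L i j) (hLrow : ∀ i, ∑ j, L i j = 1)
    (hLprim : ∃ k : ℕ, 0 < k ∧ ∀ i j, 0 < (L ^ k) i j) :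
    ∃ ε : ℝ, 0 < ε ∧
      ∀ (P0 : Fin N → Matrix (Fin n) (Fin n) ℝ),
        (∀ i, (P0 i).PosDef) →
        (∀ i, (ε • (1 : Matrix (Fin n) (Fin n) ℝ) - P0 i).PosSemidef) →
        ∀ (Pseq : ℕ → Fin N → Matrix (Fin n) (Fin n) ℝ),
          Pseq 0 = P0 →
          (∀ k i, Pseq (k + 1) i =
            A * (∑ j, (L i j • (Pseq k j)⁻¹ + L i j • ((C j)ᵀ * (R j)⁻¹ * C j)))⁻¹ * Aᵀ + Q) →
          (∀ i : Fin N, ∀ k : ℕ, (Pseq (k + 1) i - Pseq k i).PosSemidef) ∧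
          (∀ i : Fin N, ∃ Plim : Matrix (Fin n) (Fin n) ℝ, Plim.PosDef ∧
            Tendsto (fun k => Pseq k i) atTop (nhds Plim)) := by
  classical
  obtain ⟨k0, hk0pos, hk0⟩ := hLprim
  set S : Fin N → Matrix (Fin n) (Fin n) ℝ := fun j => (C j)ᵀ * (R j)⁻¹ * C j with hSdef
  have hS : ∀ j, (S j).PosSemidef := by
    intro j
    have := ((hR j).inv.posSemidef).conjTranspose_mul_mul_same (C j)
    rwa [ct_eq] at this
  obtain ⟨ε, hεpos, hεQ⟩ := exists_lb hQ
  refine ⟨ε, hεpos, ?_⟩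
  intro P0 hP0 hP0small Pseq hP0eq hPrec
  have hrec : ∀ k i, Pseq (k+1) i = Phi A Q L S (Pseq k) i := by
    intro k i
    rw [hPrec k i]
    rfl
  have hPD : ∀ k i, (Pseq k i).PosDef := by
    intro k
    induction k with
    | zero => intro i; rw [hP0eq]; exact hP0 i
    | succ k ih =>
      intro i
      rw [hrec k i]
      exact Phi_posDef hLnonneg hLrow hS hA hQ ih i
  have hQle : ∀ k i, lle Q (Pseq (k+1) i) := by
    intro k i
    rw [hrec k i]
    exact lle_Q_Phi hLnonneg hLrow hS hA hQ (fun j => hPD k j) i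
  have hmono : ∀ k, ∀ i, lle (Pseq k i) (Pseq (k+1) i) := by
    intro k
    induction k with
    | zero =>
      intro i
      rw [hP0eq]
      exact lle_trans (hP0small i) (lle_trans hεQ (hQle 0 i))
    | succ k ih =>
      intro i
      rw [hrec k i, hrec (k+1) i]
      exact Phi_mono hLnonneg hLrow hS (fun j => hPD k j) (fun j => hPD (k+1) j)
        (fun j => ih j) i
  -- constants for the information lower bound
  set W : Matrix (Fin n) (Fin n) ℝ := Q⁻¹ + ∑ j, S j with hWdef
  have hW : W.PosDef := hQ.inv.add_posSemidef (posSemidef_sum _ _ fun j _ => hS j)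
  set V : Matrix (Fin n) (Fin n) ℝ := A * W⁻¹ * Aᵀ with hVdef
  have hV : V.PosDef := posDef_congr hW.inv hA
  obtain ⟨cQ, hcQpos, hcQ⟩ := exists_ub hQ.isHermitian
  obtain ⟨εV, hεVpos, hεV⟩ := exists_lb hV
  set c : ℝ := cQ / εV with hcdef
  have hc0 : 0 ≤ c := div_nonneg hcQpos.le hεVpos.le
  have hQcV : lle Q (c • V) := by
    refine lle_trans hcQ ?_
    rw [lle]
    have e : c • V - cQ • (1 : Matrix (Fin n) (Fin n) ℝ) = c • (V - εV • 1) := by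
      rw [smul_sub, smul_smul, hcdef, div_mul_cancel₀ _ hεVpos.ne']
    rw [e]
    exact psd_smul_s1 hεV hc0
  have hQc : ∀ (P : Fin N → Matrix (Fin n) (Fin n) ℝ), (∀ j, (P j).PosDef) →
      (∀ j, lle Q (P j)) → ∀ i, lle Q (c • (A * (Zm L S P i)⁻¹ * Aᵀ)) := by
    intro P hP hQP i
    have hZpd := Zm_posDef hLnonneg hLrow hS hP i
    have hZW := Zm_lle_W hLnonneg hLrow hS hQ hP hQP i
    have hWinv : lle W⁻¹ (Zm L S P i)⁻¹ := lle_inv hZpd hZW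
    have hVle : lle V (A * (Zm L S P i)⁻¹ * Aᵀ) := lle_congr A hWinv
    exact lle_trans hQcV (lle_smul hc0 hVle)
  set α : ℝ := (1 + c)⁻¹ with hαdef
  have hα : 0 < α := inv_pos.mpr (by linarith)
  set B : Matrix (Fin n) (Fin n) ℝ := (Aᵀ)⁻¹ with hBdef
  have hBt : Bᵀ = A⁻¹ := by
    rw [hBdef, ← Matrix.transpose_nonsing_inv, Matrix.transpose_transpose]
  -- the information lower bound by induction
  have claim : ∀ t k i, lle (Hm α B L S t i) ((Pseq (k+1+t) i)⁻¹) := by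
    intro t
    induction t with
    | zero =>
      intro k i
      have h0 : Hm α B L S 0 i = 0 := by
        rw [Hm]
        simp
      rw [h0]
      exact lle_zero ((hPD (k+1+0) i).inv.posSemidef)
    | succ t ih =>
      intro k i
      set Pc := Pseq (k+1+t) with hPc
      have hPcpd : ∀ j, (Pc j).PosDef := fun j => hPD (k+1+t) j
      have hPcQ : ∀ j, lle Q (Pc j) := by
        intro j
        have e : k + 1 + t = (k + t) + 1 := by omega
        rw [hPc, e]
        exact hQle (k+t) j
      have hZpd := Zm_posDef hLnonneg hLrow hS hPcpd i
      have hkey := key_step hA hQ hZpd hc0 (hQc Pc hPcpd hPcQ i)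
      have hchain : lle (Hm α B L S (t+1) i)
          ((1+c)⁻¹ • ((Aᵀ)⁻¹ * (Zm L S Pc i) * ((Aᵀ)⁻¹)ᵀ)) := by
        rw [H_id]
        apply lle_smul hα.le
        apply lle_congr
        have e : Zm L S Pc i = (∑ j, L i j • (Pc j)⁻¹) + (∑ j, L i j • S j) := by
          rw [Zm, Finset.sum_add_distrib]
        rw [e]
        refine lle_add ?_ (lle_refl _)
        apply lle_sum
        intro j _
        exact lle_smul (hLnonneg i j) (ih k j)
      have e2 : k + 1 + (t + 1) = (k + 1 + t) + 1 := by omega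
      rw [e2, hrec (k+1+t) i]
      exact lle_trans hchain hkey
  set t0 : ℕ := k0 + (n - 1) with ht0
  have hHpd : ∀ i, (Hm α B L S t0 i).PosDef := fun i =>
    Hm_posDef hn hA hR hObs hLnonneg hLrow hk0pos hk0 hα i
  have hbound : ∀ i k', t0 + 1 ≤ k' → lle (Pseq k' i) ((Hm α B L S t0 i)⁻¹) := by
    intro i k' hk'
    have e : k' - 1 - t0 + 1 + t0 = k' := by omega
    have h1 := claim t0 (k' - 1 - t0) i
    rw [e] at h1
    have h2 := lle_inv (hHpd i) h1
    rwa [Matrix.nonsing_inv_nonsing_inv _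
      (isUnit_iff_ne_zero.mpr (hPD k' i).det_pos.ne')] at h2
  refine ⟨fun i k => hmono k i, ?_⟩
  intro i
  obtain ⟨Plim, hPlimHerm, hqf, htend⟩ :=
    tendsto_of_monotone_bounded (fun k => Pseq k i) (fun k => (hPD k i).isHermitian)
      (fun k => hmono k i) ((Hm α B L S t0 i)⁻¹) (t0+1) (fun k hk => hbound i k hk)
  refine ⟨Plim, Matrix.PosDef.of_dotProduct_mulVec_pos hPlimHerm ?_, htend⟩
  intro x hx
  simp only [star_trivial]
  have hQx : 0 < x ⬝ᵥ (Q *ᵥ x) := by simpa using hQ.dotProduct_mulVec_pos hx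
  have hlow : ∀ k, 1 ≤ k → x ⬝ᵥ (Q *ᵥ x) ≤ x ⬝ᵥ (Pseq k i *ᵥ x) := by
    intro k hk
    have e : k - 1 + 1 = k := by omega
    have := hQle (k-1) i
    rw [e] at this
    exact qf_mono this x
  have hge : x ⬝ᵥ (Q *ᵥ x) ≤ x ⬝ᵥ (Plim *ᵥ x) :=
    ge_of_tendsto (hqf x) (eventually_atTop.mpr ⟨1, fun k hk => hlow k hk⟩)
  linarith
end

section
/- There exists at least one group of positive definite n×n matrices P_1, …, P_N solving the harmonic-coupled Riccati equations P_i = A (∑_{j=1}^N l_{ij} P_j^{-1} + l_{ij} C_jᵀ R_j^{-1} C_j)^{-1} Aᵀ + Q for all i ∈ {1, …, N}. -/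
open Matrix Filter Topology

set_option linter.unusedSectionVars false
set_option maxHeartbeats 4000000

namespace HCREaux
variable {d : Type*} [Fintype d] [DecidableEq d]

/-- Loewner order: `X ⪯ Y`. -/
def Lle (X Y : Matrix d d ℝ) : Prop := (Y - X).PosSemidef

lemma quad_nonneg {M : Matrix d d ℝ} (h : M.PosSemidef) (x : d → ℝ) :
    0 ≤ x ⬝ᵥ (M *ᵥ x) := by simpa using h.dotProduct_mulVec_nonneg x

lemma quad_pos {M : Matrix d d ℝ} (h : M.PosDef) {x : d → ℝ} (hx : x ≠ 0) :
    0 < x ⬝ᵥ (M *ᵥ x) := by simpa using h.dotProduct_mulVec_pos hx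

lemma posSemidef_of_quad {M : Matrix d d ℝ} (hsym : M.IsHermitian)
    (h : ∀ x : d → ℝ, 0 ≤ x ⬝ᵥ (M *ᵥ x)) : M.PosSemidef :=
  PosSemidef.of_dotProduct_mulVec_nonneg hsym fun x => by simpa using h x

lemma posDef_of_quad {M : Matrix d d ℝ} (hsym : M.IsHermitian)
    (h : ∀ x : d → ℝ, x ≠ 0 → 0 < x ⬝ᵥ (M *ᵥ x)) : M.PosDef :=
  PosDef.of_dotProduct_mulVec_pos hsym fun x hx => by simpa using h x hx

lemma psd_conj {M : Matrix d d ℝ} (h : M.PosSemidef) (B : Matrix d d ℝ) :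
    (B * M * Bᵀ).PosSemidef := by
  simpa [conjTranspose_eq_transpose_of_trivial] using h.mul_mul_conjTranspose_same B

lemma psd_smul {M : Matrix d d ℝ} (h : M.PosSemidef) {c : ℝ} (hc : 0 ≤ c) :
    (c • M).PosSemidef := by
  refine posSemidef_of_quad ?_ ?_
  · rw [Matrix.IsHermitian, Matrix.conjTranspose_smul, h.1.eq]; simp
  · intro x
    rw [Matrix.smul_mulVec, dotProduct_smul, smul_eq_mul]
    exact mul_nonneg hc (quad_nonneg h x)

lemma psd_sum {ι : Type*} (s : Finset ι) (f : ι → Matrix d d ℝ)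
    (h : ∀ i ∈ s, (f i).PosSemidef) : (∑ i ∈ s, f i).PosSemidef := by
  classical
  induction s using Finset.induction with
  | empty => simpa using Matrix.PosSemidef.zero
  | insert _ _ hni ih =>
    rw [Finset.sum_insert hni]
    exact (h _ (Finset.mem_insert_self _ _)).add
      (ih fun i hi => h i (Finset.mem_insert_of_mem hi))

lemma Lle.rfl {X : Matrix d d ℝ} : Lle X X := by
  simpa [Lle] using Matrix.PosSemidef.zero

lemma Lle.trans {X Y Z : Matrix d d ℝ} (h1 : Lle X Y) (h2 : Lle Y Z) : Lle X Z := by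
  have := Matrix.PosSemidef.add h2 h1
  simpa [Lle, sub_add_sub_cancel] using this

lemma Lle.add {X Y X' Y' : Matrix d d ℝ} (h : Lle X Y) (h' : Lle X' Y') :
    Lle (X + X') (Y + Y') := by
  have := Matrix.PosSemidef.add h h'
  simpa [Lle, add_sub_add_comm] using this

lemma Lle.smul {X Y : Matrix d d ℝ} (h : Lle X Y) {c : ℝ} (hc : 0 ≤ c) :
    Lle (c • X) (c • Y) := by
  have := psd_smul h hc
  simpa [Lle, smul_sub] using this

lemma Lle.conj {X Y : Matrix d d ℝ} (h : Lle X Y) (B : Matrix d d ℝ) :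
    Lle (B * X * Bᵀ) (B * Y * Bᵀ) := by
  have := psd_conj h B
  simpa [Lle, Matrix.mul_sub, Matrix.sub_mul] using this

lemma Lle.sum {ι : Type*} (s : Finset ι) (f g : ι → Matrix d d ℝ)
    (h : ∀ i ∈ s, Lle (f i) (g i)) : Lle (∑ i ∈ s, f i) (∑ i ∈ s, g i) := by
  have := psd_sum s (fun i => g i - f i) h
  simpa [Lle, Finset.sum_sub_distrib] using this

lemma posDef_of_lle {X Y : Matrix d d ℝ} (hX : X.PosDef) (h : Lle X Y) : Y.PosDef := by
  have := hX.add_posSemidef h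
  simpa using this

lemma det_isUnit {X : Matrix d d ℝ} (hX : X.PosDef) : IsUnit X.det :=
  isUnit_iff_ne_zero.2 hX.det_pos.ne'

/-- Inverse is antitone w.r.t. the Loewner order. -/
lemma inv_antitone {X Y : Matrix d d ℝ} (hX : X.PosDef) (hY : Y.PosDef)
    (h : Lle X Y) : Lle Y⁻¹ X⁻¹ := by
  haveI := hX.isUnit.invertible
  haveI := hY.isUnit.invertible
  haveI := hX.inv.isUnit.invertible
  have key : (fromBlocks Y (1 : Matrix d d ℝ) (1 : Matrix d d ℝ)ᴴ X⁻¹).PosSemidef := by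
    rw [PosDef.fromBlocks₂₂ _ _ hX.inv]
    have h2 : (X⁻¹)⁻¹ = X := Matrix.nonsing_inv_nonsing_inv _ (det_isUnit hX)
    simp only [h2, Matrix.mul_one, Matrix.one_mul, Matrix.conjTranspose_one]
    exact h
  rw [PosDef.fromBlocks₁₁ _ _ hY] at key
  simpa [Lle] using key

lemma quad_smul_one (c : ℝ) (x : d → ℝ) :
    x ⬝ᵥ ((c • (1 : Matrix d d ℝ)) *ᵥ x) = c * (x ⬝ᵥ x) := by
  rw [Matrix.smul_mulVec, dotProduct_smul, Matrix.one_mulVec, smul_eq_mul]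

lemma posDef_smul_one {c : ℝ} (hc : 0 < c) : (c • (1 : Matrix d d ℝ)).PosDef := by
  refine posDef_of_quad ?_ ?_
  · rw [Matrix.IsHermitian, Matrix.conjTranspose_smul]; simp
  · intro x hx
    rw [quad_smul_one]
    have h0 : x ⬝ᵥ x ≠ 0 := fun h => hx (dotProduct_self_eq_zero.mp h)
    have h1 : 0 ≤ x ⬝ᵥ x := Finset.sum_nonneg fun i _ => mul_self_nonneg (x i)
    have : 0 < x ⬝ᵥ x := lt_of_le_of_ne h1 (Ne.symm h0)
    positivity

lemma posDef_smul {M : Matrix d d ℝ} (hM : M.PosDef) {c : ℝ} (hc : 0 < c) :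
    (c • M).PosDef := by
  refine posDef_of_quad ?_ ?_
  · rw [Matrix.IsHermitian, Matrix.conjTranspose_smul, hM.1.eq]; simp
  · intro x hx
    rw [Matrix.smul_mulVec, dotProduct_smul, smul_eq_mul]
    exact mul_pos hc (quad_pos hM hx)

lemma smul_one_inv {c : ℝ} (hc : c ≠ 0) :
    (c • (1 : Matrix d d ℝ))⁻¹ = c⁻¹ • (1 : Matrix d d ℝ) := by
  apply Matrix.inv_eq_right_inv
  rw [Matrix.smul_mul, Matrix.mul_smul, Matrix.one_mul, smul_smul, mul_inv_cancel₀ hc, one_smul]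

lemma smul_inv_matrix {M : Matrix d d ℝ} (hM : IsUnit M.det) {c : ℝ} (hc : c ≠ 0) :
    (c • M)⁻¹ = c⁻¹ • M⁻¹ := by
  apply Matrix.inv_eq_right_inv
  rw [Matrix.smul_mul, Matrix.mul_smul, smul_smul, mul_inv_cancel₀ hc, one_smul,
    Matrix.mul_nonsing_inv _ hM]

/-- Every symmetric matrix is bounded above by a positive multiple of the identity. -/
lemma exists_smul_one_lle (X : Matrix d d ℝ) (hX : X.IsHermitian) :
    ∃ c : ℝ, 0 < c ∧ Lle X (c • (1 : Matrix d d ℝ)) := by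
  classical
  set c : ℝ := (∑ a : d, ∑ b : d, |X a b|) + 1 with hc
  have hcpos : 0 < c := by positivity
  refine ⟨c, hcpos, ?_⟩
  refine posSemidef_of_quad ?_ ?_
  · apply Matrix.IsHermitian.sub _ hX
    rw [Matrix.IsHermitian, Matrix.conjTranspose_smul]; simp
  · intro x
    have hxx : 0 ≤ x ⬝ᵥ x := Finset.sum_nonneg fun i _ => mul_self_nonneg (x i)
    have hsq : ∀ a : d, x a * x a ≤ x ⬝ᵥ x := by
      intro a
      exact Finset.single_le_sum (f := fun i => x i * x i)
        (fun i _ => mul_self_nonneg _) (Finset.mem_univ a)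
    have hquad : x ⬝ᵥ (X *ᵥ x) = ∑ a : d, ∑ b : d, x a * (X a b * x b) := by
      simp [dotProduct, Matrix.mulVec, Finset.mul_sum]
    have hbound : x ⬝ᵥ (X *ᵥ x) ≤ (∑ a : d, ∑ b : d, |X a b|) * (x ⬝ᵥ x) := by
      rw [hquad, Finset.sum_mul]
      refine Finset.sum_le_sum fun a _ => ?_
      rw [Finset.sum_mul]
      refine Finset.sum_le_sum fun b _ => ?_
      have h1 : x a * (X a b * x b) ≤ |x a * (X a b * x b)| := le_abs_self _
      have h2 : |x a * (X a b * x b)| = |X a b| * |x a * x b| := by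
        rw [abs_mul, abs_mul, abs_mul]; ring
      have h3 : |x a * x b| ≤ x ⬝ᵥ x := by
        rw [abs_mul]
        nlinarith [hsq a, hsq b, sq_nonneg (|x a| - |x b|), sq_abs (x a), sq_abs (x b),
          abs_nonneg (x a), abs_nonneg (x b)]
      calc x a * (X a b * x b) ≤ |X a b| * |x a * x b| := by rw [← h2]; exact h1
        _ ≤ |X a b| * (x ⬝ᵥ x) := mul_le_mul_of_nonneg_left h3 (abs_nonneg _)
    have : x ⬝ᵥ ((c • (1 : Matrix d d ℝ) - X) *ᵥ x)
        = c * (x ⬝ᵥ x) - x ⬝ᵥ (X *ᵥ x) := by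
      rw [Matrix.sub_mulVec, dotProduct_sub, quad_smul_one]
    rw [this, hc]
    nlinarith [hbound, hxx]

/-- Every positive definite matrix is bounded below by a positive multiple of the identity. -/
lemma exists_one_lle_smul {X : Matrix d d ℝ} (hX : X.PosDef) :
    ∃ ε : ℝ, 0 < ε ∧ Lle (ε • (1 : Matrix d d ℝ)) X := by
  obtain ⟨c, hc, hle⟩ := exists_smul_one_lle X⁻¹ hX.inv.isHermitian
  have h2 := inv_antitone hX.inv (posDef_smul_one hc) hle
  rw [smul_one_inv hc.ne', Matrix.nonsing_inv_nonsing_inv _ (det_isUnit hX)] at h2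
  exact ⟨c⁻¹, by positivity, h2⟩

lemma quad_conj (M B : Matrix d d ℝ) (x : d → ℝ) :
    x ⬝ᵥ ((B * M * Bᵀ) *ᵥ x) = (Bᵀ *ᵥ x) ⬝ᵥ (M *ᵥ (Bᵀ *ᵥ x)) := by
  rw [← Matrix.mulVec_mulVec, ← Matrix.mulVec_mulVec, Matrix.dotProduct_mulVec (A := B),
    ← Matrix.transpose_transpose B, Matrix.vecMul_transpose, Matrix.transpose_transpose]

lemma quad_conj' {e : Type*} [Fintype e] (M : Matrix e e ℝ) (B : Matrix e d ℝ) (x : d → ℝ) :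
    x ⬝ᵥ ((Bᵀ * M * B) *ᵥ x) = (B *ᵥ x) ⬝ᵥ (M *ᵥ (B *ᵥ x)) := by
  rw [← Matrix.mulVec_mulVec, ← Matrix.mulVec_mulVec, Matrix.dotProduct_mulVec (A := Bᵀ),
    Matrix.vecMul_transpose]

lemma quad_mul_self {e : Type*} [Fintype e] (B : Matrix e d ℝ) (x : d → ℝ) :
    x ⬝ᵥ ((Bᵀ * B) *ᵥ x) = (B *ᵥ x) ⬝ᵥ (B *ᵥ x) := by
  rw [← Matrix.mulVec_mulVec, Matrix.dotProduct_mulVec (A := Bᵀ), Matrix.vecMul_transpose]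

lemma mulVec_ne_zero {B : Matrix d d ℝ} (hB : IsUnit B.det) {x : d → ℝ} (hx : x ≠ 0) :
    B *ᵥ x ≠ 0 := by
  intro h
  apply hx
  have : B⁻¹ *ᵥ (B *ᵥ x) = x := by
    rw [Matrix.mulVec_mulVec, Matrix.nonsing_inv_mul _ hB, Matrix.one_mulVec]
  rw [← this, h, Matrix.mulVec_zero]

lemma isHermitian_conj {M : Matrix d d ℝ} (hM : M.IsHermitian) (B : Matrix d d ℝ) :
    (B * M * Bᵀ).IsHermitian := by
  have hMt : Mᵀ = M := by
    rw [← Matrix.conjTranspose_eq_transpose_of_trivial]; exact hM.eq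
  rw [Matrix.IsHermitian, Matrix.conjTranspose_eq_transpose_of_trivial,
    Matrix.transpose_mul, Matrix.transpose_mul, Matrix.transpose_transpose, hMt,
    Matrix.mul_assoc]

lemma posDef_conj {M : Matrix d d ℝ} (hM : M.PosDef) {B : Matrix d d ℝ}
    (hB : IsUnit B.det) : (B * M * Bᵀ).PosDef := by
  refine posDef_of_quad (isHermitian_conj hM.isHermitian B) fun x hx => ?_
  rw [quad_conj]
  exact quad_pos hM (mulVec_ne_zero (by rwa [Matrix.det_transpose]) hx)

/-- Convergence of matrix inverse. -/
lemma tendsto_matrix_inv {ι : Type*} {l : Filter ι} {f : ι → Matrix d d ℝ}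
    {M : Matrix d d ℝ} (h : Tendsto f l (𝓝 M)) (hM : IsUnit M.det) :
    Tendsto (fun x => (f x)⁻¹) l (𝓝 M⁻¹) := by
  have hc : ContinuousAt Inv.inv M := by
    apply continuousAt_matrix_inv
    have hdet : M.det ≠ 0 := by simpa [isUnit_iff_ne_zero] using hM
    have : ContinuousAt (fun x : ℝ => x⁻¹) M.det := continuousAt_inv₀ hdet
    simpa [Ring.inverse_eq_inv'] using this
  exact (hc.tendsto).comp h

lemma quad_sum {ι : Type*} (s : Finset ι) (f : ι → Matrix d d ℝ) (x : d → ℝ) :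
    x ⬝ᵥ ((∑ i ∈ s, f i) *ᵥ x) = ∑ i ∈ s, x ⬝ᵥ (f i *ᵥ x) := by
  classical
  induction s using Finset.induction with
  | empty => simp
  | insert _ _ hni ih =>
    rw [Finset.sum_insert hni, Finset.sum_insert hni, Matrix.add_mulVec, dotProduct_add, ih]

lemma quad_smul (c : ℝ) (M : Matrix d d ℝ) (x : d → ℝ) :
    x ⬝ᵥ ((c • M) *ᵥ x) = c * (x ⬝ᵥ (M *ᵥ x)) := by
  rw [Matrix.smul_mulVec, dotProduct_smul, smul_eq_mul]

lemma lle_quad {X Y : Matrix d d ℝ} (h : Lle X Y) (x : d → ℝ) :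
    x ⬝ᵥ (X *ᵥ x) ≤ x ⬝ᵥ (Y *ᵥ x) := by
  have := quad_nonneg h x
  rw [Matrix.sub_mulVec, dotProduct_sub] at this
  linarith

lemma continuous_quad (x : d → ℝ) :
    Continuous fun M : Matrix d d ℝ => x ⬝ᵥ (M *ᵥ x) := by
  have heq : (fun M : Matrix d d ℝ => x ⬝ᵥ (M *ᵥ x))
      = fun M => ∑ a : d, x a * ∑ b : d, M a b * x b := by
    funext M; simp [dotProduct, Matrix.mulVec]
  rw [heq]
  refine continuous_finset_sum _ fun a _ => Continuous.mul continuous_const ?_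
  refine continuous_finset_sum _ fun b _ => Continuous.mul ?_ continuous_const
  exact (continuous_apply b).comp (continuous_apply a)

end HCREaux

open HCREaux in
/-- Existence of at least one group of positive definite solutions
to the harmonic-coupled Riccati equations. -/
theorem hcre_exists_solution
    (n N : ℕ) (hn : 0 < n) (hN : 0 < N)
    (m : Fin N → ℕ) (hm : ∀ i, 0 < m i)
    (A : Matrix (Fin n) (Fin n) ℝ) (hA : IsUnit A.det)
    (C : ∀ i : Fin N, Matrix (Fin (m i)) (Fin n) ℝ)
    (hObs : (∑ k ∈ Finset.range n, (A ^ k)ᵀ * (∑ i, (C i)ᵀ * C i) * A ^ k).PosDef)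
    (Q : Matrix (Fin n) (Fin n) ℝ) (hQ : Q.PosDef)
    (R : ∀ i : Fin N, Matrix (Fin (m i)) (Fin (m i)) ℝ) (hR : ∀ i, (R i).PosDef)
    (L : Matrix (Fin N) (Fin N) ℝ)
    (hLnonneg : ∀ i j, 0 ≤ L i j) (hLrow : ∀ i, ∑ j, L i j = 1)
    (hLprim : ∃ k : ℕ, 0 < k ∧ ∀ i j, 0 < (L ^ k) i j) :
    ∃ P : Fin N → Matrix (Fin n) (Fin n) ℝ,
      (∀ i, (P i).PosDef) ∧
      (∀ i, P i =
        A * (∑ j, (L i j • (P j)⁻¹ + L i j • ((C j)ᵀ * (R j)⁻¹ * C j)))⁻¹ * Aᵀ + Q) := by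
  classical
  obtain ⟨k, hkpos, hLk⟩ := hLprim
  -- the measurement information matrices
  set S : Fin N → Matrix (Fin n) (Fin n) ℝ := fun j => (C j)ᵀ * (R j)⁻¹ * (C j) with hSdef
  have hSpsd : ∀ j, (S j).PosSemidef := by
    intro j
    have := (hR j).inv.posSemidef.mul_mul_conjTranspose_same (C j)ᵀ
    simpa [hSdef, conjTranspose_eq_transpose_of_trivial] using this
  -- basic facts about the weights
  have hLle_one : ∀ i j, L i j ≤ 1 := by
    intro i j
    calc L i j ≤ ∑ r, L i r :=
          Finset.single_le_sum (f := fun r => L i r) (fun r _ => hLnonneg i r)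
            (Finset.mem_univ j)
      _ = 1 := hLrow i
  have hLrowpos : ∀ i, ∃ j, 0 < L i j := by
    intro i
    by_contra hcon
    push_neg at hcon
    have : (∑ j, L i j) ≤ 0 := Finset.sum_nonpos fun j _ => hcon j
    rw [hLrow i] at this; linarith
  have hLpow_nonneg : ∀ (w : ℕ) (i j : Fin N), 0 ≤ (L ^ w) i j := by
    intro w
    induction w with
    | zero => intro i j; by_cases h : i = j <;> simp [Matrix.one_apply, h]
    | succ w ih =>
      intro i j
      rw [pow_succ', Matrix.mul_apply]
      exact Finset.sum_nonneg fun r _ => mul_nonneg (hLnonneg i r) (ih r j)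
  have hLpow_pos : ∀ w, k ≤ w → ∀ i j, 0 < (L ^ w) i j := by
    intro w hw
    induction w, hw using Nat.le_induction with
    | base => exact hLk
    | succ w hw ih =>
      intro i j
      rw [pow_succ', Matrix.mul_apply]
      obtain ⟨r0, hr0⟩ := hLrowpos i
      exact Finset.sum_pos' (fun r _ => mul_nonneg (hLnonneg i r) (ih r j).le)
        ⟨r0, Finset.mem_univ r0, mul_pos hr0 (ih r0 j)⟩
  -- the affine mean operator and the Riccati operator
  set Hm : (Fin N → Matrix (Fin n) (Fin n) ℝ) → Fin N → Matrix (Fin n) (Fin n) ℝ :=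
    fun W i => ∑ j, (L i j • W j + L i j • S j) with hHdef
  set Fm : (Fin N → Matrix (Fin n) (Fin n) ℝ) → Fin N → Matrix (Fin n) (Fin n) ℝ :=
    fun P i => A * (Hm (fun j => (P j)⁻¹) i)⁻¹ * Aᵀ + Q with hFdef
  have hH_psd : ∀ W, (∀ j, (W j).PosSemidef) → ∀ i, (Hm W i).PosSemidef := by
    intro W hW i
    exact psd_sum _ _ fun j _ =>
      (psd_smul (hW j) (hLnonneg i j)).add (psd_smul (hSpsd j) (hLnonneg i j))
  have hH_posdef : ∀ W, (∀ j, (W j).PosDef) → ∀ i, (Hm W i).PosDef := by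
    intro W hW i
    obtain ⟨j0, hj0⟩ := hLrowpos i
    have hsplit : Hm W i = (L i j0 • W j0 + L i j0 • S j0)
        + ∑ j ∈ Finset.univ.erase j0, (L i j • W j + L i j • S j) :=
      (Finset.add_sum_erase Finset.univ _ (Finset.mem_univ j0)).symm
    rw [hsplit]
    have h1 : (L i j0 • W j0 + L i j0 • S j0).PosDef :=
      (posDef_smul (hW j0) hj0).add_posSemidef (psd_smul (hSpsd j0) (hLnonneg i j0))
    exact h1.add_posSemidef (psd_sum _ _ fun j _ =>
      (psd_smul (hW j).posSemidef (hLnonneg i j)).add (psd_smul (hSpsd j) (hLnonneg i j)))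
  have hH_mono : ∀ W W' i, (∀ j, Lle (W j) (W' j)) → Lle (Hm W i) (Hm W' i) := by
    intro W W' i h
    exact Lle.sum _ _ _ fun j _ => Lle.add (Lle.smul (h j) (hLnonneg i j)) Lle.rfl
  have hG_posdef : ∀ (P : Fin N → Matrix (Fin n) (Fin n) ℝ), (∀ j, (P j).PosDef) →
      ∀ i, (Hm (fun j => (P j)⁻¹) i).PosDef := by
    intro P hP
    exact hH_posdef _ fun j => (hP j).inv
  have hF_posdef : ∀ P, (∀ j, (P j).PosDef) → ∀ i, (Fm P i).PosDef := by
    intro P hP i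
    exact (posDef_conj (hG_posdef P hP i).inv hA).add hQ
  have hF_geQ : ∀ P, (∀ j, (P j).PosDef) → ∀ i, Lle Q (Fm P i) := by
    intro P hP i
    have : Fm P i - Q = A * (Hm (fun j => (P j)⁻¹) i)⁻¹ * Aᵀ := by
      simp only [hFdef]
      exact add_sub_cancel_right _ _
    rw [Lle, this]
    exact (posDef_conj (hG_posdef P hP i).inv hA).posSemidef
  have hF_mono : ∀ P P', (∀ j, (P j).PosDef) → (∀ j, (P' j).PosDef) →
      (∀ j, Lle (P j) (P' j)) → ∀ i, Lle (Fm P i) (Fm P' i) := by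
    intro P P' hP hP' h i
    have h1 : ∀ j, Lle ((P' j)⁻¹) ((P j)⁻¹) := fun j => inv_antitone (hP j) (hP' j) (h j)
    have h2 : Lle (Hm (fun j => (P' j)⁻¹) i) (Hm (fun j => (P j)⁻¹) i) := hH_mono _ _ _ h1
    have h3 := inv_antitone (hG_posdef P' hP' i) (hG_posdef P hP i) h2
    exact Lle.add (h3.conj A) (Lle.rfl (X := Q))
  -- the iteration sequence
  set seq : ℕ → Fin N → Matrix (Fin n) (Fin n) ℝ := fun t => Fm^[t] (fun _ => Q)
    with hseqdef
  have hseqsucc : ∀ t, seq (t + 1) = Fm (seq t) := by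
    intro t; rw [hseqdef]; exact Function.iterate_succ_apply' _ _ _
  have hseq_pd : ∀ t j, (seq t j).PosDef := by
    intro t
    induction t with
    | zero => intro j; exact hQ
    | succ t ih => rw [hseqsucc]; exact hF_posdef _ ih
  have hseq_geQ : ∀ t i, Lle Q (seq t i) := by
    intro t i
    cases t with
    | zero => exact Lle.rfl
    | succ t => rw [hseqsucc]; exact hF_geQ _ (hseq_pd t) i
  have hseq_mono : ∀ t i, Lle (seq t i) (seq (t + 1) i) := by
    intro t
    induction t with
    | zero => intro i; rw [hseqsucc]; exact hF_geQ _ (hseq_pd 0) i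
    | succ t ih =>
      intro i
      have h := hF_mono (seq t) (seq (t + 1)) (hseq_pd t) (hseq_pd (t + 1)) ih i
      rw [hseqsucc (t + 1)]
      rw [← hseqsucc t] at h
      exact h
  have hseq_le : ∀ t t', t ≤ t' → ∀ i, Lle (seq t i) (seq t' i) := by
    intro t t' htt'
    induction t', htt' using Nat.le_induction with
    | base => intro i; exact Lle.rfl
    | succ t' htt' ih => intro i; exact (ih i).trans (hseq_mono t' i)
  -- ----- uniform bounds -----
  set Smax : Matrix (Fin n) (Fin n) ℝ := Q⁻¹ + ∑ j, S j with hSmaxdef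
  have hSmax_herm : Smax.IsHermitian :=
    hQ.inv.isHermitian.add (psd_sum Finset.univ _ fun j _ => hSpsd j).isHermitian
  obtain ⟨κ, hκpos, hκ⟩ := exists_smul_one_lle Smax hSmax_herm
  have hGleκ : ∀ t i, Lle (Hm (fun j => (seq t j)⁻¹) i) (κ • 1) := by
    intro t i
    have h1 : ∀ j, Lle ((seq t j)⁻¹) Q⁻¹ := fun j =>
      inv_antitone hQ (hseq_pd t j) (hseq_geQ t j)
    have h2 : Lle (Hm (fun j => (seq t j)⁻¹) i) (Hm (fun _ => Q⁻¹) i) := hH_mono _ _ _ h1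
    have h3 : Lle (Hm (fun _ => Q⁻¹) i) Smax := by
      have he : Hm (fun _ => Q⁻¹) i = Q⁻¹ + ∑ j, L i j • S j := by
        simp only [hHdef]
        rw [Finset.sum_add_distrib, ← Finset.sum_smul, hLrow i, one_smul]
      rw [he, hSmaxdef]
      refine Lle.add Lle.rfl (Lle.sum _ _ _ fun j _ => ?_)
      have hsub : S j - L i j • S j = (1 - L i j) • S j := by rw [sub_smul, one_smul]
      rw [Lle, hsub]
      exact psd_smul (hSpsd j) (by linarith [hLle_one i j])
    exact (h2.trans h3).trans hκ
  have hAAT : (A * Aᵀ).PosDef := by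
    have := posDef_conj (Matrix.PosDef.one (n := Fin n) (R := ℝ)) hA
    simpa using this
  obtain ⟨εA, hεA, hεAle⟩ := exists_one_lle_smul hAAT
  obtain ⟨cQ, hcQ, hcQle⟩ := exists_smul_one_lle Q hQ.isHermitian
  set c : ℝ := cQ * κ / εA with hcdef
  have hcpos : 0 < c := by rw [hcdef]; positivity
  set γ : ℝ := (1 + c)⁻¹ with hγdef
  have hγpos : 0 < γ := by rw [hγdef]; positivity
  set T : Matrix (Fin n) (Fin n) ℝ := Aᵀ⁻¹ with hTdef
  have hTt : Tᵀ = A⁻¹ := by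
    rw [hTdef, ← Matrix.transpose_nonsing_inv, Matrix.transpose_transpose]
  -- one-step lower bound on the inverses
  have hstep : ∀ t i,
      Lle (γ • (T * Hm (fun j => (seq t j)⁻¹) i * Tᵀ)) ((seq (t + 1) i)⁻¹) := by
    intro t i
    have hGi_pd : (Hm (fun j => (seq t j)⁻¹) i).PosDef := hG_posdef _ (hseq_pd t) i
    set Gi := Hm (fun j => (seq t j)⁻¹) i with hGidef
    set X := A * Gi⁻¹ * Aᵀ with hXdef
    have hX_pd : X.PosDef := posDef_conj hGi_pd.inv hA
    have hq1 : Lle ((κ⁻¹ * εA) • (1 : Matrix (Fin n) (Fin n) ℝ)) X := by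
      have h4 : Lle ((κ • (1 : Matrix (Fin n) (Fin n) ℝ))⁻¹) Gi⁻¹ :=
        inv_antitone hGi_pd (posDef_smul_one hκpos) (hGleκ t i)
      rw [smul_one_inv hκpos.ne'] at h4
      have h5 := h4.conj A
      have he : A * (κ⁻¹ • (1 : Matrix (Fin n) (Fin n) ℝ)) * Aᵀ = κ⁻¹ • (A * Aᵀ) := by
        rw [Matrix.mul_smul, Matrix.mul_one, Matrix.smul_mul]
      rw [he] at h5
      have h6 : Lle ((κ⁻¹ * εA) • (1 : Matrix (Fin n) (Fin n) ℝ)) (κ⁻¹ • (A * Aᵀ)) := by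
        have := hεAle.smul (le_of_lt (inv_pos.2 hκpos))
        rwa [smul_smul] at this
      exact h6.trans (h5.trans (by rw [hXdef]; exact Lle.rfl))
    have hQleX : Lle Q (c • X) := by
      have he : c • ((κ⁻¹ * εA) • (1 : Matrix (Fin n) (Fin n) ℝ)) = cQ • 1 := by
        rw [smul_smul, hcdef]
        congr 1
        field_simp
      have h7 := hq1.smul hcpos.le
      rw [he] at h7
      exact hcQle.trans h7
    have h8 : Lle (seq (t + 1) i) ((1 + c) • X) := by
      rw [hseqsucc]
      have he : Fm (seq t) i = X + Q := by simp only [hFdef, hXdef, hGidef]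
      rw [he, Lle]
      have hd : (1 + c) • X - (X + Q) = c • X - Q := by
        rw [add_smul, one_smul]; abel
      rw [hd]
      exact hQleX
    have h9 := inv_antitone (hseq_pd (t + 1) i) (posDef_smul hX_pd (by positivity)) h8
    rw [smul_inv_matrix (det_isUnit hX_pd) (by positivity : (0:ℝ) < 1 + c).ne'] at h9
    have hXinv : X⁻¹ = T * Gi * Tᵀ := by
      rw [hXdef, Matrix.mul_inv_rev, Matrix.mul_inv_rev,
        Matrix.nonsing_inv_nonsing_inv _ (det_isUnit hGi_pd), hTt, hTdef, Matrix.mul_assoc]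
    rw [hXinv, ← hγdef] at h9
    exact h9
  -- ----- the accumulated information lower bound -----
  set St : (Fin N → Matrix (Fin n) (Fin n) ℝ) → Fin N → Matrix (Fin n) (Fin n) ℝ :=
    fun W i => γ • (T * Hm W i * Tᵀ) with hStdef
  set Bm : ℕ → Fin N → Matrix (Fin n) (Fin n) ℝ := fun s => St^[s] (fun _ => 0) with hBmdef
  have hBmsucc : ∀ s, Bm (s + 1) = St (Bm s) := by
    intro s; rw [hBmdef]; exact Function.iterate_succ_apply' _ _ _
  have hBm_psd : ∀ s i, (Bm s i).PosSemidef := by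
    intro s
    induction s with
    | zero => intro i; exact Matrix.PosSemidef.zero
    | succ s ih =>
      intro i
      rw [hBmsucc]
      exact psd_smul (psd_conj (hH_psd _ (fun j => ih j) i) T) hγpos.le
  have hBm_le : ∀ s t i, Lle (Bm s i) ((seq (t + s) i)⁻¹) := by
    intro s
    induction s with
    | zero =>
      intro t i
      show Lle (0 : Matrix (Fin n) (Fin n) ℝ) ((seq (t + 0) i)⁻¹)
      have := (hseq_pd (t + 0) i).inv.posSemidef
      simpa [Lle] using this
    | succ s ih =>
      intro t i
      have h1 := hstep (t + s) i
      have h2 : Lle (Bm (s + 1) i) (γ • (T * Hm (fun j => (seq (t + s) j)⁻¹) i * Tᵀ)) := by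
        rw [hBmsucc]
        exact ((hH_mono _ _ i (fun j => ih t j)).conj T).smul hγpos.le
      exact h2.trans h1
  -- closed form for the lower bound
  set E : ℕ → Fin N → Matrix (Fin n) (Fin n) ℝ :=
    fun s i => ∑ u ∈ Finset.range s,
      γ ^ (u + 1) • ∑ r, ((L ^ (u + 1)) i r) • (T ^ (u + 1) * S r * (T ^ (u + 1))ᵀ)
    with hEdef
  have hTwist : ∀ (w : ℕ) (M : Matrix (Fin n) (Fin n) ℝ),
      T * (T ^ w * M * (T ^ w)ᵀ) * Tᵀ = T ^ (w + 1) * M * (T ^ (w + 1))ᵀ := by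
    intro w M
    rw [pow_succ' T w, Matrix.transpose_mul]
    simp [Matrix.mul_assoc]
  have hBmE : ∀ s, Bm s = E s := by
    intro s
    induction s with
    | zero =>
      funext i
      show (0 : Matrix (Fin n) (Fin n) ℝ) = E 0 i
      simp [hEdef]
    | succ s ih =>
      funext i
      rw [hBmsucc, ih]
      show γ • (T * Hm (E s) i * Tᵀ) = E (s + 1) i
      have expand : T * Hm (E s) i * Tᵀ
          = ∑ j, (L i j • (T * E s j * Tᵀ) + L i j • (T * S j * Tᵀ)) := by
        simp only [hHdef]
        rw [Matrix.mul_sum, Matrix.sum_mul]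
        refine Finset.sum_congr rfl fun j _ => ?_
        rw [Matrix.mul_add, Matrix.add_mul, Matrix.mul_smul, Matrix.smul_mul,
          Matrix.mul_smul, Matrix.smul_mul]
      have hEs : ∀ j, T * E s j * Tᵀ = ∑ u ∈ Finset.range s, γ ^ (u + 1) •
          ∑ r, ((L ^ (u + 1)) j r) • (T ^ (u + 2) * S r * (T ^ (u + 2))ᵀ) := by
        intro j
        simp only [hEdef]
        rw [Matrix.mul_sum, Matrix.sum_mul]
        refine Finset.sum_congr rfl fun u _ => ?_
        rw [Matrix.mul_smul, Matrix.smul_mul]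
        congr 1
        rw [Matrix.mul_sum, Matrix.sum_mul]
        refine Finset.sum_congr rfl fun r _ => ?_
        rw [Matrix.mul_smul, Matrix.smul_mul]
        congr 1
        exact hTwist (u + 1) (S r)
      have piece1 : γ • ∑ j, L i j • (T * E s j * Tᵀ)
          = ∑ u ∈ Finset.range s, γ ^ (u + 2) •
              ∑ r, ((L ^ (u + 2)) i r) • (T ^ (u + 2) * S r * (T ^ (u + 2))ᵀ) := by
        have swap1 : ∀ j, L i j • (T * E s j * Tᵀ) = ∑ u ∈ Finset.range s, γ ^ (u + 1) •
              ∑ r, (L i j * (L ^ (u + 1)) j r) • (T ^ (u + 2) * S r * (T ^ (u + 2))ᵀ) := by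
          intro j
          rw [hEs j, Finset.smul_sum]
          refine Finset.sum_congr rfl fun u _ => ?_
          rw [smul_comm (L i j) (γ ^ (u + 1)), Finset.smul_sum]
          congr 1
          refine Finset.sum_congr rfl fun r _ => ?_
          rw [smul_smul]
        have core : (∑ j, ∑ u ∈ Finset.range s, γ ^ (u + 1) •
              ∑ r, (L i j * (L ^ (u + 1)) j r) • (T ^ (u + 2) * S r * (T ^ (u + 2))ᵀ))
            = ∑ u ∈ Finset.range s, γ ^ (u + 1) •
              ∑ r, ((L ^ (u + 2)) i r) • (T ^ (u + 2) * S r * (T ^ (u + 2))ᵀ) := by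
          rw [Finset.sum_comm]
          refine Finset.sum_congr rfl fun u _ => ?_
          rw [← Finset.smul_sum]
          congr 1
          rw [Finset.sum_comm]
          refine Finset.sum_congr rfl fun r _ => ?_
          rw [← Finset.sum_smul]
          congr 1
          rw [pow_succ' L (u + 1), Matrix.mul_apply]
        calc γ • ∑ j, L i j • (T * E s j * Tᵀ)
            = γ • ∑ j, ∑ u ∈ Finset.range s, γ ^ (u + 1) •
                ∑ r, (L i j * (L ^ (u + 1)) j r) • (T ^ (u + 2) * S r * (T ^ (u + 2))ᵀ) := by
              rw [Finset.sum_congr rfl fun j _ => swap1 j]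
          _ = γ • ∑ u ∈ Finset.range s, γ ^ (u + 1) •
                ∑ r, ((L ^ (u + 2)) i r) • (T ^ (u + 2) * S r * (T ^ (u + 2))ᵀ) := by
              rw [core]
          _ = ∑ u ∈ Finset.range s, γ ^ (u + 2) •
                ∑ r, ((L ^ (u + 2)) i r) • (T ^ (u + 2) * S r * (T ^ (u + 2))ᵀ) := by
              rw [Finset.smul_sum]
              refine Finset.sum_congr rfl fun u _ => ?_
              rw [smul_smul, ← pow_succ']
      have piece0 : γ • ∑ j, L i j • (T * S j * Tᵀ)
          = γ ^ (0 + 1) • ∑ r, ((L ^ (0 + 1)) i r) • (T ^ (0 + 1) * S r * (T ^ (0 + 1))ᵀ) := by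
        simp
      rw [expand, Finset.sum_add_distrib, smul_add, piece1, piece0]
      show _ = ∑ u ∈ Finset.range (s + 1),
        γ ^ (u + 1) • ∑ r, ((L ^ (u + 1)) i r) • (T ^ (u + 1) * S r * (T ^ (u + 1))ᵀ)
      rw [Finset.sum_range_succ']
  -- ----- positive definiteness of the accumulated information -----
  set mm : ℕ := k + n with hmmdef
  have hTpow : ∀ w : ℕ, ((T ^ w)ᵀ : Matrix (Fin n) (Fin n) ℝ) = (A⁻¹) ^ w := by
    intro w
    rw [Matrix.transpose_pow, hTt]
  have hdetAinvpow : ∀ w : ℕ, IsUnit (((A⁻¹) ^ w : Matrix (Fin n) (Fin n) ℝ)).det := by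
    intro w
    rw [Matrix.det_pow, Matrix.det_nonsing_inv]
    have hAne : A.det ≠ 0 := isUnit_iff_ne_zero.1 hA
    rw [Ring.inverse_eq_inv']
    exact isUnit_iff_ne_zero.2 (pow_ne_zero _ (inv_ne_zero hAne))
  have hE_pd : ∀ i, (Bm mm i).PosDef := by
    intro i
    have hpsd : (E mm i).PosSemidef := by rw [← hBmE]; exact hBm_psd mm i
    rw [hBmE]
    refine posDef_of_quad hpsd.isHermitian ?_
    intro x hx
    have hquadE : x ⬝ᵥ (E mm i *ᵥ x) = ∑ u ∈ Finset.range mm, γ ^ (u + 1) *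
        ∑ r, (L ^ (u + 1)) i r *
          (((T ^ (u + 1))ᵀ *ᵥ x) ⬝ᵥ (S r *ᵥ ((T ^ (u + 1))ᵀ *ᵥ x))) := by
      simp only [hEdef]
      rw [quad_sum]
      refine Finset.sum_congr rfl fun u _ => ?_
      rw [quad_smul]
      congr 1
      rw [quad_sum]
      refine Finset.sum_congr rfl fun r _ => ?_
      rw [quad_smul, quad_conj]
    rw [hquadE]
    -- a witness direction in which information has been collected
    have hkey : ∃ w : ℕ, k ≤ w ∧ w + 1 ≤ mm ∧ ∃ r, C r *ᵥ ((A⁻¹) ^ w *ᵥ x) ≠ 0 := by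
      by_contra hcon
      push_neg at hcon
      set z : Fin n → ℝ := (A⁻¹) ^ (k + n - 1) *ᵥ x with hzdef
      have hz : z ≠ 0 := mulVec_ne_zero (hdetAinvpow _) hx
      have hobsz : z ⬝ᵥ ((∑ kk ∈ Finset.range n,
          (A ^ kk)ᵀ * (∑ j, (C j)ᵀ * C j) * A ^ kk) *ᵥ z) = 0 := by
        rw [quad_sum]
        refine Finset.sum_eq_zero fun p hp => ?_
        have hpn : p < n := Finset.mem_range.1 hp
        rw [quad_conj', quad_sum]
        refine Finset.sum_eq_zero fun j _ => ?_
        rw [quad_mul_self]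
        have hAz : A ^ p *ᵥ z = (A⁻¹) ^ (k + n - 1 - p) *ᵥ x := by
          rw [hzdef, Matrix.mulVec_mulVec]
          congr 1
          have hsplit : ((A⁻¹) ^ (k + n - 1) : Matrix (Fin n) (Fin n) ℝ)
              = (A⁻¹) ^ p * (A⁻¹) ^ (k + n - 1 - p) := by
            rw [← pow_add]
            congr 1
            omega
          have hcancel : (A ^ p : Matrix (Fin n) (Fin n) ℝ) * (A⁻¹) ^ p = 1 := by
            rw [Matrix.inv_pow', Matrix.mul_nonsing_inv]
            rw [Matrix.det_pow]
            exact hA.pow p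
          rw [hsplit, ← Matrix.mul_assoc, hcancel, Matrix.one_mul]
        have hzero : C j *ᵥ (A ^ p *ᵥ z) = 0 := by
          rw [hAz]
          exact hcon (k + n - 1 - p) (by omega) (by omega) j
        rw [hzero]
        simp
      exact absurd hobsz (ne_of_gt (quad_pos hObs hz))
    obtain ⟨w, hwk, hwmm, r0, hr0⟩ := hkey
    have hterm_nonneg : ∀ u ∈ Finset.range mm, 0 ≤ γ ^ (u + 1) *
        ∑ r, (L ^ (u + 1)) i r *
          (((T ^ (u + 1))ᵀ *ᵥ x) ⬝ᵥ (S r *ᵥ ((T ^ (u + 1))ᵀ *ᵥ x))) := by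
      intro u _
      refine mul_nonneg (pow_nonneg hγpos.le _) (Finset.sum_nonneg fun r _ => ?_)
      exact mul_nonneg (hLpow_nonneg _ i r) (quad_nonneg (hSpsd r) _)
    refine Finset.sum_pos' hterm_nonneg ⟨w - 1, Finset.mem_range.2 (by omega), ?_⟩
    have hw1 : w - 1 + 1 = w := by omega
    rw [hw1]
    refine mul_pos (pow_pos hγpos w) ?_
    refine Finset.sum_pos' (fun r _ => mul_nonneg (hLpow_nonneg _ i r)
      (quad_nonneg (hSpsd r) _)) ⟨r0, Finset.mem_univ r0, ?_⟩
    refine mul_pos (hLpow_pos w hwk i r0) ?_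
    have hy : ((T ^ w)ᵀ *ᵥ x) = (A⁻¹) ^ w *ᵥ x := by rw [hTpow]
    rw [hy]
    have : S r0 = (C r0)ᵀ * (R r0)⁻¹ * C r0 := rfl
    rw [this, quad_conj']
    exact quad_pos (hR r0).inv hr0
  -- ----- uniform upper bound and convergence -----
  have hbound : ∀ t i, Lle (seq t i) ((Bm mm i)⁻¹) := by
    intro t i
    have h1 : Lle (seq t i) (seq (t + mm) i) := hseq_le t (t + mm) (Nat.le_add_right _ _) i
    have h2 := hBm_le mm t i
    have h3 := inv_antitone (hE_pd i) (hseq_pd (t + mm) i).inv h2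
    rw [Matrix.nonsing_inv_nonsing_inv _ (det_isUnit (hseq_pd (t + mm) i))] at h3
    exact h1.trans h3
  have hmonoq : ∀ (i : Fin N) (x : Fin n → ℝ), Monotone fun t => x ⬝ᵥ (seq t i *ᵥ x) :=
    fun i x => monotone_nat_of_le_succ fun t => lle_quad (hseq_mono t i) x
  have hconvq : ∀ (i : Fin N) (x : Fin n → ℝ), ∃ rr : ℝ,
      Tendsto (fun t => x ⬝ᵥ (seq t i *ᵥ x)) atTop (𝓝 rr) := by
    intro i x
    refine ⟨_, tendsto_atTop_ciSup (hmonoq i x) ⟨x ⬝ᵥ ((Bm mm i)⁻¹ *ᵥ x), ?_⟩⟩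
    rintro y ⟨t, rfl⟩
    exact lle_quad (hbound t i) x
  have hsymm : ∀ t i a b, seq t i a b = seq t i b a := by
    intro t i a b
    have := congrFun (congrFun (hseq_pd t i).isHermitian.eq a) b
    simpa [Matrix.conjTranspose_apply] using this.symm
  have hentry : ∀ t i a b, seq t i a b =
      ((Pi.single a 1 + Pi.single b 1) ⬝ᵥ (seq t i *ᵥ (Pi.single a 1 + Pi.single b 1))
       - Pi.single a 1 ⬝ᵥ (seq t i *ᵥ Pi.single a 1)
       - Pi.single b 1 ⬝ᵥ (seq t i *ᵥ Pi.single b 1)) / 2 := by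
    intro t i a b
    have e1 : ∀ (a b : Fin n), Pi.single a (1:ℝ) ⬝ᵥ (seq t i *ᵥ Pi.single b 1)
        = seq t i a b := by
      intro a b
      rw [Matrix.mulVec_single, single_dotProduct]
      simp
    rw [Matrix.mulVec_add, dotProduct_add, add_dotProduct, add_dotProduct,
      e1 a a, e1 a b, e1 b a, e1 b b, hsymm t i b a]
    ring
  have hentry_lim : ∀ i a b, ∃ rr : ℝ, Tendsto (fun t => seq t i a b) atTop (𝓝 rr) := by
    intro i a b
    obtain ⟨r1, h1⟩ := hconvq i (Pi.single a 1 + Pi.single b 1)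
    obtain ⟨r2, h2⟩ := hconvq i (Pi.single a 1)
    obtain ⟨r3, h3⟩ := hconvq i (Pi.single b 1)
    refine ⟨(r1 - r2 - r3) / 2, ?_⟩
    have h4 := ((h1.sub h2).sub h3).div_const 2
    exact h4.congr fun t => (hentry t i a b).symm
  choose Pl hPl using hentry_lim
  set PL : Fin N → Matrix (Fin n) (Fin n) ℝ := fun i => Matrix.of (Pl i) with hPLdef
  have hPLconv : ∀ i, Tendsto (fun t => seq t i) atTop (𝓝 (PL i)) := by
    intro i
    refine tendsto_pi_nhds.2 ?_
    intro a
    refine tendsto_pi_nhds.2 ?_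
    intro b
    exact hPl i a b
  have hquadlim : ∀ (i : Fin N) (x : Fin n → ℝ),
      Tendsto (fun t => x ⬝ᵥ (seq t i *ᵥ x)) atTop (𝓝 (x ⬝ᵥ (PL i *ᵥ x))) :=
    fun i x => ((continuous_quad x).tendsto (PL i)).comp (hPLconv i)
  have hPL_pd : ∀ i, (PL i).PosDef := by
    intro i
    refine posDef_of_quad ?_ ?_
    · rw [Matrix.IsHermitian, Matrix.conjTranspose_eq_transpose_of_trivial]
      ext a b
      rw [Matrix.transpose_apply]
      have h1 := hPl i a b
      have h3 : Tendsto (fun t => seq t i b a) atTop (𝓝 (Pl i a b)) :=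
        h1.congr fun t => hsymm t i a b
      exact tendsto_nhds_unique (hPl i b a) h3
    · intro x hx
      have hge : x ⬝ᵥ (Q *ᵥ x) ≤ x ⬝ᵥ (PL i *ᵥ x) :=
        ge_of_tendsto' (hquadlim i x) fun t => lle_quad (hseq_geQ t i) x
      exact lt_of_lt_of_le (quad_pos hQ hx) hge
  -- ----- the limit is a fixed point -----
  have hfix : ∀ i, PL i = Fm PL i := by
    intro i
    have hGconv : Tendsto (fun t => Hm (fun j => (seq t j)⁻¹) i) atTop
        (𝓝 (Hm (fun j => (PL j)⁻¹) i)) := by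
      simp only [hHdef]
      refine tendsto_finset_sum _ fun j _ => ?_
      refine Tendsto.add ?_ tendsto_const_nhds
      exact (tendsto_matrix_inv (hPLconv j) (det_isUnit (hPL_pd j))).const_smul _
    have hGpd := hG_posdef PL hPL_pd i
    have hGinv := tendsto_matrix_inv hGconv (det_isUnit hGpd)
    have hcont : Continuous fun X : Matrix (Fin n) (Fin n) ℝ => A * X * Aᵀ + Q :=
      ((continuous_const.matrix_mul continuous_id).matrix_mul continuous_const).add
        continuous_const
    have hFconv : Tendsto (fun t => Fm (seq t) i) atTop (𝓝 (Fm PL i)) := by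
      simp only [hFdef]
      exact (hcont.tendsto _).comp hGinv
    have hshift : Tendsto (fun t => seq (t + 1) i) atTop (𝓝 (PL i)) :=
      (hPLconv i).comp (tendsto_add_atTop_nat 1)
    have hFconv' : Tendsto (fun t => seq (t + 1) i) atTop (𝓝 (Fm PL i)) :=
      hFconv.congr fun t => (congrFun (hseqsucc t) i).symm
    exact tendsto_nhds_unique hshift hFconv'
  refine ⟨PL, hPL_pd, fun i => (hfix i).trans ?_⟩
  simp only [hFdef, hHdef, hSdef]
end

section
/- Let P_1, …, P_N be positive definite solutions of the HCREs. Then for every positive definite n×n matrix P and all indices i, j ∈ {1, …, N}, the matrices Φ_{i,j}^{(m)}(P) converge entrywise to the zero matrix as m → ∞. -/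
open Matrix Filter

/-- The operator `Φ_{i,j}^{(m)}(P) = ∑_{j₁,…,j_m} (Ã_{i j₁} Ã_{j₁ j₂} ⋯ Ã_{j_m j}) P
(Ã_{i j₁} ⋯ Ã_{j_m j})ᵀ`, defined via the equivalent recursion
`Φ^{(0)}_{i,j}(P) = Ã_{ij} P Ã_{ij}ᵀ`,
`Φ^{(m+1)}_{i,j}(P) = ∑_{j₁} Ã_{i j₁} Φ^{(m)}_{j₁,j}(P) Ã_{i j₁}ᵀ`. -/
def hcrePhi {n N : ℕ} (Atil : Fin N → Fin N → Matrix (Fin n) (Fin n) ℝ) :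
    ℕ → Fin N → Fin N → Matrix (Fin n) (Fin n) ℝ → Matrix (Fin n) (Fin n) ℝ
  | 0, i, j, P => Atil i j * P * (Atil i j)ᵀ
  | m + 1, i, j, P => ∑ j1, Atil i j1 * hcrePhi Atil m j1 j P * (Atil i j1)ᵀ


section Helpers
variable {n : ℕ}

local notation "Mat" => Matrix (Fin n) (Fin n) ℝ

lemma psd_smul {M : Mat} (hM : M.PosSemidef) {c : ℝ} (hc : 0 ≤ c) : (c • M).PosSemidef := by
  refine Matrix.PosSemidef.of_dotProduct_mulVec_nonneg ?_ fun x => ?_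
  · unfold Matrix.IsHermitian
    rw [conjTranspose_smul, hM.1.eq]; simp
  · rw [smul_mulVec, dotProduct_smul, smul_eq_mul]
    exact mul_nonneg hc (by simpa using hM.dotProduct_mulVec_nonneg x)

lemma pd_smul {M : Mat} (hM : M.PosDef) {c : ℝ} (hc : 0 < c) : (c • M).PosDef := by
  refine Matrix.PosDef.of_dotProduct_mulVec_pos (psd_smul hM.posSemidef hc.le).1 fun x hx => ?_
  rw [smul_mulVec, dotProduct_smul, smul_eq_mul]
  exact mul_pos hc (by simpa using hM.dotProduct_mulVec_pos hx)

lemma psd_sum {ι : Type*} (s : Finset ι) (f : ι → Mat) (h : ∀ i ∈ s, (f i).PosSemidef) :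
    (∑ i ∈ s, f i).PosSemidef := by
  classical
  induction s using Finset.induction with
  | empty => simpa using Matrix.PosSemidef.zero
  | insert _ _ hi ih =>
    rw [Finset.sum_insert hi]
    exact (h _ (Finset.mem_insert_self _ _)).add
      (ih fun i his => h i (Finset.mem_insert_of_mem his))

lemma psd_congr {M : Mat} (hM : M.PosSemidef) (B : Mat) : (B * M * Bᵀ).PosSemidef := by
  have := hM.mul_mul_conjTranspose_same B
  rwa [conjTranspose_eq_transpose_of_trivial] at this

lemma pd_congr {M : Mat} (hM : M.PosDef) {B : Mat} (hB : IsUnit B.det) :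
    (B * M * Bᵀ).PosDef := by
  have hBt : IsUnit Bᵀ := (Matrix.isUnit_iff_isUnit_det _).2 (by rwa [det_transpose])
  refine Matrix.PosDef.of_dotProduct_mulVec_pos (psd_congr hM.posSemidef B).1 fun x hx => ?_
  have hxB : Bᵀ *ᵥ x ≠ 0 := by
    have hinj : Function.Injective (Bᵀ.mulVec) := Matrix.mulVec_injective_iff_isUnit.mpr hBt
    intro h0
    exact hx (hinj (by simpa using h0))
  have hrw : B * M * Bᵀ = (Bᵀ)ᴴ * M * Bᵀ := by
    rw [conjTranspose_eq_transpose_of_trivial, transpose_transpose]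
  rw [hrw]
  simpa only [star_mulVec, dotProduct_mulVec, vecMul_vecMul] using hM.dotProduct_mulVec_pos hxB

/-- congruence monotonicity helper -/
lemma psd_congr_sub {X Y : Mat} (h : (Y - X).PosSemidef) (B : Mat) :
    (B * Y * Bᵀ - B * X * Bᵀ).PosSemidef := by
  have := psd_congr h B
  have e : B * (Y - X) * Bᵀ = B * Y * Bᵀ - B * X * Bᵀ := by
    rw [mul_sub, sub_mul]
  rwa [e] at this

/-- a PSD matrix has |off-diagonal| dominated by the average of diagonals -/
lemma psd_entry_bound {M : Mat} (hM : M.PosSemidef) (a b : Fin n) :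
    |M a b| * 2 ≤ M a a + M b b := by
  have hsym : M b a = M a b := by
    have := hM.1.apply a b
    simpa using this
  have h1 := hM.dotProduct_mulVec_nonneg (Pi.single a 1 + Pi.single b 1)
  have h2 := hM.dotProduct_mulVec_nonneg (Pi.single a 1 - Pi.single b 1)
  simp only [star_trivial, dotProduct_add, add_dotProduct, sub_dotProduct, dotProduct_sub,
    mulVec_add, mulVec_sub] at h1 h2
  simp only [show ∀ (u v : Fin n), Pi.single u (1:ℝ) ⬝ᵥ (M *ᵥ Pi.single v 1) = M u v from
    fun u v => by simp] at h1 h2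
  have habs : |M a b| ≤ (M a a + M b b) / 2 := by
    rw [abs_le]; constructor <;> nlinarith [h1, h2, hsym]
  linarith [habs]


lemma quad_smul (M : Mat) (c : ℝ) (u : Fin n → ℝ) :
    (c • u) ⬝ᵥ (M *ᵥ (c • u)) = c ^ 2 * (u ⬝ᵥ (M *ᵥ u)) := by
  rw [smul_dotProduct, mulVec_smul, dotProduct_smul]
  simp [smul_eq_mul]; ring

lemma cont_quad (M : Mat) : Continuous fun x : Fin n → ℝ => x ⬝ᵥ (M *ᵥ x) :=
  continuous_id.dotProduct (continuous_const.matrix_mulVec continuous_id)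

lemma psd_diag {M : Mat} (hM : M.PosSemidef) (a : Fin n) : 0 ≤ M a a := by
  have := hM.dotProduct_mulVec_nonneg (Pi.single a 1); simpa using this

lemma exists_pos_smul_le (hn : 0 < n) {D P : Mat} (hD : D.PosDef) (hP : P.PosDef) :
    ∃ ε : ℝ, 0 < ε ∧ (D - ε • P).PosSemidef := by
  haveI : Nonempty (Fin n) := ⟨⟨0, hn⟩⟩
  have hcs : IsCompact (Metric.sphere (0 : Fin n → ℝ) 1) := isCompact_sphere _ _
  have hne : (Metric.sphere (0 : Fin n → ℝ) 1).Nonempty :=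
    NormedSpace.sphere_nonempty.mpr zero_le_one
  obtain ⟨xa, hxa, hfa⟩ := hcs.exists_isMinOn hne (cont_quad D).continuousOn
  obtain ⟨xb, hxb, hgb⟩ := hcs.exists_isMaxOn hne (cont_quad P).continuousOn
  have hxane : xa ≠ 0 := by
    intro h; rw [h, Metric.mem_sphere, dist_self] at hxa; norm_num at hxa
  have hxbne : xb ≠ 0 := by
    intro h; rw [h, Metric.mem_sphere, dist_self] at hxb; norm_num at hxb
  have ha : 0 < xa ⬝ᵥ (D *ᵥ xa) := by simpa using hD.dotProduct_mulVec_pos hxane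
  have hb : 0 < xb ⬝ᵥ (P *ᵥ xb) := by simpa using hP.dotProduct_mulVec_pos hxbne
  set a := xa ⬝ᵥ (D *ᵥ xa) with hadef
  set b := xb ⬝ᵥ (P *ᵥ xb) with hbdef
  refine ⟨a / b, div_pos ha hb, Matrix.PosSemidef.of_dotProduct_mulVec_nonneg ?_ ?_⟩
  · show (D - (a/b) • P)ᴴ = D - (a/b) • P
    rw [conjTranspose_sub, conjTranspose_smul, hD.1.eq, hP.1.eq]
    simp
  · intro x
    rcases eq_or_ne x 0 with rfl | hx
    · simp
    · have hnorm : ‖x‖ ≠ 0 := norm_ne_zero_iff.mpr hx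
      have hu : (‖x‖⁻¹ • x) ∈ Metric.sphere (0 : Fin n → ℝ) 1 := by
        rw [mem_sphere_zero_iff_norm]
        exact norm_smul_inv_norm (𝕜 := ℝ) hx
      set u := ‖x‖⁻¹ • x with hudef
      have hx' : x = ‖x‖ • u := by
        rw [hudef, smul_smul, mul_inv_cancel₀ hnorm, one_smul]
      have expand : x ⬝ᵥ ((D - (a/b) • P) *ᵥ x)
          = x ⬝ᵥ (D *ᵥ x) - (a/b) * (x ⬝ᵥ (P *ᵥ x)) := by
        rw [sub_mulVec, dotProduct_sub, smul_mulVec, dotProduct_smul, smul_eq_mul]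
      have hDx : x ⬝ᵥ (D *ᵥ x) = ‖x‖ ^ 2 * (u ⬝ᵥ (D *ᵥ u)) := by
        conv_lhs => rw [hx']
        exact quad_smul D ‖x‖ u
      have hPx : x ⬝ᵥ (P *ᵥ x) = ‖x‖ ^ 2 * (u ⬝ᵥ (P *ᵥ u)) := by
        conv_lhs => rw [hx']
        exact quad_smul P ‖x‖ u
      have h1 : a ≤ u ⬝ᵥ (D *ᵥ u) := hfa hu
      have h2 : u ⬝ᵥ (P *ᵥ u) ≤ b := hgb hu
      have key : 0 ≤ x ⬝ᵥ (D *ᵥ x) - (a/b) * (x ⬝ᵥ (P *ᵥ x)) := by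
        rw [hDx, hPx]
        have e2 : (a/b) * (‖x‖ ^ 2 * (u ⬝ᵥ (P *ᵥ u))) ≤ (a/b) * (‖x‖ ^ 2 * b) :=
          mul_le_mul_of_nonneg_left
            (mul_le_mul_of_nonneg_left h2 (sq_nonneg _)) (div_pos ha hb).le
        have e3 : (a/b) * (‖x‖ ^ 2 * b) = ‖x‖ ^ 2 * a := by
          field_simp
        have e1 : ‖x‖ ^ 2 * a ≤ ‖x‖ ^ 2 * (u ⬝ᵥ (D *ᵥ u)) :=
          mul_le_mul_of_nonneg_left h1 (sq_nonneg _)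
        linarith
      calc (0:ℝ) ≤ _ := key
        _ = star x ⬝ᵥ ((D - (a/b) • P) *ᵥ x) := by rw [star_trivial, expand]

end Helpers

/-- For positive definite solutions of the HCREs, the operators
`Φ_{i,j}^{(m)}(P)` converge entrywise to the zero matrix as `m → ∞`, for every
positive definite `P` and all indices `i, j`. -/
theorem hcre_Phi_tendsto_zero
    (n N : ℕ) (hn : 0 < n) (hN : 0 < N)
    (m : Fin N → ℕ) (hm : ∀ i, 0 < m i)
    (A : Matrix (Fin n) (Fin n) ℝ) (hA : IsUnit A.det)
    (C : ∀ i : Fin N, Matrix (Fin (m i)) (Fin n) ℝ)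
    (hObs : (∑ k ∈ Finset.range n, (A ^ k)ᵀ * (∑ i, (C i)ᵀ * C i) * A ^ k).PosDef)
    (Q : Matrix (Fin n) (Fin n) ℝ) (hQ : Q.PosDef)
    (R : ∀ i : Fin N, Matrix (Fin (m i)) (Fin (m i)) ℝ) (hR : ∀ i, (R i).PosDef)
    (L : Matrix (Fin N) (Fin N) ℝ)
    (hLnonneg : ∀ i j, 0 ≤ L i j) (hLrow : ∀ i, ∑ j, L i j = 1)
    (hLprim : ∃ k : ℕ, 0 < k ∧ ∀ i j, 0 < (L ^ k) i j)
    (P : Fin N → Matrix (Fin n) (Fin n) ℝ) (hPpos : ∀ i, (P i).PosDef)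
    (hsol : ∀ i, P i =
      A * (∑ j, (L i j • (P j)⁻¹ + L i j • ((C j)ᵀ * (R j)⁻¹ * C j)))⁻¹ * Aᵀ + Q)
    (Ptil : Fin N → Matrix (Fin n) (Fin n) ℝ)
    (hPtil : ∀ i, Ptil i = (∑ j, L i j • (P j)⁻¹)⁻¹)
    (S : Fin N → Matrix (Fin n) (Fin n) ℝ)
    (hS : ∀ j, S j = ∑ h, L j h • ((C h)ᵀ * (R h)⁻¹ * C h))
    (Asol : Fin N → Matrix (Fin n) (Fin n) ℝ)
    (hAsol : ∀ j, Asol j = A * ((Ptil j)⁻¹ + S j)⁻¹ * (Ptil j)⁻¹)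
    (Atil : Fin N → Fin N → Matrix (Fin n) (Fin n) ℝ)
    (hAtil : ∀ i j, Atil i j = Real.sqrt (L i j) • (Ptil i * (P j)⁻¹ * Asol j)) :
    ∀ (X : Matrix (Fin n) (Fin n) ℝ), X.PosDef → ∀ i j : Fin N,
      Tendsto (fun k => hcrePhi Atil k i j X) atTop (nhds 0) := by
  classical
  intro X hX i0 j0
  haveI : Nonempty (Fin N) := ⟨⟨0, hN⟩⟩
  -- basic facts
  have detU : ∀ {M : Matrix (Fin n) (Fin n) ℝ}, M.PosDef → IsUnit M.det :=
    fun hM => hM.det_pos.ne'.isUnit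
  have symmT : ∀ {M : Matrix (Fin n) (Fin n) ℝ}, M.PosDef → Mᵀ = M := fun hM => by
    rw [← conjTranspose_eq_transpose_of_trivial]; exact hM.1
  have hrowpos : ∀ i, ∃ j, 0 < L i j := by
    intro i
    by_contra h
    push_neg at h
    have hz : ∑ j, L i j = 0 :=
      Finset.sum_eq_zero fun j _ => le_antisymm (h j) (hLnonneg i j)
    rw [hLrow i] at hz; norm_num at hz
  have hPinv : ∀ j, ((P j)⁻¹).PosDef := fun j => (hPpos j).inv
  have hW : ∀ i, (∑ j, L i j • (P j)⁻¹).PosDef := by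
    intro i
    obtain ⟨j1, hj1⟩ := hrowpos i
    rw [← Finset.add_sum_erase _ _ (Finset.mem_univ j1)]
    exact (pd_smul (hPinv j1) hj1).add_posSemidef
      (psd_sum _ _ fun j _ => psd_smul (hPinv j).posSemidef (hLnonneg i j))
  have hPt : ∀ i, (Ptil i).PosDef := fun i => hPtil i ▸ (hW i).inv
  have hPtinv_eq : ∀ i, (Ptil i)⁻¹ = ∑ j, L i j • (P j)⁻¹ := by
    intro i
    rw [hPtil i, Matrix.nonsing_inv_nonsing_inv _ (detU (hW i))]
  have hSpsd : ∀ j, (S j).PosSemidef := by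
    intro j
    rw [hS j]
    refine psd_sum _ _ fun h _ => psd_smul ?_ (hLnonneg j h)
    have := ((hR h).inv.posSemidef).mul_mul_conjTranspose_same (C h)ᵀ
    simpa [conjTranspose_eq_transpose_of_trivial] using this
  have hGipd : ∀ j, ((Ptil j)⁻¹ + S j).PosDef := fun j => (hPt j).inv.add_posSemidef (hSpsd j)
  have hGpd : ∀ j, (((Ptil j)⁻¹ + S j)⁻¹).PosDef := fun j => (hGipd j).inv
  -- symmetry rewrites
  have hPtT : ∀ i, (Ptil i)ᵀ = Ptil i := fun i => symmT (hPt i)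
  have hPinvT : ∀ j, ((P j)⁻¹)ᵀ = (P j)⁻¹ := fun j => symmT (hPinv j)
  have hPtinvT : ∀ j, ((Ptil j)⁻¹)ᵀ = (Ptil j)⁻¹ := fun j => symmT (hPt j).inv
  have hGT : ∀ j, ((((Ptil j)⁻¹ + S j)⁻¹))ᵀ = ((Ptil j)⁻¹ + S j)⁻¹ := fun j => symmT (hGpd j)
  -- rewritten HCRE
  have hsol' : ∀ j, P j = A * ((Ptil j)⁻¹ + S j)⁻¹ * Aᵀ + Q := by
    intro j
    have hsum : (∑ j', (L j j' • (P j')⁻¹ + L j j' • ((C j')ᵀ * (R j')⁻¹ * C j')))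
        = (Ptil j)⁻¹ + S j := by
      rw [Finset.sum_add_distrib, hPtinv_eq j, hS j]
    rw [hsol j, hsum]
  -- transpose of Asol
  have hAsolT : ∀ j, (Asol j)ᵀ = (Ptil j)⁻¹ * (((Ptil j)⁻¹ + S j)⁻¹ * Aᵀ) := by
    intro j
    rw [hAsol j]
    simp only [transpose_mul, hPtinvT j, hGT j, Matrix.mul_assoc]
  -- M j in closed form
  have hcancelPt : ∀ (j) (B : Matrix (Fin n) (Fin n) ℝ),
      Ptil j * ((Ptil j)⁻¹ * B) = B := fun j B =>
    Matrix.mul_nonsing_inv_cancel_left _ _ (detU (hPt j))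
  have hMeq : ∀ j, Asol j * Ptil j * (Asol j)ᵀ
      = A * (((Ptil j)⁻¹ + S j)⁻¹ * ((Ptil j)⁻¹ * (((Ptil j)⁻¹ + S j)⁻¹ * Aᵀ))) := by
    intro j
    rw [hAsolT j, hAsol j]
    simp only [Matrix.mul_assoc, hcancelPt]
  -- decomposition of G
  have hGdecomp : ∀ j, ((Ptil j)⁻¹ + S j)⁻¹
      = ((Ptil j)⁻¹ + S j)⁻¹ * (Ptil j)⁻¹ * ((Ptil j)⁻¹ + S j)⁻¹
        + ((Ptil j)⁻¹ + S j)⁻¹ * S j * ((Ptil j)⁻¹ + S j)⁻¹ := by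
    intro j
    have h1 : ((Ptil j)⁻¹ + S j)⁻¹ * ((Ptil j)⁻¹ + S j) = 1 :=
      Matrix.nonsing_inv_mul _ (detU (hGipd j))
    calc ((Ptil j)⁻¹ + S j)⁻¹
        = ((Ptil j)⁻¹ + S j)⁻¹ * ((Ptil j)⁻¹ + S j) * ((Ptil j)⁻¹ + S j)⁻¹ := by
          rw [h1, one_mul]
      _ = _ := by rw [mul_add, add_mul]
  -- P j - M j = Q + psd
  have hPM : ∀ j, P j - Asol j * Ptil j * (Asol j)ᵀ
      = Q + (A * ((Ptil j)⁻¹ + S j)⁻¹) * S j * (A * ((Ptil j)⁻¹ + S j)⁻¹)ᵀ := by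
    intro j
    rw [hsol' j, hMeq j]
    have e1 : A * ((Ptil j)⁻¹ + S j)⁻¹ * Aᵀ
        = A * (((Ptil j)⁻¹ + S j)⁻¹ * (Ptil j)⁻¹ * ((Ptil j)⁻¹ + S j)⁻¹) * Aᵀ
          + A * (((Ptil j)⁻¹ + S j)⁻¹ * S j * ((Ptil j)⁻¹ + S j)⁻¹) * Aᵀ := by
      conv_lhs => rw [hGdecomp j]
      rw [mul_add, add_mul]
    rw [e1]
    simp only [transpose_mul, hGT j, Matrix.mul_assoc]
    abel
  have hPMpd : ∀ j, (P j - Asol j * Ptil j * (Asol j)ᵀ).PosDef := by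
    intro j
    rw [hPM j]
    exact hQ.add_posSemidef (psd_congr (hSpsd j) _)
  -- single-term identity
  have e1_Atil : ∀ i j, Atil i j * Ptil j * (Atil i j)ᵀ
      = L i j • (Ptil i * ((P j)⁻¹ * (Asol j * Ptil j * (Asol j)ᵀ) * (P j)⁻¹) * Ptil i) := by
    intro i j
    rw [hAtil i j]
    rw [transpose_smul, smul_mul_assoc, smul_mul_assoc, mul_smul_comm, smul_smul,
      Real.mul_self_sqrt (hLnonneg i j)]
    congr 1
    simp only [transpose_mul, hPtT i, hPinvT j, Matrix.mul_assoc]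
  -- sum forms
  have hTsum : ∀ i, ∑ j, Atil i j * Ptil j * (Atil i j)ᵀ
      = Ptil i * (∑ j, L i j • ((P j)⁻¹ * (Asol j * Ptil j * (Asol j)ᵀ) * (P j)⁻¹)) * Ptil i := by
    intro i
    calc ∑ j, Atil i j * Ptil j * (Atil i j)ᵀ
        = ∑ j, Ptil i * (L i j • ((P j)⁻¹ * (Asol j * Ptil j * (Asol j)ᵀ) * (P j)⁻¹)) * Ptil i :=
          Finset.sum_congr rfl fun j _ => by
            rw [e1_Atil i j, mul_smul_comm, smul_mul_assoc]
      _ = _ := by rw [Finset.mul_sum, Finset.sum_mul]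
  have hPPP : ∀ j, (P j)⁻¹ * P j * (P j)⁻¹ = (P j)⁻¹ := by
    intro j
    rw [Matrix.nonsing_inv_mul _ (detU (hPpos j)), one_mul]
  have hVsum : ∀ i, Ptil i
      = Ptil i * (∑ j, L i j • ((P j)⁻¹ * P j * (P j)⁻¹)) * Ptil i := by
    intro i
    have hsum2 : (∑ j, L i j • ((P j)⁻¹ * P j * (P j)⁻¹)) = (Ptil i)⁻¹ := by
      rw [hPtinv_eq i]
      exact Finset.sum_congr rfl fun j _ => by rw [hPPP j]
    rw [hsum2, Matrix.mul_nonsing_inv _ (detU (hPt i)), one_mul]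
  -- key positive definiteness
  have key : ∀ i, (Ptil i - ∑ j, Atil i j * Ptil j * (Atil i j)ᵀ).PosDef := by
    intro i
    have hsub : (∑ j, L i j • ((P j)⁻¹ * P j * (P j)⁻¹))
        - (∑ j, L i j • ((P j)⁻¹ * (Asol j * Ptil j * (Asol j)ᵀ) * (P j)⁻¹))
        = ∑ j, L i j • ((P j)⁻¹ * (P j - Asol j * Ptil j * (Asol j)ᵀ) * (P j)⁻¹) := by
      rw [← Finset.sum_sub_distrib]
      exact Finset.sum_congr rfl fun j _ => by rw [mul_sub, sub_mul, smul_sub]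
    have hterm_pd : ∀ j, ((P j)⁻¹ * (P j - Asol j * Ptil j * (Asol j)ᵀ) * (P j)⁻¹).PosDef := by
      intro j
      have := pd_congr (hPMpd j) (detU (hPinv j))
      rwa [hPinvT j] at this
    have hinnerPD : (∑ j, L i j • ((P j)⁻¹ * (P j - Asol j * Ptil j * (Asol j)ᵀ) * (P j)⁻¹)).PosDef := by
      obtain ⟨j1, hj1⟩ := hrowpos i
      rw [← Finset.add_sum_erase _ _ (Finset.mem_univ j1)]
      exact (pd_smul (hterm_pd j1) hj1).add_posSemidef
        (psd_sum _ _ fun j _ => psd_smul (hterm_pd j).posSemidef (hLnonneg i j))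
    have hdiff : Ptil i - ∑ j, Atil i j * Ptil j * (Atil i j)ᵀ
        = Ptil i * (∑ j, L i j • ((P j)⁻¹ * (P j - Asol j * Ptil j * (Asol j)ᵀ) * (P j)⁻¹)) * Ptil i := by
      rw [hTsum i, ← hsub, mul_sub, sub_mul, ← hVsum i]
    have hcong := pd_congr hinnerPD (detU (hPt i))
    rw [hPtT i] at hcong
    rwa [← hdiff] at hcong
  -- choose ε, ρ
  have hexists : ∀ i, ∃ ε : ℝ, 0 < ε ∧
      (Ptil i - ∑ j, Atil i j * Ptil j * (Atil i j)ᵀ - ε • Ptil i).PosSemidef :=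
    fun i => exists_pos_smul_le hn (key i) (hPt i)
  choose eps hepspos hepspsd using hexists
  set ε : ℝ := min (1/2) (Finset.univ.inf' Finset.univ_nonempty eps) with hεdef
  have hε0 : 0 < ε :=
    lt_min (by norm_num) ((Finset.lt_inf'_iff _).mpr fun i _ => hepspos i)
  have hεle : ∀ i, ε ≤ eps i := fun i =>
    le_trans (min_le_right _ _) (Finset.inf'_le _ (Finset.mem_univ i))
  have hεhalf : ε ≤ 1/2 := min_le_left _ _
  set ρ : ℝ := 1 - ε with hρdef
  have hρ0 : 0 ≤ ρ := by rw [hρdef]; linarith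
  have hρ1 : ρ < 1 := by rw [hρdef]; linarith
  have hcontr : ∀ i, (ρ • Ptil i - ∑ j, Atil i j * Ptil j * (Atil i j)ᵀ).PosSemidef := by
    intro i
    have h2 : ((eps i - ε) • Ptil i).PosSemidef :=
      psd_smul (hPt i).posSemidef (by linarith [hεle i])
    have hadd := (hepspsd i).add h2
    have e : (Ptil i - ∑ j, Atil i j * Ptil j * (Atil i j)ᵀ - eps i • Ptil i)
        + (eps i - ε) • Ptil i
        = ρ • Ptil i - ∑ j, Atil i j * Ptil j * (Atil i j)ᵀ := by
      rw [hρdef]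
      simp only [sub_smul, one_smul]
      abel
    rwa [e] at hadd
  -- scalar c bounding X against all Ptil j
  have hXb : ∀ j, ∃ δ : ℝ, 0 < δ ∧ (Ptil j - δ • X).PosSemidef :=
    fun j => exists_pos_smul_le hn (hPt j) hX
  choose δ hδpos hδpsd using hXb
  set cmax : ℝ := ∑ j, (δ j)⁻¹ with hcmaxdef
  have hcmax0 : 0 ≤ cmax :=
    Finset.sum_nonneg fun j _ => (inv_nonneg.mpr (hδpos j).le)
  have hcmax : ∀ j, (cmax • Ptil j - X).PosSemidef := by
    intro j
    have hcj : ((δ j)⁻¹ • Ptil j - X).PosSemidef := by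
      have h := psd_smul (hδpsd j) (inv_nonneg.mpr (hδpos j).le)
      rwa [smul_sub, smul_smul, inv_mul_cancel₀ (hδpos j).ne', one_smul] at h
    have hle : (δ j)⁻¹ ≤ cmax :=
      Finset.single_le_sum (f := fun j => (δ j)⁻¹)
        (fun i _ => inv_nonneg.mpr (hδpos i).le) (Finset.mem_univ j)
    have h2 : ((cmax - (δ j)⁻¹) • Ptil j).PosSemidef :=
      psd_smul (hPt j).posSemidef (by linarith)
    have hadd := hcj.add h2
    have e : ((δ j)⁻¹ • Ptil j - X) + (cmax - (δ j)⁻¹) • Ptil j = cmax • Ptil j - X := by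
      simp only [sub_smul]; abel
    rwa [e] at hadd
  -- the contraction step
  have step : ∀ (F : Fin N → Matrix (Fin n) (Fin n) ℝ) (b : ℝ), 0 ≤ b →
      (∀ j1, (b • Ptil j1 - F j1).PosSemidef) → ∀ i,
      ((b * ρ) • Ptil i - ∑ j1, Atil i j1 * F j1 * (Atil i j1)ᵀ).PosSemidef := by
    intro F b hb hbF i
    have h1 : (b • (ρ • Ptil i - ∑ j1, Atil i j1 * Ptil j1 * (Atil i j1)ᵀ)).PosSemidef :=
      psd_smul (hcontr i) hb
    have h2 : (∑ j1, Atil i j1 * (b • Ptil j1 - F j1) * (Atil i j1)ᵀ).PosSemidef :=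
      psd_sum _ _ fun j1 _ => psd_congr (hbF j1) _
    have hadd := h1.add h2
    have e : b • (ρ • Ptil i - ∑ j1, Atil i j1 * Ptil j1 * (Atil i j1)ᵀ)
        + ∑ j1, Atil i j1 * (b • Ptil j1 - F j1) * (Atil i j1)ᵀ
        = (b * ρ) • Ptil i - ∑ j1, Atil i j1 * F j1 * (Atil i j1)ᵀ := by
      have eterm : ∀ j1, Atil i j1 * (b • Ptil j1 - F j1) * (Atil i j1)ᵀ
          = b • (Atil i j1 * Ptil j1 * (Atil i j1)ᵀ) - Atil i j1 * F j1 * (Atil i j1)ᵀ :=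
        fun j1 => by rw [mul_sub, sub_mul, mul_smul_comm, smul_mul_assoc]
      simp only [eterm, Finset.sum_sub_distrib, smul_sub, Finset.smul_sum, smul_smul]
      abel
    rwa [e] at hadd
  -- main induction
  have main : ∀ k, ∀ i j, (hcrePhi Atil k i j X).PosSemidef ∧
      ((cmax * ρ ^ (k+1)) • Ptil i - hcrePhi Atil k i j X).PosSemidef := by
    intro k
    induction k with
    | zero =>
      intro i j
      constructor
      · exact psd_congr hX.posSemidef _
      · have hbF : ∀ j1, (cmax • Ptil j1 - (if j1 = j then X else 0)).PosSemidef := by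
          intro j1
          by_cases h : j1 = j
          · simpa [h] using hcmax j1
          · simpa [h] using psd_smul (hPt j1).posSemidef hcmax0
        have hs := step _ cmax hcmax0 hbF i
        have e : ∑ j1, Atil i j1 * (if j1 = j then X else 0) * (Atil i j1)ᵀ
            = Atil i j * X * (Atil i j)ᵀ := by
          rw [Finset.sum_eq_single j]
          · simp
          · intro j1 _ hne
            simp [hne]
          · intro h; exact absurd (Finset.mem_univ j) h
        rw [e] at hs
        simpa [hcrePhi, pow_one] using hs
    | succ k ih =>
      intro i j
      have hF : ∀ j1, (hcrePhi Atil k j1 j X).PosSemidef := fun j1 => (ih j1 j).1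
      have hbF : ∀ j1, ((cmax * ρ ^ (k+1)) • Ptil j1 - hcrePhi Atil k j1 j X).PosSemidef :=
        fun j1 => (ih j1 j).2
      constructor
      · show (∑ j1, Atil i j1 * hcrePhi Atil k j1 j X * (Atil i j1)ᵀ).PosSemidef
        exact psd_sum _ _ fun j1 _ => psd_congr (hF j1) _
      · have hb0 : 0 ≤ cmax * ρ ^ (k+1) := mul_nonneg hcmax0 (pow_nonneg hρ0 _)
        have hs := step _ _ hb0 hbF i
        have e : cmax * ρ ^ (k+1) * ρ = cmax * ρ ^ (k+1+1) := by ring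
        rw [e] at hs
        exact hs
  -- conclusion: entrywise squeeze
  refine tendsto_pi_nhds.2 ?_
  intro a
  rw [tendsto_pi_nhds]
  intro b
  have hlim : Tendsto (fun k : ℕ =>
      (cmax * ρ * (Ptil i0 a a + Ptil i0 b b) / 2) * ρ ^ k) atTop (nhds 0) := by
    have := (tendsto_pow_atTop_nhds_zero_of_lt_one hρ0 hρ1).const_mul
      (cmax * ρ * (Ptil i0 a a + Ptil i0 b b) / 2)
    simpa using this
  refine squeeze_zero_norm (fun k => ?_) hlim
  obtain ⟨h1, h2⟩ := main k i0 j0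
  have hda : hcrePhi Atil k i0 j0 X a a ≤ (cmax * ρ ^ (k+1)) * Ptil i0 a a := by
    have := psd_diag h2 a
    simp only [Matrix.sub_apply, Matrix.smul_apply, smul_eq_mul] at this
    linarith
  have hdb : hcrePhi Atil k i0 j0 X b b ≤ (cmax * ρ ^ (k+1)) * Ptil i0 b b := by
    have := psd_diag h2 b
    simp only [Matrix.sub_apply, Matrix.smul_apply, smul_eq_mul] at this
    linarith
  have hent := psd_entry_bound h1 a b
  have e : cmax * ρ ^ (k+1) * Ptil i0 a a + cmax * ρ ^ (k+1) * Ptil i0 b b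
      = (cmax * ρ * (Ptil i0 a a + Ptil i0 b b) / 2) * ρ ^ k * 2 := by
    rw [pow_succ]; ring
  show ‖hcrePhi Atil k i0 j0 X a b‖ ≤ (cmax * ρ * (Ptil i0 a a + Ptil i0 b b) / 2) * ρ ^ k
  rw [Real.norm_eq_abs]
  have habs : hcrePhi Atil k i0 j0 X a b ≤ |hcrePhi Atil k i0 j0 X a b| := le_abs_self _
  linarith [hent, hda, hdb, e]
end

section
/- Let {P_i^{(1)}}_{i=1}^N and {P_i^{(2)}}_{i=1}^N be two groups of positive definite solutions of the HCREs, and for τ = 1, 2 define P̃_i^{(τ)} = (∑_{j=1}^N l_{ij} (P_j^{(τ)})^{-1})^{-1}, A_j^{(τ)} = A ((P̃_j^{(τ)})^{-1} + S_j)^{-1} (P̃_j^{(τ)})^{-1}, and Ã_{ij}^{(τ)} = √(l_{ij}) · P̃_i^{(τ)} (P_j^{(τ)})^{-1} A_j^{(τ)}. Then for every i ∈ {1, …, N}, P̃_i^{(1)} − P̃_i^{(2)} = ∑_{j=1}^N Ã_{ij}^{(1)} (P̃_j^{(1)} − P̃_j^{(2)}) (Ã_{ij}^{(2)})ᵀ.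 -/
open Matrix Filter


variable {n : ℕ}

lemma mysum_mulVec {ι : Type*} (s : Finset ι) (M : ι → Matrix (Fin n) (Fin n) ℝ) (x : Fin n → ℝ) :
    (∑ j ∈ s, M j) *ᵥ x = ∑ j ∈ s, M j *ᵥ x := by
  ext k
  simp only [Matrix.mulVec, dotProduct, Matrix.sum_apply, Finset.sum_mul, Finset.sum_apply]
  rw [Finset.sum_comm]

lemma mydot_sum {ι : Type*} (s : Finset ι) (v : Fin n → ℝ) (w : ι → Fin n → ℝ) :
    v ⬝ᵥ (∑ j ∈ s, w j) = ∑ j ∈ s, v ⬝ᵥ w j := by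
  simp only [dotProduct, Finset.sum_apply, Finset.mul_sum]
  rw [Finset.sum_comm]

lemma myPosSemidef_smul {c : ℝ} (hc : 0 ≤ c) {M : Matrix (Fin n) (Fin n) ℝ}
    (hM : M.PosSemidef) : (c • M).PosSemidef := by
  refine Matrix.PosSemidef.of_dotProduct_mulVec_nonneg ?_ (fun x => ?_)
  · have := hM.1
    simp only [Matrix.IsHermitian, Matrix.conjTranspose_smul, star_trivial] at *
    rw [this]
  · rw [Matrix.smul_mulVec, dotProduct_smul]
    exact smul_nonneg hc (hM.dotProduct_mulVec_nonneg x)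

lemma myPosSemidef_sum {ι : Type*} (s : Finset ι) (f : ι → Matrix (Fin n) (Fin n) ℝ)
    (h : ∀ i ∈ s, (f i).PosSemidef) : (∑ i ∈ s, f i).PosSemidef := by
  classical
  induction s using Finset.induction_on with
  | empty => simpa using Matrix.PosSemidef.zero
  | insert _ _ hx ih =>
    rw [Finset.sum_insert hx]
    exact ((h _ (Finset.mem_insert_self _ _)).add (ih fun i hi => h i (Finset.mem_insert_of_mem hi)))

lemma myPosDef_convex_sum {N : ℕ} (l : Fin N → ℝ) (hl : ∀ j, 0 ≤ l j)
    (hsum : ∑ j, l j = 1) (P : Fin N → Matrix (Fin n) (Fin n) ℝ)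
    (hP : ∀ j, (P j).PosDef) : (∑ j, l j • P j).PosDef := by
  have hpsd : (∑ j, l j • P j).PosSemidef :=
    myPosSemidef_sum _ _ fun j _ => myPosSemidef_smul (hl j) (hP j).posSemidef
  refine Matrix.PosDef.of_dotProduct_mulVec_pos hpsd.1 fun x hx => ?_
  rw [mysum_mulVec, mydot_sum]
  obtain ⟨j0, hj0⟩ : ∃ j0, l j0 ≠ 0 := by
    by_contra h
    push_neg at h
    simp [h] at hsum
  refine Finset.sum_pos' (fun j _ => ?_) ⟨j0, Finset.mem_univ _, ?_⟩
  · rw [Matrix.smul_mulVec, dotProduct_smul]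
    exact smul_nonneg (hl j) ((hP j).posSemidef.dotProduct_mulVec_nonneg x)
  · rw [Matrix.smul_mulVec, dotProduct_smul]
    exact smul_pos (lt_of_le_of_ne (hl j0) (Ne.symm hj0)) ((hP j0).dotProduct_mulVec_pos hx)

lemma myinv_sub_inv {X Y : Matrix (Fin n) (Fin n) ℝ} (hX : IsUnit X.det) (hY : IsUnit Y.det) :
    X⁻¹ - Y⁻¹ = X⁻¹ * (Y - X) * Y⁻¹ := by
  rw [Matrix.mul_sub, Matrix.sub_mul, Matrix.mul_assoc, Matrix.mul_nonsing_inv _ hY,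
    Matrix.nonsing_inv_mul _ hX, Matrix.mul_one, Matrix.one_mul]

lemma myinv_sub_inv' {X Y : Matrix (Fin n) (Fin n) ℝ} (hX : IsUnit X.det) (hY : IsUnit Y.det) :
    Y⁻¹ - X⁻¹ = X⁻¹ * (X - Y) * Y⁻¹ := by
  have := myinv_sub_inv hX hY
  have h2 : X⁻¹ * (X - Y) * Y⁻¹ = -(X⁻¹ * (Y - X) * Y⁻¹) := by
    rw [← Matrix.neg_mul, ← Matrix.mul_neg, neg_sub]
  rw [h2, ← this]; abel

lemma mysymm_of_posDef {M : Matrix (Fin n) (Fin n) ℝ} (h : M.PosDef) : Mᵀ = M := by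
  rw [← Matrix.conjTranspose_eq_transpose_of_trivial]
  exact h.1

/-- For two groups of positive definite solutions of the HCREs, the
difference of the harmonic means satisfies
`P̃_i⁽¹⁾ − P̃_i⁽²⁾ = ∑_j Ã_{ij}⁽¹⁾ (P̃_j⁽¹⁾ − P̃_j⁽²⁾) (Ã_{ij}⁽²⁾)ᵀ`. -/
theorem hcre_two_solutions_difference_identity
    (n N : ℕ) (hn : 0 < n) (hN : 0 < N)
    (m : Fin N → ℕ) (hm : ∀ i, 0 < m i)
    (A : Matrix (Fin n) (Fin n) ℝ) (hA : IsUnit A.det)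
    (C : ∀ i : Fin N, Matrix (Fin (m i)) (Fin n) ℝ)
    (hObs : (∑ k ∈ Finset.range n, (A ^ k)ᵀ * (∑ i, (C i)ᵀ * C i) * A ^ k).PosDef)
    (Q : Matrix (Fin n) (Fin n) ℝ) (hQ : Q.PosDef)
    (R : ∀ i : Fin N, Matrix (Fin (m i)) (Fin (m i)) ℝ) (hR : ∀ i, (R i).PosDef)
    (L : Matrix (Fin N) (Fin N) ℝ)
    (hLnonneg : ∀ i j, 0 ≤ L i j) (hLrow : ∀ i, ∑ j, L i j = 1)
    (hLprim : ∃ k : ℕ, 0 < k ∧ ∀ i j, 0 < (L ^ k) i j)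
    (S : Fin N → Matrix (Fin n) (Fin n) ℝ)
    (hS : ∀ j, S j = ∑ h, L j h • ((C h)ᵀ * (R h)⁻¹ * C h))
    (P1 P2 : Fin N → Matrix (Fin n) (Fin n) ℝ)
    (hP1pos : ∀ i, (P1 i).PosDef) (hP2pos : ∀ i, (P2 i).PosDef)
    (hsol1 : ∀ i, P1 i =
      A * (∑ j, (L i j • (P1 j)⁻¹ + L i j • ((C j)ᵀ * (R j)⁻¹ * C j)))⁻¹ * Aᵀ + Q)
    (hsol2 : ∀ i, P2 i =
      A * (∑ j, (L i j • (P2 j)⁻¹ + L i j • ((C j)ᵀ * (R j)⁻¹ * C j)))⁻¹ * Aᵀ + Q)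
    (Ptil1 Ptil2 : Fin N → Matrix (Fin n) (Fin n) ℝ)
    (hPtil1 : ∀ i, Ptil1 i = (∑ j, L i j • (P1 j)⁻¹)⁻¹)
    (hPtil2 : ∀ i, Ptil2 i = (∑ j, L i j • (P2 j)⁻¹)⁻¹)
    (Asol1 Asol2 : Fin N → Matrix (Fin n) (Fin n) ℝ)
    (hAsol1 : ∀ j, Asol1 j = A * ((Ptil1 j)⁻¹ + S j)⁻¹ * (Ptil1 j)⁻¹)
    (hAsol2 : ∀ j, Asol2 j = A * ((Ptil2 j)⁻¹ + S j)⁻¹ * (Ptil2 j)⁻¹)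
    (Atil1 Atil2 : Fin N → Fin N → Matrix (Fin n) (Fin n) ℝ)
    (hAtil1 : ∀ i j, Atil1 i j = Real.sqrt (L i j) • (Ptil1 i * (P1 j)⁻¹ * Asol1 j))
    (hAtil2 : ∀ i j, Atil2 i j = Real.sqrt (L i j) • (Ptil2 i * (P2 j)⁻¹ * Asol2 j)) :
    ∀ i : Fin N,
      Ptil1 i - Ptil2 i = ∑ j, Atil1 i j * (Ptil1 j - Ptil2 j) * (Atil2 i j)ᵀ := by
  classical
  intro i
  -- determinant units of P's
  have hP1d : ∀ j, IsUnit (P1 j).det := fun j => (hP1pos j).det_pos.ne'.isUnit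
  have hP2d : ∀ j, IsUnit (P2 j).det := fun j => (hP2pos j).det_pos.ne'.isUnit
  -- the sums K are positive definite
  have hK1pd : ∀ a : Fin N, (∑ j, L a j • (P1 j)⁻¹).PosDef := fun a =>
    myPosDef_convex_sum (L a) (hLnonneg a) (hLrow a) _ (fun j => (hP1pos j).inv)
  have hK2pd : ∀ a : Fin N, (∑ j, L a j • (P2 j)⁻¹).PosDef := fun a =>
    myPosDef_convex_sum (L a) (hLnonneg a) (hLrow a) _ (fun j => (hP2pos j).inv)
  have hPt1pd : ∀ a, (Ptil1 a).PosDef := fun a => (hPtil1 a) ▸ (hK1pd a).inv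
  have hPt2pd : ∀ a, (Ptil2 a).PosDef := fun a => (hPtil2 a) ▸ (hK2pd a).inv
  have hPt1d : ∀ a, IsUnit (Ptil1 a).det := fun a => (hPt1pd a).det_pos.ne'.isUnit
  have hPt2d : ∀ a, IsUnit (Ptil2 a).det := fun a => (hPt2pd a).det_pos.ne'.isUnit
  have hPt1inv : ∀ a, (Ptil1 a)⁻¹ = ∑ j, L a j • (P1 j)⁻¹ := fun a => by
    rw [hPtil1 a, Matrix.nonsing_inv_nonsing_inv _ (hK1pd a).det_pos.ne'.isUnit]
  have hPt2inv : ∀ a, (Ptil2 a)⁻¹ = ∑ j, L a j • (P2 j)⁻¹ := fun a => by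
    rw [hPtil2 a, Matrix.nonsing_inv_nonsing_inv _ (hK2pd a).det_pos.ne'.isUnit]
  -- S is positive semidefinite
  have hSpsd : ∀ j, (S j).PosSemidef := fun j => by
    rw [hS j]
    refine myPosSemidef_sum _ _ fun h _ => myPosSemidef_smul (hLnonneg j h) ?_
    have := Matrix.PosSemidef.conjTranspose_mul_mul_same ((hR h).inv).posSemidef (C h)
    rwa [Matrix.conjTranspose_eq_transpose_of_trivial] at this
  -- M's positive definite
  have hM1pd : ∀ j, ((Ptil1 j)⁻¹ + S j).PosDef := fun j =>
    ((hPt1pd j).inv).add_posSemidef (hSpsd j)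
  have hM2pd : ∀ j, ((Ptil2 j)⁻¹ + S j).PosDef := fun j =>
    ((hPt2pd j).inv).add_posSemidef (hSpsd j)
  have hM1d : ∀ j, IsUnit ((Ptil1 j)⁻¹ + S j).det := fun j => (hM1pd j).det_pos.ne'.isUnit
  have hM2d : ∀ j, IsUnit ((Ptil2 j)⁻¹ + S j).det := fun j => (hM2pd j).det_pos.ne'.isUnit
  -- rewrite the HCREs
  have hsol1' : ∀ j, P1 j = A * ((Ptil1 j)⁻¹ + S j)⁻¹ * Aᵀ + Q := fun j => by
    have e : (∑ j', (L j j' • (P1 j')⁻¹ + L j j' • ((C j')ᵀ * (R j')⁻¹ * C j')))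
        = (Ptil1 j)⁻¹ + S j := by
      rw [Finset.sum_add_distrib, hPt1inv j, hS j]
    rw [hsol1 j, e]
  have hsol2' : ∀ j, P2 j = A * ((Ptil2 j)⁻¹ + S j)⁻¹ * Aᵀ + Q := fun j => by
    have e : (∑ j', (L j j' • (P2 j')⁻¹ + L j j' • ((C j')ᵀ * (R j')⁻¹ * C j')))
        = (Ptil2 j)⁻¹ + S j := by
      rw [Finset.sum_add_distrib, hPt2inv j, hS j]
    rw [hsol2 j, e]
  -- symmetry facts
  have hPt2sym : ∀ a, (Ptil2 a)ᵀ = Ptil2 a := fun a => mysymm_of_posDef (hPt2pd a)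
  have hP2sym : ∀ j, (P2 j)ᵀ = P2 j := fun j => mysymm_of_posDef (hP2pos j)
  have hM2sym : ∀ j, ((Ptil2 j)⁻¹ + S j)ᵀ = (Ptil2 j)⁻¹ + S j := fun j =>
    mysymm_of_posDef (hM2pd j)
  -- transpose of Asol2
  have hAsol2T : ∀ j, (Asol2 j)ᵀ = (Ptil2 j)⁻¹ * (((Ptil2 j)⁻¹ + S j)⁻¹ * Aᵀ) := fun j => by
    rw [hAsol2 j, Matrix.transpose_mul, Matrix.transpose_mul, Matrix.transpose_nonsing_inv,
      hPt2sym j, Matrix.transpose_nonsing_inv, hM2sym j]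
  -- Step A: difference of the P's
  have stepA : ∀ j, P1 j - P2 j = Asol1 j * (Ptil1 j - Ptil2 j) * (Asol2 j)ᵀ := fun j => by
    have h1 : P1 j - P2 j
        = A * (((Ptil1 j)⁻¹ + S j)⁻¹ - ((Ptil2 j)⁻¹ + S j)⁻¹) * Aᵀ := by
      rw [hsol1' j, hsol2' j]
      simp only [Matrix.mul_sub, Matrix.sub_mul]
      abel
    have h2 : ((Ptil1 j)⁻¹ + S j)⁻¹ - ((Ptil2 j)⁻¹ + S j)⁻¹
        = ((Ptil1 j)⁻¹ + S j)⁻¹ * ((((Ptil2 j)⁻¹ + S j)) - (((Ptil1 j)⁻¹ + S j)))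
          * ((Ptil2 j)⁻¹ + S j)⁻¹ := myinv_sub_inv (hM1d j) (hM2d j)
    have h3 : (((Ptil2 j)⁻¹ + S j)) - (((Ptil1 j)⁻¹ + S j))
        = (Ptil2 j)⁻¹ - (Ptil1 j)⁻¹ := by abel
    have h4 : (Ptil2 j)⁻¹ - (Ptil1 j)⁻¹
        = (Ptil1 j)⁻¹ * (Ptil1 j - Ptil2 j) * (Ptil2 j)⁻¹ :=
      myinv_sub_inv' (hPt1d j) (hPt2d j)
    rw [h1, h2, h3, h4, hAsol1 j, hAsol2T j]
    simp only [Matrix.mul_assoc]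
  -- LHS expansion
  have hKdiff : (Ptil2 i)⁻¹ - (Ptil1 i)⁻¹
      = ∑ j, L i j • ((P1 j)⁻¹ * (P1 j - P2 j) * (P2 j)⁻¹) := by
    rw [hPt1inv i, hPt2inv i, ← Finset.sum_sub_distrib]
    refine Finset.sum_congr rfl fun j _ => ?_
    rw [← smul_sub, myinv_sub_inv' (hP1d j) (hP2d j)]
  have lhs : Ptil1 i - Ptil2 i
      = ∑ j, L i j • (Ptil1 i * ((P1 j)⁻¹ * (P1 j - P2 j) * (P2 j)⁻¹) * Ptil2 i) := by
    have h0 : Ptil1 i - Ptil2 i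
        = Ptil1 i * ((Ptil2 i)⁻¹ - (Ptil1 i)⁻¹) * Ptil2 i := by
      rw [Matrix.mul_sub, Matrix.sub_mul, Matrix.mul_assoc (Ptil1 i) ((Ptil2 i)⁻¹) (Ptil2 i),
        Matrix.nonsing_inv_mul _ (hPt2d i), Matrix.mul_one,
        Matrix.mul_nonsing_inv _ (hPt1d i), Matrix.one_mul]
    rw [h0, hKdiff, Finset.mul_sum, Finset.sum_mul]
    refine Finset.sum_congr rfl fun j _ => ?_
    rw [mul_smul_comm, smul_mul_assoc]
  -- RHS termwise
  have rhsterm : ∀ j, Atil1 i j * (Ptil1 j - Ptil2 j) * (Atil2 i j)ᵀ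
      = L i j • (Ptil1 i * ((P1 j)⁻¹ * (P1 j - P2 j) * (P2 j)⁻¹) * Ptil2 i) := by
    intro j
    have hT : (Atil2 i j)ᵀ
        = Real.sqrt (L i j) • ((Asol2 j)ᵀ * (((P2 j)⁻¹) * Ptil2 i)) := by
      rw [hAtil2 i j, Matrix.transpose_smul, Matrix.transpose_mul, Matrix.transpose_mul,
        Matrix.transpose_nonsing_inv, hP2sym j, hPt2sym i]
    rw [hAtil1 i j, hT, stepA j]
    simp only [smul_mul_assoc, mul_smul_comm, smul_smul, Matrix.mul_assoc]
    rw [Real.mul_self_sqrt (hLnonneg i j)]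
  rw [lhs]
  exact Finset.sum_congr rfl fun j _ => (rhsterm j).symm
end
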